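/- arXiv:1412.2039 — 9 statements merged into one kernel-verified Lean document; each statement's English description precedes it below -/
import Mathlib

section
/- Let (E,ρ) be a complete separable metric space, let ε, δ > 0, and let μ₁, μ₂ be finite Borel measures on E. Assume dPr(μ₁,μ₂) < δ and that there is a finite Borel measure μ₁' with μ₁' ≤ μ₁ and ‖μ₁ − μ₁'‖ ≤ ε. Then there exists a finite Borel measure μ₂' with μ₂' ≤ μ₂, dPr(μ₁',μ₂') < δ, and ‖μ₂ − μ₂'‖ ≤ ε. -/
open MeasureTheory Filter Topology ENNReal

/-- The variational distance `‖μ − ν‖ = sup_B |μ(B) − ν(B)|` between finite measures. -/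
noncomputable def varDist {E : Type*} [MeasurableSpace E] (μ ν : Measure E) : ℝ≥0∞ :=
  ⨆ (B : Set E) (_ : MeasurableSet B), max (μ B - ν B) (ν B - μ B)

/-- The Prohorov metric between finite Borel measures on a metric space:
`inf {ε > 0 | μ A ≤ ν (Aᵉ) + ε and ν A ≤ μ (Aᵉ) + ε for all Borel A}`,
where `Aᵉ` is the open `ε`-neighbourhood (thickening) of `A`. -/
noncomputable def dPr {E : Type*} [PseudoMetricSpace E] [MeasurableSpace E]
    (μ ν : Measure E) : ℝ :=
  sInf {ε : ℝ | 0 < ε ∧ ∀ A : Set E, MeasurableSet A →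
    μ A ≤ ν (Metric.thickening ε A) + ENNReal.ofReal ε ∧
    ν A ≤ μ (Metric.thickening ε A) + ENNReal.ofReal ε}

section AuxFlow

open Finset

lemma natFlow (n : ℕ) (A B : Fin n → ℕ) (Rel : Fin n → Fin n → Prop) [DecidableRel Rel] (C : ℕ)
    (hcut : ∀ S : Finset (Fin n),
      C ≤ ∑ j ∈ Sᶜ, A j + ∑ k ∈ S.biUnion (fun j => univ.filter (fun k => Rel j k)), B k) :
    ∃ z : Fin n → Fin n → ℕ, (∀ j k, z j k ≠ 0 → Rel j k) ∧ (∀ j, ∑ k, z j k ≤ A j) ∧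
      (∀ k, ∑ j, z j k ≤ B k) ∧ C ≤ ∑ j, ∑ k, z j k := by
  classical
  set LT := ∑ j, A j with hLT
  have hCLT : C ≤ LT := by
    have := hcut ∅
    simpa using this
  set Dm := LT - C with hDm
  -- blow-up types
  set L := (j : Fin n) × Fin (A j) with hL
  set Rt := ((k : Fin n) × Fin (B k)) ⊕ Fin Dm with hRt
  have cardL : Fintype.card L = LT := by
    simp [hL, Fintype.card_sigma, hLT]
  set t : L → Finset Rt := fun l =>
    univ.filter (fun r => Sum.elim (fun p => Rel l.1 p.1) (fun _ => True) r) with ht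
  -- Hall condition
  have hall : ∀ W : Finset L, #W ≤ #(W.biUnion t) := by
    intro W
    rcases W.eq_empty_or_nonempty with rfl | hW
    · simp
    set S := W.image Sigma.fst with hS
    set NS := S.biUnion (fun j => univ.filter (fun k => Rel j k)) with hNS
    have h1 : #W ≤ ∑ j ∈ S, A j := by
      have : W ⊆ S.sigma (fun j => univ) := by
        intro l hl
        refine Finset.mem_sigma.2 ⟨?_, Finset.mem_univ _⟩
        rw [hS]
        exact Finset.mem_image_of_mem Sigma.fst hl
      calc #W ≤ #(S.sigma (fun j => (univ : Finset (Fin (A _))))) := Finset.card_le_card this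
        _ = ∑ j ∈ S, A j := by simp [Finset.card_sigma]
    set D1 : Finset Rt := (NS.sigma (fun k => (univ : Finset (Fin (B k))))).map
      ⟨Sum.inl, Sum.inl_injective⟩ with hD1
    set D2 : Finset Rt := (univ : Finset (Fin Dm)).map ⟨Sum.inr, Sum.inr_injective⟩ with hD2
    have hdisj : Disjoint D1 D2 := by
      simp only [Finset.disjoint_left, hD1, hD2, Finset.mem_map]
      rintro a ⟨x, _, rfl⟩ ⟨y, _, h⟩
      simp at h
    have hsub : D1 ∪ D2 ⊆ W.biUnion t := by
      intro r hr
      rcases Finset.mem_union.1 hr with hr | hr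
      · simp only [hD1, Finset.mem_map] at hr
        obtain ⟨⟨k, i⟩, hk, rfl⟩ := hr
        simp only [Finset.mem_sigma, hNS, Finset.mem_biUnion] at hk
        obtain ⟨j, hjS, hrel⟩ := hk.1
        simp only [hS, Finset.mem_image] at hjS
        obtain ⟨l, hlW, rfl⟩ := hjS
        refine Finset.mem_biUnion.2 ⟨l, hlW, ?_⟩
        simp only [ht, Finset.mem_filter, Finset.mem_univ, true_and, Sum.elim_inl]
        exact (Finset.mem_filter.1 hrel).2
      · simp only [hD2, Finset.mem_map] at hr
        obtain ⟨d, _, rfl⟩ := hr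
        obtain ⟨l, hlW⟩ := hW
        refine Finset.mem_biUnion.2 ⟨l, hlW, ?_⟩
        simp [ht]
    have h2 : ∑ k ∈ NS, B k + Dm ≤ #(W.biUnion t) := by
      calc ∑ k ∈ NS, B k + Dm = #D1 + #D2 := by
            simp [hD1, hD2, Finset.card_sigma]
        _ = #(D1 ∪ D2) := (Finset.card_union_of_disjoint hdisj).symm
        _ ≤ _ := Finset.card_le_card hsub
    have h3 : ∑ j ∈ S, A j ≤ ∑ k ∈ NS, B k + Dm := by
      have hc := hcut S
      rw [← hNS] at hc
      have hsplit : ∑ j ∈ S, A j + ∑ j ∈ Sᶜ, A j = LT := by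
        rw [hLT]; exact Finset.sum_add_sum_compl S A
      omega
    exact h1.trans (h3.trans h2)
  obtain ⟨f, hfinj, hfmem⟩ := (Finset.all_card_le_biUnion_card_iff_exists_injective t).1 hall
  -- define flow
  set z : Fin n → Fin n → ℕ := fun j k =>
    #(univ.filter (fun i : Fin (A j) => ∃ i', f ⟨j, i⟩ = Sum.inl ⟨k, i'⟩)) with hz
  have hsupp : ∀ j k, z j k ≠ 0 → Rel j k := by
    intro j k hzjk
    rw [hz] at hzjk
    obtain ⟨i, hi⟩ := Finset.card_ne_zero.1 hzjk  -- nonempty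
    have := Finset.mem_filter.1 hi
    obtain ⟨i', hfi⟩ := this.2
    have hm := hfmem ⟨j, i⟩
    rw [hfi] at hm
    simpa [ht] using hm
  -- row sums
  have hroweq : ∀ j, ∑ k, z j k =
      #(univ.filter (fun i : Fin (A j) => ∃ k i', f ⟨j, i⟩ = Sum.inl ⟨k, i'⟩)) := by
    intro j
    rw [← Finset.card_biUnion]
    · congr 1
      ext i
      simp
    · intro k₁ _ k₂ _ hne
      simp only [Finset.disjoint_left, Finset.mem_filter]
      rintro i ⟨-, i₁, h₁⟩ ⟨-, i₂, h₂⟩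
      rw [h₁] at h₂
      exact hne (congrArg Sigma.fst (Sum.inl_injective h₂))
  have hrow : ∀ j, ∑ k, z j k ≤ A j := by
    intro j
    rw [hroweq j]
    simpa using Finset.card_le_card (Finset.filter_subset _ (univ : Finset (Fin (A j))))
  -- column sums
  have hcoleq : ∀ k, ∑ j, z j k =
      #((univ : Finset L).filter (fun l => ∃ i', f l = Sum.inl ⟨k, i'⟩)) := by
    intro k
    have : ((univ : Finset L).filter (fun l => ∃ i', f l = Sum.inl ⟨k, i'⟩)) =
        (univ : Finset (Fin n)).sigma
          (fun j => univ.filter (fun i => ∃ i', f ⟨j, i⟩ = Sum.inl ⟨k, i'⟩)) := by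
      ext l
      rw [Finset.mem_filter, Finset.mem_sigma, Finset.mem_filter]
      obtain ⟨j, i⟩ := l
      simp
    rw [this, Finset.card_sigma]
  have hcol : ∀ k, ∑ j, z j k ≤ B k := by
    intro k
    rw [hcoleq k]
    set T := ((univ : Finset L).filter (fun l => ∃ i', f l = Sum.inl ⟨k, i'⟩)) with hT
    have himg : T.image f ⊆ ((({k} : Finset (Fin n)).sigma (fun k => (univ : Finset (Fin (B k))))).map
        ⟨Sum.inl, Sum.inl_injective⟩) := by
      intro r hr
      obtain ⟨l, hl, rfl⟩ := Finset.mem_image.1 hr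
      obtain ⟨-, i', hfi⟩ := Finset.mem_filter.1 hl
      rw [hfi]
      simp [Finset.mem_sigma]
    calc #T = #(T.image f) := (Finset.card_image_of_injective T hfinj).symm
      _ ≤ _ := Finset.card_le_card himg
      _ = B k := by simp [Finset.card_sigma]
  -- total
  have htot : C ≤ ∑ j, ∑ k, z j k := by
    set P : L → Prop := fun l => ∃ k i', f l = Sum.inl ⟨k, i'⟩ with hP
    have heq : ∑ j, ∑ k, z j k = #((univ : Finset L).filter P) := by
      have h2 : ((univ : Finset L).filter P) =
          (univ : Finset (Fin n)).sigma
            (fun j => univ.filter (fun i => ∃ k i', f ⟨j, i⟩ = Sum.inl ⟨k, i'⟩)) := by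
        ext l
        rw [Finset.mem_filter, Finset.mem_sigma, Finset.mem_filter]
        obtain ⟨j, i⟩ := l
        simp [hP]
      rw [h2, Finset.card_sigma]
      exact Finset.sum_congr rfl (fun j _ => hroweq j)
    have hsplit : #((univ : Finset L).filter P) +
        #((univ : Finset L).filter (fun l => ¬ P l)) = LT := by
      rw [Finset.card_filter_add_card_filter_not]
      simpa using cardL
    have hcompl : #((univ : Finset L).filter (fun l => ¬ P l)) ≤ Dm := by
      set T := ((univ : Finset L).filter (fun l => ¬ P l)) with hT
      have himg : T.image f ⊆ ((univ : Finset (Fin Dm)).map ⟨Sum.inr, Sum.inr_injective⟩) := by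
        intro r hr
        obtain ⟨l, hl, rfl⟩ := Finset.mem_image.1 hr
        have hnp := (Finset.mem_filter.1 hl).2
        rcases hfl : f l with p | d
        · exact absurd ⟨p.1, p.2, by rw [hfl]⟩ hnp
        · simp
      have : #T ≤ Dm := by
        calc #T = #(T.image f) := (Finset.card_image_of_injective T hfinj).symm
          _ ≤ _ := Finset.card_le_card himg
          _ = Dm := by simp
      exact this
    rw [heq]
    omega
  exact ⟨z, hsupp, hrow, hcol, htot⟩

lemma ennFlow (n : ℕ) (a b : Fin n → ENNReal) (ha : ∀ j, a j ≠ ⊤) (hb : ∀ k, b k ≠ ⊤)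
    (Rel : Fin n → Fin n → Prop) [DecidableRel Rel] (C : ENNReal)
    (hcut : ∀ S : Finset (Fin n),
      C ≤ ∑ j ∈ Sᶜ, a j + ∑ k ∈ S.biUnion (fun j => univ.filter (fun k => Rel j k)), b k)
    (e : ENNReal) (he : e ≠ 0) :
    ∃ z : Fin n → Fin n → ENNReal, (∀ j k, z j k ≠ 0 → Rel j k) ∧ (∀ j, ∑ k, z j k ≤ a j) ∧
      (∀ k, ∑ j, z j k ≤ b k) ∧ C ≤ (∑ j, ∑ k, z j k) + e := by
  classical
  rcases eq_or_ne e ⊤ with rfl | het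
  · exact ⟨0, by simp, by simp, by simp, le_top.trans_eq (by simp)⟩
  have hCfin : C ≠ ⊤ := by
    have h := hcut ∅
    simp only [Finset.compl_empty, Finset.biUnion_empty, Finset.sum_empty, add_zero] at h
    exact (h.trans_lt (by
      refine ENNReal.sum_lt_top.2 (fun j _ => ?_)
      exact lt_top_iff_ne_top.2 (ha j))).ne
  set er := e.toReal with her
  have her0 : 0 < er := ENNReal.toReal_pos he het
  set ar : Fin n → ℝ := fun j => (a j).toReal with har
  set br : Fin n → ℝ := fun k => (b k).toReal with hbr
  have har0 : ∀ j, 0 ≤ ar j := fun j => ENNReal.toReal_nonneg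
  have hbr0 : ∀ k, 0 ≤ br k := fun k => ENNReal.toReal_nonneg
  set Cr := C.toReal with hCr
  set M : ℕ := ⌈(2 * n + 1 : ℝ) / er⌉₊ + 1 with hM
  have hM0 : 0 < M := Nat.succ_pos _
  have hM0' : (0 : ℝ) < M := by exact_mod_cast hM0
  have hMer : (2 * n + 1 : ℝ) ≤ M * er := by
    have h1 : (2 * n + 1 : ℝ) / er ≤ M := by
      rw [hM]
      push_cast
      exact (Nat.le_ceil _).trans (by linarith)
    calc (2 * n + 1 : ℝ) = ((2 * n + 1) / er) * er := by field_simp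
      _ ≤ M * er := by nlinarith
  set A : Fin n → ℕ := fun j => ⌊M * ar j⌋₊ with hA
  set B : Fin n → ℕ := fun k => ⌊M * br k⌋₊ with hB
  set Cn : ℕ := ⌊M * Cr⌋₊ - 2 * n with hCn
  have hAle : ∀ j, (A j : ℝ) ≤ M * ar j := fun j => Nat.floor_le (by positivity)
  have hAge : ∀ j, M * ar j - 1 ≤ (A j : ℝ) := fun j => le_of_lt (by
    have := Nat.lt_floor_add_one (M * ar j); linarith)
  have hBle : ∀ k, (B k : ℝ) ≤ M * br k := fun k => Nat.floor_le (by positivity)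
  have hBge : ∀ k, M * br k - 1 ≤ (B k : ℝ) := fun k => le_of_lt (by
    have := Nat.lt_floor_add_one (M * br k); linarith)
  -- nat cut condition
  have hncut : ∀ S : Finset (Fin n),
      Cn ≤ ∑ j ∈ Sᶜ, A j + ∑ k ∈ S.biUnion (fun j => univ.filter (fun k => Rel j k)), B k := by
    intro S
    set NS := S.biUnion (fun j => univ.filter (fun k => Rel j k)) with hNS
    have hrcut : Cr ≤ ∑ j ∈ Sᶜ, ar j + ∑ k ∈ NS, br k := by
      have h := hcut S
      rw [← hNS] at h
      have h2 := (ENNReal.toReal_le_toReal hCfin (by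
        refine (ENNReal.add_lt_top.2 ⟨?_, ?_⟩).ne <;>
          exact ENNReal.sum_lt_top.2 (fun i _ => lt_top_iff_ne_top.2 (by first | exact ha i | exact hb i)))).2 h
      rwa [ENNReal.toReal_add, ENNReal.toReal_sum, ENNReal.toReal_sum] at h2
      · exact fun k _ => hb k
      · exact fun j _ => ha j
      · exact (ENNReal.sum_lt_top.2 (fun j _ => lt_top_iff_ne_top.2 (ha j))).ne
      · exact (ENNReal.sum_lt_top.2 (fun k _ => lt_top_iff_ne_top.2 (hb k))).ne
    -- real comparison
    have h1 : ((⌊M * Cr⌋₊ : ℕ) : ℝ) ≤ M * Cr := Nat.floor_le (by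
      have : 0 ≤ Cr := ENNReal.toReal_nonneg
      positivity)
    have h2 : M * (∑ j ∈ Sᶜ, ar j) ≤ ((∑ j ∈ Sᶜ, A j : ℕ) : ℝ) + n := by
      rw [Nat.cast_sum, Finset.mul_sum]
      calc ∑ j ∈ Sᶜ, (M : ℝ) * ar j ≤ ∑ j ∈ Sᶜ, ((A j : ℝ) + 1) :=
            Finset.sum_le_sum (fun j _ => by have := hAge j; linarith)
        _ = (∑ j ∈ Sᶜ, (A j : ℝ)) + #Sᶜ := by rw [Finset.sum_add_distrib]; simp
        _ ≤ (∑ j ∈ Sᶜ, (A j : ℝ)) + n := by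
            have : (#Sᶜ : ℝ) ≤ n := by exact_mod_cast (Finset.card_le_univ _).trans (by simp)
            linarith
    have h3 : M * (∑ k ∈ NS, br k) ≤ ((∑ k ∈ NS, B k : ℕ) : ℝ) + n := by
      rw [Nat.cast_sum, Finset.mul_sum]
      calc ∑ k ∈ NS, (M : ℝ) * br k ≤ ∑ k ∈ NS, ((B k : ℝ) + 1) :=
            Finset.sum_le_sum (fun k _ => by have := hBge k; linarith)
        _ = (∑ k ∈ NS, (B k : ℝ)) + #NS := by rw [Finset.sum_add_distrib]; simp
        _ ≤ (∑ k ∈ NS, (B k : ℝ)) + n := by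
            have : (#NS : ℝ) ≤ n := by exact_mod_cast (Finset.card_le_univ _).trans (by simp)
            linarith
    have h5 : (M : ℝ) * Cr ≤ M * (∑ j ∈ Sᶜ, ar j) + M * (∑ k ∈ NS, br k) := by
      have h6 := mul_le_mul_of_nonneg_left hrcut hM0'.le
      rw [mul_add] at h6
      exact h6
    have hfloor : ⌊M * Cr⌋₊ ≤ (∑ j ∈ Sᶜ, A j) + (∑ k ∈ NS, B k) + 2 * n := by
      have : ((⌊M * Cr⌋₊ : ℕ) : ℝ) ≤ ((∑ j ∈ Sᶜ, A j : ℕ) : ℝ) + ((∑ k ∈ NS, B k : ℕ) : ℝ)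
          + 2 * n := by linarith
      exact_mod_cast this
    rw [hCn]
    omega
  obtain ⟨Z, hZsupp, hZrow, hZcol, hZtot⟩ := natFlow n A B Rel Cn hncut
  -- scale down
  set z : Fin n → Fin n → ENNReal := fun j k => ENNReal.ofReal ((Z j k : ℝ) / M) with hz
  refine ⟨z, ?_, ?_, ?_, ?_⟩
  · intro j k hzne
    apply hZsupp j k
    intro hZ0
    rw [hz] at hzne
    simp [hZ0] at hzne
  · intro j
    have hsum : ∑ k, z j k = ENNReal.ofReal (∑ k, (Z j k : ℝ) / M) := by
      rw [ENNReal.ofReal_sum_of_nonneg (fun k _ => by positivity)]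
    rw [hsum, ← ENNReal.ofReal_toReal (ha j)]
    apply ENNReal.ofReal_le_ofReal
    rw [← Finset.sum_div, div_le_iff₀ hM0']
    have hc : (∑ k, (Z j k : ℝ)) ≤ (A j : ℝ) := by exact_mod_cast hZrow j
    calc (∑ k, (Z j k : ℝ)) ≤ (A j : ℝ) := hc
      _ ≤ M * ar j := hAle j
      _ = ar j * M := by ring
  · intro k
    have hsum : ∑ j, z j k = ENNReal.ofReal (∑ j, (Z j k : ℝ) / M) := by
      rw [ENNReal.ofReal_sum_of_nonneg (fun j _ => by positivity)]
    rw [hsum, ← ENNReal.ofReal_toReal (hb k)]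
    apply ENNReal.ofReal_le_ofReal
    rw [← Finset.sum_div, div_le_iff₀ hM0']
    have hc : (∑ j, (Z j k : ℝ)) ≤ (B k : ℝ) := by exact_mod_cast hZcol k
    calc (∑ j, (Z j k : ℝ)) ≤ (B k : ℝ) := hc
      _ ≤ M * br k := hBle k
      _ = br k * M := by ring
  · -- total
    have hsum : ∑ j, ∑ k, z j k = ENNReal.ofReal (∑ j, ∑ k, (Z j k : ℝ) / M) := by
      rw [ENNReal.ofReal_sum_of_nonneg (fun j _ => Finset.sum_nonneg (fun k _ => by positivity))]
      exact Finset.sum_congr rfl (fun j _ => by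
        rw [ENNReal.ofReal_sum_of_nonneg (fun k _ => by positivity)])
    have hrtot : Cr - er ≤ ∑ j, ∑ k, (Z j k : ℝ) / M := by
      have h1 : (Cn : ℝ) ≤ ∑ j, ∑ k, (Z j k : ℝ) := by exact_mod_cast hZtot
      have h2 : (Cn : ℝ) ≥ M * Cr - 1 - 2 * n := by
        rcases le_or_gt (2 * n) ⌊M * Cr⌋₊ with hc | hc
        · have h4 : M * Cr < (⌊M * Cr⌋₊ : ℝ) + 1 := Nat.lt_floor_add_one _
          have h6 : (Cn : ℝ) = (⌊M * Cr⌋₊ : ℝ) - ((2 * n : ℕ) : ℝ) := by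
            rw [hCn]
            exact Nat.cast_sub hc
          have h7 : ((2 * n : ℕ) : ℝ) = 2 * n := by push_cast; ring
          linarith
        · have h7 : (⌊M * Cr⌋₊ : ℝ) < 2 * n := by exact_mod_cast hc
          have h4 : M * Cr < (⌊M * Cr⌋₊ : ℝ) + 1 := Nat.lt_floor_add_one _
          have h0 : (0 : ℝ) ≤ (Cn : ℝ) := by positivity
          linarith
      have hsumZ : ∑ j, ∑ k, (Z j k : ℝ) / M = (∑ j, ∑ k, (Z j k : ℝ)) / M := by
        rw [Finset.sum_div]
        exact Finset.sum_congr rfl (fun j _ => (Finset.sum_div _ _ _).symm)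
      rw [hsumZ, le_div_iff₀ hM0']
      have hexp : (Cr - er) * M = M * Cr - er * M := by ring
      rw [hexp]
      have : er * M = M * er := by ring
      nlinarith [hMer, h1, h2]
    calc C = ENNReal.ofReal Cr := (ENNReal.ofReal_toReal hCfin).symm
      _ ≤ ENNReal.ofReal ((∑ j, ∑ k, (Z j k : ℝ) / M) + er) :=
          ENNReal.ofReal_le_ofReal (by linarith [hrtot])
      _ = ENNReal.ofReal (∑ j, ∑ k, (Z j k : ℝ) / M) + ENNReal.ofReal er :=
          ENNReal.ofReal_add (Finset.sum_nonneg (fun j _ => Finset.sum_nonneg (fun k _ => by positivity))) her0.le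
      _ ≤ (∑ j, ∑ k, z j k) + e := by
          rw [← hsum]
          exact add_le_add le_rfl (by rw [her]; exact ENNReal.ofReal_toReal_le)

end AuxFlow

/-- Rectangular lemma: if `dPr(μ₁,μ₂) < δ` and `μ₁' ≤ μ₁` with `‖μ₁ − μ₁'‖ ≤ ε`, then
there is `μ₂' ≤ μ₂` with `dPr(μ₁',μ₂') < δ` and `‖μ₂ − μ₂'‖ ≤ ε`. -/
theorem rectangular_lemma {E : Type*} [MetricSpace E] [CompleteSpace E]
    [TopologicalSpace.SeparableSpace E] [MeasurableSpace E] [BorelSpace E]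
    (ε δ : ℝ) (hε : 0 < ε) (hδ : 0 < δ)
    (μ₁ μ₂ μ₁' : Measure E) [IsFiniteMeasure μ₁] [IsFiniteMeasure μ₂] [IsFiniteMeasure μ₁']
    (hPr : dPr μ₁ μ₂ < δ) (hle : μ₁' ≤ μ₁) (hvar : varDist μ₁ μ₁' ≤ ENNReal.ofReal ε) :
    ∃ μ₂' : Measure E, IsFiniteMeasure μ₂' ∧ μ₂' ≤ μ₂ ∧ dPr μ₁' μ₂' < δ ∧
      varDist μ₂ μ₂' ≤ ENNReal.ofReal ε := by
  classical
  have hdbdd : ∀ (μ ν : Measure E), BddBelow {e : ℝ | 0 < e ∧ ∀ A : Set E, MeasurableSet A →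
      μ A ≤ ν (Metric.thickening e A) + ENNReal.ofReal e ∧
      ν A ≤ μ (Metric.thickening e A) + ENNReal.ofReal e} :=
    fun μ ν => ⟨0, fun e he => he.1.le⟩
  rcases isEmpty_or_nonempty E with hE | hE
  · -- empty space
    refine ⟨μ₂, inferInstance, le_rfl, ?_, ?_⟩
    · have hmem : (δ/2) ∈ {e : ℝ | 0 < e ∧ ∀ A : Set E, MeasurableSet A →
          μ₁' A ≤ μ₂ (Metric.thickening e A) + ENNReal.ofReal e ∧
          μ₂ A ≤ μ₁' (Metric.thickening e A) + ENNReal.ofReal e} := by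
        refine ⟨by linarith, fun A hA => ?_⟩
        have : A = ∅ := Set.eq_empty_of_isEmpty A
        subst this
        simp
      calc dPr μ₁' μ₂ ≤ δ/2 := csInf_le (hdbdd _ _) hmem
        _ < δ := by linarith
    · refine iSup_le fun B => iSup_le fun _ => ?_
      simp
  -- nonempty case
  have hPr' := hPr
  unfold dPr at hPr'
  have hSne : Set.Nonempty {e : ℝ | 0 < e ∧ ∀ A : Set E, MeasurableSet A →
      μ₁ A ≤ μ₂ (Metric.thickening e A) + ENNReal.ofReal e ∧
      μ₂ A ≤ μ₁ (Metric.thickening e A) + ENNReal.ofReal e} := by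
    refine ⟨(μ₁ Set.univ).toReal + (μ₂ Set.univ).toReal + 1, ⟨by positivity, fun A hA => ⟨?_, ?_⟩⟩⟩
    · calc μ₁ A ≤ μ₁ Set.univ := measure_mono (Set.subset_univ A)
        _ = ENNReal.ofReal (μ₁ Set.univ).toReal := (ENNReal.ofReal_toReal (measure_ne_top _ _)).symm
        _ ≤ ENNReal.ofReal ((μ₁ Set.univ).toReal + (μ₂ Set.univ).toReal + 1) :=
            ENNReal.ofReal_le_ofReal (by linarith [ENNReal.toReal_nonneg (a := μ₂ Set.univ)])
        _ ≤ _ + ENNReal.ofReal ((μ₁ Set.univ).toReal + (μ₂ Set.univ).toReal + 1) := le_add_self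
    · calc μ₂ A ≤ μ₂ Set.univ := measure_mono (Set.subset_univ A)
        _ = ENNReal.ofReal (μ₂ Set.univ).toReal := (ENNReal.ofReal_toReal (measure_ne_top _ _)).symm
        _ ≤ ENNReal.ofReal ((μ₁ Set.univ).toReal + (μ₂ Set.univ).toReal + 1) :=
            ENNReal.ofReal_le_ofReal (by linarith [ENNReal.toReal_nonneg (a := μ₁ Set.univ)])
        _ ≤ _ + ENNReal.ofReal ((μ₁ Set.univ).toReal + (μ₂ Set.univ).toReal + 1) := le_add_self
  obtain ⟨η, hηS, hηδ⟩ := (csInf_lt_iff (hdbdd μ₁ μ₂) hSne).1 hPr'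
  obtain ⟨hη0, hηprop⟩ := hηS
  -- parameters
  set s : ℝ := (δ - η)/8 with hs
  have hs0 : 0 < s := by rw [hs]; linarith
  set β : ℝ := η + 6*s with hβ
  have hβδ : β < δ := by rw [hβ, hs]; linarith
  have hβ0 : 0 < β := by rw [hβ]; linarith
  -- partition into small cells
  set x : ℕ → E := TopologicalSpace.denseSeq E with hx
  have hdense : DenseRange x := TopologicalSpace.denseRange_denseSeq E
  set P : ℕ → Set E := disjointed (fun n => Metric.ball (x n) s) with hP
  have hPmeas : ∀ n, MeasurableSet (P n) :=
    MeasurableSet.disjointed (fun n => measurableSet_ball)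
  have hPdisj : Pairwise (Function.onFun Disjoint P) := disjoint_disjointed _
  have hPsub : ∀ n, P n ⊆ Metric.ball (x n) s := disjointed_subset _
  have hPcover : (⋃ n, P n) = Set.univ := by
    rw [hP, iUnion_disjointed]
    ext y
    simp only [Set.mem_iUnion, Set.mem_univ, iff_true]
    obtain ⟨n, hn⟩ := hdense.exists_dist_lt y hs0
    exact ⟨n, Metric.mem_ball.2 hn⟩
  have hPdiam : ∀ n, ∀ p ∈ P n, ∀ q ∈ P n, dist p q < 2*s := by
    intro n p hp q hq
    have h1 : dist p (x n) < s := Metric.mem_ball.1 (hPsub n hp)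
    have h2 : dist q (x n) < s := Metric.mem_ball.1 (hPsub n hq)
    calc dist p q ≤ dist p (x n) + dist (x n) q := dist_triangle _ _ _
      _ = dist p (x n) + dist q (x n) := by rw [dist_comm (x n) q]
      _ < 2*s := by linarith
  -- tail truncation
  obtain ⟨N, hN1, hN2⟩ : ∃ N : ℕ, μ₁ (⋃ i, P (i + N)) < ENNReal.ofReal s ∧
      μ₂ (⋃ i, P (i + N)) < ENNReal.ofReal s := by
    have hofs : (0:ℝ≥0∞) < ENNReal.ofReal s := ENNReal.ofReal_pos.2 hs0
    have key : ∀ (μ : Measure E), IsFiniteMeasure μ →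
        Tendsto (fun N => ∑' i, μ (P (i + N))) atTop (𝓝 0) := by
      intro μ hμ
      exact ENNReal.tendsto_sum_nat_add (fun n => μ (P n))
        (by rw [← measure_iUnion hPdisj hPmeas]; exact measure_ne_top _ _)
    have h1 := ((key μ₁ inferInstance).eventually_lt_const hofs).and
      ((key μ₂ inferInstance).eventually_lt_const hofs)
    obtain ⟨N, hN⟩ := h1.exists
    refine ⟨N, lt_of_le_of_lt ?_ hN.1, lt_of_le_of_lt ?_ hN.2⟩ <;>
      exact measure_iUnion_le _
  set U0 : Set E := ⋃ k : Fin N, P k with hU0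
  set W : Set E := U0ᶜ with hW
  have hU0meas : MeasurableSet U0 := MeasurableSet.iUnion (fun k => hPmeas k)
  have hWmeas : MeasurableSet W := hU0meas.compl
  have hWsub : W ⊆ ⋃ i, P (i + N) := by
    intro w hw
    have : w ∈ ⋃ n, P n := hPcover ▸ Set.mem_univ w
    obtain ⟨m, hm⟩ := Set.mem_iUnion.1 this
    have hmN : N ≤ m := by
      by_contra hc
      push_neg at hc
      exact hw (Set.mem_iUnion.2 ⟨⟨m, hc⟩, hm⟩)
    exact Set.mem_iUnion.2 ⟨m - N, by rwa [Nat.sub_add_cancel hmN]⟩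
  have hW1 : μ₁ W ≤ ENNReal.ofReal s := (measure_mono hWsub).trans hN1.le
  have hW2 : μ₂ W ≤ ENNReal.ofReal s := (measure_mono hWsub).trans hN2.le
  have hW1' : μ₁' W ≤ ENNReal.ofReal s :=
    le_trans (Measure.le_iff.1 hle W hWmeas) hW1
  -- cells are disjoint from W
  have hPW : ∀ k : Fin N, P k ∩ W = ∅ := by
    intro k
    rw [hW, hU0]
    ext y
    simp only [Set.mem_inter_iff, Set.mem_compl_iff, Set.mem_iUnion, Set.mem_empty_iff_false,
      iff_false, not_and, not_not]
    exact fun hy => ⟨k, hy⟩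
  -- decomposition lemma
  have hdecomp : ∀ (μ : Measure E) (B : Set E), MeasurableSet B →
      μ B = ∑ k : Fin N, μ (B ∩ P k) + μ (B ∩ W) := by
    intro μ B hB
    have hsplit : B = (⋃ k ∈ (Finset.univ : Finset (Fin N)), B ∩ P k) ∪ (B ∩ W) := by
      ext y
      constructor
      · intro hy
        by_cases hyU : y ∈ U0
        · obtain ⟨k, hk⟩ := Set.mem_iUnion.1 hyU
          exact Set.mem_union_left _ (Set.mem_biUnion (Finset.mem_univ k) ⟨hy, hk⟩)
        · exact Set.mem_union_right _ ⟨hy, hyU⟩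
      · intro hy
        rcases hy with hy | hy
        · obtain ⟨k, -, hy2⟩ := Set.mem_iUnion₂.1 hy
          exact hy2.1
        · exact hy.1
    have hd1 : μ (⋃ k ∈ (Finset.univ : Finset (Fin N)), B ∩ P k) = ∑ k : Fin N, μ (B ∩ P k) := by
      refine measure_biUnion_finset ?_ (fun k _ => hB.inter (hPmeas k))
      intro k₁ _ k₂ _ hne
      exact Set.disjoint_of_subset Set.inter_subset_right Set.inter_subset_right
        (hPdisj (fun h => hne (Fin.val_injective h)))
    have hd2 : Disjoint (⋃ k ∈ (Finset.univ : Finset (Fin N)), B ∩ P k) (B ∩ W) := by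
      refine Set.disjoint_left.2 ?_
      intro y hy hyW
      simp only [Set.mem_iUnion, Set.mem_inter_iff] at hy
      obtain ⟨k, -, -, hyk⟩ := hy
      have := hPW k
      exact absurd (Set.mem_inter hyk hyW.2) (by rw [this]; exact id)
    conv_lhs => rw [hsplit]
    rw [measure_union hd2 (hB.inter hWmeas), hd1]
  -- discrete data
  set aE : Fin N → ℝ≥0∞ := fun j => μ₁ (P j) with haE
  set bE : Fin N → ℝ≥0∞ := fun k => μ₂ (P k) with hbE
  set Rel : Fin N → Fin N → Prop :=
    fun j k => ∃ p ∈ P (j:ℕ), ∃ q ∈ P (k:ℕ), dist p q < η + 2*s with hRel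
  haveI : DecidableRel Rel := Classical.decRel _
  set CE : ℝ≥0∞ := max (μ₁ Set.univ) (μ₂ Set.univ) - ENNReal.ofReal (η + 2*s) with hCE
  have hofs2 : ENNReal.ofReal (η + 2*s) = ENNReal.ofReal η + ENNReal.ofReal s + ENNReal.ofReal s := by
    rw [← ENNReal.ofReal_add (by positivity) hs0.le, ← ENNReal.ofReal_add (by positivity) hs0.le]
    ring_nf
  have hbiU : ∀ (μ : Measure E) (T : Finset (Fin N)),
      μ (⋃ j ∈ T, P (j:ℕ)) = ∑ j ∈ T, μ (P (j:ℕ)) := by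
    intro μ T
    refine measure_biUnion_finset ?_ (fun j _ => hPmeas j)
    intro k₁ _ k₂ _ hne
    exact hPdisj (fun h => hne (Fin.val_injective h))
  have hbiUmeas : ∀ T : Finset (Fin N), MeasurableSet (⋃ j ∈ T, P (j:ℕ)) :=
    fun T => MeasurableSet.biUnion T.countable_toSet (fun j _ => hPmeas j)
  have hsum_univ : ∀ (μ : Measure E), μ Set.univ = ∑ k : Fin N, μ (P (k:ℕ)) + μ W := by
    intro μ
    have := hdecomp μ Set.univ MeasurableSet.univ
    simpa [Set.univ_inter] using this
  have hcut : ∀ S : Finset (Fin N), CE ≤ ∑ j ∈ Sᶜ, aE j +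
      ∑ k ∈ S.biUnion (fun j => Finset.univ.filter (fun k => Rel j k)), bE k := by
    intro S
    set NS := S.biUnion (fun j => Finset.univ.filter (fun k => Rel j k)) with hNS
    rw [hCE, tsub_le_iff_left]
    refine max_le ?_ ?_
    · -- bound via μ₁
      set U : Set E := ⋃ j ∈ S, P (j:ℕ) with hU
      have h1 := (hηprop U (hbiUmeas S)).1
      have hthick : Metric.thickening η U ⊆ (⋃ k ∈ NS, P (k:ℕ)) ∪ W := by
        intro q hq
        by_cases hqW : q ∈ W
        · exact Or.inr hqW
        · have hqU0 : q ∈ U0 := by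
            rw [hW] at hqW
            simpa using hqW
          obtain ⟨k, hk⟩ := Set.mem_iUnion.1 hqU0
          obtain ⟨u, huU, hqu⟩ := Metric.mem_thickening_iff.1 hq
          obtain ⟨j, hjS, hju⟩ := Set.mem_iUnion₂.1 huU
          refine Or.inl (Set.mem_biUnion ?_ hk)
          refine Finset.mem_biUnion.2 ⟨j, hjS, Finset.mem_filter.2 ⟨Finset.mem_univ _, ?_⟩⟩
          refine ⟨u, hju, q, hk, ?_⟩
          rw [dist_comm u q]
          linarith
      have h2 : μ₂ (Metric.thickening η U) ≤ ∑ k ∈ NS, bE k + ENNReal.ofReal s := by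
        calc μ₂ (Metric.thickening η U) ≤ μ₂ ((⋃ k ∈ NS, P (k:ℕ)) ∪ W) := measure_mono hthick
          _ ≤ μ₂ (⋃ k ∈ NS, P (k:ℕ)) + μ₂ W := measure_union_le _ _
          _ ≤ ∑ k ∈ NS, bE k + ENNReal.ofReal s := by
              rw [hbiU μ₂ NS]
              exact add_le_add le_rfl hW2
      have h3 : μ₁ Set.univ ≤ ∑ j ∈ S, aE j + ∑ j ∈ Sᶜ, aE j + ENNReal.ofReal s := by
        rw [hsum_univ μ₁]
        have : ∑ j ∈ S, aE j + ∑ j ∈ Sᶜ, aE j = ∑ j : Fin N, aE j :=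
          Finset.sum_add_sum_compl S aE
        rw [this]
        exact add_le_add le_rfl hW1
      have h4 : ∑ j ∈ S, aE j ≤ ∑ k ∈ NS, bE k + ENNReal.ofReal s + ENNReal.ofReal η := by
        have : ∑ j ∈ S, aE j = μ₁ U := (hbiU μ₁ S).symm
        rw [this]
        calc μ₁ U ≤ μ₂ (Metric.thickening η U) + ENNReal.ofReal η := h1
          _ ≤ ∑ k ∈ NS, bE k + ENNReal.ofReal s + ENNReal.ofReal η := add_le_add h2 le_rfl
      calc μ₁ Set.univ ≤ ∑ j ∈ S, aE j + ∑ j ∈ Sᶜ, aE j + ENNReal.ofReal s := h3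
        _ ≤ (∑ k ∈ NS, bE k + ENNReal.ofReal s + ENNReal.ofReal η) + ∑ j ∈ Sᶜ, aE j
            + ENNReal.ofReal s := by
            exact add_le_add (add_le_add h4 le_rfl) le_rfl
        _ = ENNReal.ofReal (η + 2*s) + (∑ j ∈ Sᶜ, aE j + ∑ k ∈ NS, bE k) := by
            rw [hofs2]; ring
    · -- bound via μ₂
      set V : Set E := ⋃ k ∈ NSᶜ, P (k:ℕ) with hV
      have h1 := (hηprop V (hbiUmeas NSᶜ)).2
      have hthick : Metric.thickening η V ⊆ (⋃ j ∈ Sᶜ, P (j:ℕ)) ∪ W := by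
        intro p hp
        by_cases hpW : p ∈ W
        · exact Or.inr hpW
        · have hpU0 : p ∈ U0 := by
            rw [hW] at hpW
            simpa using hpW
          obtain ⟨j, hj⟩ := Set.mem_iUnion.1 hpU0
          obtain ⟨v, hvV, hpv⟩ := Metric.mem_thickening_iff.1 hp
          obtain ⟨k, hkNS, hvk⟩ := Set.mem_iUnion₂.1 hvV
          refine Or.inl (Set.mem_biUnion (Finset.mem_compl.2 ?_) hj)
          intro hjS
          have hkmem : k ∈ NS := by
            refine Finset.mem_biUnion.2 ⟨j, hjS, Finset.mem_filter.2 ⟨Finset.mem_univ _, ?_⟩⟩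
            exact ⟨p, hj, v, hvk, by linarith⟩
          exact (Finset.mem_compl.1 hkNS) hkmem
      have h2 : μ₁ (Metric.thickening η V) ≤ ∑ j ∈ Sᶜ, aE j + ENNReal.ofReal s := by
        calc μ₁ (Metric.thickening η V) ≤ μ₁ ((⋃ j ∈ Sᶜ, P (j:ℕ)) ∪ W) := measure_mono hthick
          _ ≤ μ₁ (⋃ j ∈ Sᶜ, P (j:ℕ)) + μ₁ W := measure_union_le _ _
          _ ≤ ∑ j ∈ Sᶜ, aE j + ENNReal.ofReal s := by
              rw [hbiU μ₁ Sᶜ]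
              exact add_le_add le_rfl hW1
      have h3 : μ₂ Set.univ ≤ ∑ k ∈ NS, bE k + ∑ k ∈ NSᶜ, bE k + ENNReal.ofReal s := by
        rw [hsum_univ μ₂]
        have : ∑ k ∈ NS, bE k + ∑ k ∈ NSᶜ, bE k = ∑ k : Fin N, bE k :=
          Finset.sum_add_sum_compl NS bE
        rw [this]
        exact add_le_add le_rfl hW2
      have h4 : ∑ k ∈ NSᶜ, bE k ≤ ∑ j ∈ Sᶜ, aE j + ENNReal.ofReal s + ENNReal.ofReal η := by
        have : ∑ k ∈ NSᶜ, bE k = μ₂ V := (hbiU μ₂ NSᶜ).symm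
        rw [this]
        calc μ₂ V ≤ μ₁ (Metric.thickening η V) + ENNReal.ofReal η := h1
          _ ≤ ∑ j ∈ Sᶜ, aE j + ENNReal.ofReal s + ENNReal.ofReal η := add_le_add h2 le_rfl
      calc μ₂ Set.univ ≤ ∑ k ∈ NS, bE k + ∑ k ∈ NSᶜ, bE k + ENNReal.ofReal s := h3
        _ ≤ ∑ k ∈ NS, bE k + (∑ j ∈ Sᶜ, aE j + ENNReal.ofReal s + ENNReal.ofReal η)
            + ENNReal.ofReal s := by
            exact add_le_add (add_le_add le_rfl h4) le_rfl
        _ = ENNReal.ofReal (η + 2*s) + (∑ j ∈ Sᶜ, aE j + ∑ k ∈ NS, bE k) := by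
            rw [hofs2]; ring
  obtain ⟨z, hzsupp, hzrow, hzcol, hztot⟩ := ennFlow N aE bE
    (fun j => measure_ne_top _ _) (fun k => measure_ne_top _ _) Rel CE hcut
    (ENNReal.ofReal s) (by simpa using (ENNReal.ofReal_pos.2 hs0).ne')
  -- post-processing of the flow
  set r : Fin N → ℝ≥0∞ := fun j => ∑ k, z j k with hr
  set keep : Fin N → ℝ≥0∞ := fun j => min (r j) (μ₁' (P (j:ℕ))) with hkeepdef
  set y : Fin N → Fin N → ℝ≥0∞ := fun j k => z j k * (keep j / r j) with hy
  set colz : Fin N → ℝ≥0∞ := fun k => ∑ j, z j k with hcolzdef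
  set coly : Fin N → ℝ≥0∞ := fun k => ∑ j, y j k with hcolydef
  set d : Fin N → ℝ≥0∞ := fun k => (colz k - coly k) / bE k with hd
  have hrle : ∀ j, r j ≤ aE j := hzrow
  have hrfin : ∀ j, r j ≠ ⊤ := fun j => ((hrle j).trans_lt (measure_lt_top μ₁ _)).ne
  have hkr : ∀ j, keep j ≤ r j := fun j => min_le_left _ _
  have hkμ : ∀ j, keep j ≤ μ₁' (P (j:ℕ)) := fun j => min_le_right _ _
  have hyz : ∀ j k, y j k ≤ z j k := by
    intro j k
    by_cases hrj : r j = 0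
    · have hzjk : z j k = 0 :=
        le_antisymm (le_trans (Finset.single_le_sum (fun _ _ => zero_le)
          (Finset.mem_univ k)) (le_of_eq hrj)) (zero_le)
      rw [hy]
      simp [hzjk]
    · have hq1 : keep j / r j ≤ 1 := by
        rw [ENNReal.div_le_iff hrj (hrfin j), one_mul]
        exact hkr j
      calc y j k = z j k * (keep j / r j) := rfl
        _ ≤ z j k * 1 := mul_le_mul_right hq1 _
        _ = z j k := mul_one _
  have hsumy : ∀ j, ∑ k, y j k = keep j := by
    intro j
    have h1 : ∑ k, y j k = (∑ k, z j k) * (keep j / r j) := by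
      rw [Finset.sum_mul]
    by_cases hrj : r j = 0
    · have hk0 : keep j = 0 := le_antisymm ((hkr j).trans (le_of_eq hrj)) (zero_le)
      rw [h1, hk0]
      have : (∑ k, z j k) = 0 := hrj
      rw [this, zero_mul]
    · rw [h1]
      have : (∑ k, z j k) = r j := rfl
      rw [this, mul_comm]
      exact ENNReal.div_mul_cancel hrj (hrfin j)
  have hcolyz : ∀ k, coly k ≤ colz k := fun k => Finset.sum_le_sum (fun j _ => hyz j k)
  have hcolzb : ∀ k, colz k ≤ bE k := hzcol
  set Ztot : ℝ≥0∞ := ∑ j, ∑ k, z j k with hZtotdef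
  have hZfin : Ztot ≠ ⊤ := by
    have : Ztot ≤ ∑ j, aE j := Finset.sum_le_sum (fun j _ => hrle j)
    exact (this.trans_lt (ENNReal.sum_lt_top.2 (fun j _ => measure_lt_top μ₁ _))).ne
  have hsumr : ∑ j, r j = Ztot := rfl
  have hsumcolz : ∑ k, colz k = Ztot := Finset.sum_comm
  have hYdef : ∑ k, coly k = ∑ j, keep j := by
    rw [hcolydef]
    calc ∑ k, ∑ j, y j k = ∑ j, ∑ k, y j k := Finset.sum_comm
      _ = ∑ j, keep j := Finset.sum_congr rfl (fun j _ => hsumy j)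
  have hYfin : (∑ k, coly k) ≠ ⊤ := by
    rw [hYdef]
    have h1 : ∑ j, keep j ≤ ∑ j, r j := Finset.sum_le_sum (fun j _ => hkr j)
    rw [hsumr] at h1
    exact (h1.trans_lt (lt_top_iff_ne_top.2 hZfin)).ne
  have hofs3 : ENNReal.ofReal (η + 3*s) = ENNReal.ofReal s + ENNReal.ofReal (η + 2*s) := by
    rw [← ENNReal.ofReal_add hs0.le (by positivity)]
    ring_nf
  have hmaxZ : max (μ₁ Set.univ) (μ₂ Set.univ) ≤ Ztot + ENNReal.ofReal (η + 3*s) := by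
    calc max (μ₁ Set.univ) (μ₂ Set.univ) ≤ CE + ENNReal.ofReal (η + 2*s) := le_tsub_add
      _ ≤ (Ztot + ENNReal.ofReal s) + ENNReal.ofReal (η + 2*s) := add_le_add hztot le_rfl
      _ = Ztot + ENNReal.ofReal (η + 3*s) := by rw [hofs3]; ring
  have hsumaE : ∑ j, aE j ≤ μ₁ Set.univ := by
    rw [hsum_univ μ₁]
    exact self_le_add_right _ _
  have hsumbE : ∑ k, bE k ≤ μ₂ Set.univ := by
    rw [hsum_univ μ₂]
    exact self_le_add_right _ _
  have hdef1 : ∀ T : Finset (Fin N), ∑ j ∈ T, (aE j - r j) ≤ ENNReal.ofReal (η + 3*s) := by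
    intro T
    have key : ∑ j ∈ T, (aE j - r j) + Ztot ≤ ENNReal.ofReal (η + 3*s) + Ztot := by
      have h1 : ∑ j ∈ T, (aE j - r j) + Ztot ≤ ∑ j, aE j := by
        rw [← hsumr, ← Finset.sum_add_sum_compl T r, ← add_assoc, ← Finset.sum_add_distrib]
        have h2 : ∑ j ∈ T, (aE j - r j + r j) = ∑ j ∈ T, aE j :=
          Finset.sum_congr rfl (fun j _ => tsub_add_cancel_of_le (hrle j))
        rw [h2, ← Finset.sum_add_sum_compl T aE]
        exact add_le_add le_rfl (Finset.sum_le_sum (fun j _ => hrle j))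
      calc ∑ j ∈ T, (aE j - r j) + Ztot ≤ ∑ j, aE j := h1
        _ ≤ μ₁ Set.univ := hsumaE
        _ ≤ max (μ₁ Set.univ) (μ₂ Set.univ) := le_max_left _ _
        _ ≤ Ztot + ENNReal.ofReal (η + 3*s) := hmaxZ
        _ = ENNReal.ofReal (η + 3*s) + Ztot := add_comm _ _
    exact (ENNReal.add_le_add_iff_right hZfin).1 key
  have hdef2 : ∀ T : Finset (Fin N), ∑ k ∈ T, (bE k - colz k) ≤ ENNReal.ofReal (η + 3*s) := by
    intro T
    have key : ∑ k ∈ T, (bE k - colz k) + Ztot ≤ ENNReal.ofReal (η + 3*s) + Ztot := by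
      have h1 : ∑ k ∈ T, (bE k - colz k) + Ztot ≤ ∑ k, bE k := by
        rw [← hsumcolz, ← Finset.sum_add_sum_compl T colz, ← add_assoc, ← Finset.sum_add_distrib]
        have h2 : ∑ k ∈ T, (bE k - colz k + colz k) = ∑ k ∈ T, bE k :=
          Finset.sum_congr rfl (fun k _ => tsub_add_cancel_of_le (hcolzb k))
        rw [h2, ← Finset.sum_add_sum_compl T bE]
        exact add_le_add le_rfl (Finset.sum_le_sum (fun k _ => hcolzb k))
      calc ∑ k ∈ T, (bE k - colz k) + Ztot ≤ ∑ k, bE k := h1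
        _ ≤ μ₂ Set.univ := hsumbE
        _ ≤ max (μ₁ Set.univ) (μ₂ Set.univ) := le_max_right _ _
        _ ≤ Ztot + ENNReal.ofReal (η + 3*s) := hmaxZ
        _ = ENNReal.ofReal (η + 3*s) + Ztot := add_comm _ _
    exact (ENNReal.add_le_add_iff_right hZfin).1 key
  -- the new measure
  set μ₂' : Measure E := (∑ k : Fin N, ((1:ℝ≥0∞) - d k) • μ₂.restrict (P (k:ℕ)))
    + μ₂.restrict W with hμ₂'
  have happly : ∀ B : Set E, MeasurableSet B →
      μ₂' B = ∑ k : Fin N, (1 - d k) * μ₂ (B ∩ P (k:ℕ)) + μ₂ (B ∩ W) := by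
    intro B hB
    rw [hμ₂', Measure.add_apply, Measure.finset_sum_apply, Measure.restrict_apply hB]
    congr 1
    refine Finset.sum_congr rfl (fun k _ => ?_)
    rw [Measure.smul_apply, Measure.restrict_apply hB, smul_eq_mul]
  have hrem : ∀ k, (1 - d k) * bE k = bE k - (colz k - coly k) := by
    intro k
    by_cases hbk : bE k = 0
    · have hcz : colz k = 0 := le_antisymm ((hcolzb k).trans (le_of_eq hbk)) (zero_le)
      have hcy : coly k = 0 := le_antisymm ((hcolyz k).trans (le_of_eq hcz)) (zero_le)
      rw [hbk, hcz, hcy]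
      simp
    · have hbfin : bE k ≠ ⊤ := measure_ne_top μ₂ _
      have hdb : d k * bE k = colz k - coly k := by
        rw [hd]
        exact ENNReal.div_mul_cancel hbk hbfin
      rw [ENNReal.sub_mul (fun _ _ => hbfin), one_mul, hdb]
  have hcellmul : ∀ k : Fin N, μ₂' (P (k:ℕ)) = (1 - d k) * bE k := by
    intro k
    rw [happly _ (hPmeas k)]
    have hW0 : μ₂ (P (k:ℕ) ∩ W) = 0 := by rw [hPW k]; exact measure_empty
    rw [hW0, add_zero]
    rw [Finset.sum_eq_single k]
    · rw [Set.inter_self]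
    · intro k' _ hne
      have : P (k:ℕ) ∩ P (k':ℕ) = ∅ := Set.disjoint_iff_inter_eq_empty.1
        (hPdisj (fun h => hne (Fin.val_injective h.symm)))
      rw [this, measure_empty, mul_zero]
    · intro h
      exact absurd (Finset.mem_univ k) h
  have hcell : ∀ k : Fin N, μ₂' (P (k:ℕ)) = bE k - (colz k - coly k) := by
    intro k
    rw [hcellmul k, hrem k]
  have hμ₂'le : μ₂' ≤ μ₂ := by
    refine Measure.le_iff.2 (fun B hB => ?_)
    rw [happly B hB, hdecomp μ₂ B hB]
    refine add_le_add ?_ le_rfl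
    refine Finset.sum_le_sum (fun k _ => ?_)
    calc (1 - d k) * μ₂ (B ∩ P (k:ℕ)) ≤ 1 * μ₂ (B ∩ P (k:ℕ)) :=
        mul_le_mul_left tsub_le_self _
      _ = μ₂ (B ∩ P (k:ℕ)) := one_mul _
  haveI hfin : IsFiniteMeasure μ₂' := isFiniteMeasure_of_le μ₂ hμ₂'le
  -- variational distance bound
  have hσ : ∀ t : Set E, MeasurableSet t → (μ₁ - μ₁') t = μ₁ t - μ₁' t :=
    fun t ht => Measure.sub_apply ht hle
  have hremtot : ∑ k, (colz k - coly k) ≤ μ₁ Set.univ - μ₁' Set.univ := by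
    have hjk : ∀ j, r j - keep j ≤ (μ₁ - μ₁') (P (j:ℕ)) := by
      intro j
      rcases le_total (r j) (μ₁' (P (j:ℕ))) with hc | hc
      · have : keep j = r j := min_eq_left hc
        rw [this, tsub_self]
        exact zero_le
      · have hkeq : keep j = μ₁' (P (j:ℕ)) := min_eq_right hc
        rw [hkeq, hσ _ (hPmeas j)]
        exact tsub_le_tsub (hrle j) le_rfl
    have h1 : ∑ k, (colz k - coly k) + ∑ k, coly k = Ztot := by
      rw [← Finset.sum_add_distrib]
      have : ∑ k, (colz k - coly k + coly k) = ∑ k, colz k :=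
        Finset.sum_congr rfl (fun k _ => tsub_add_cancel_of_le (hcolyz k))
      rw [this, hsumcolz]
    have h2 : ∑ j, (r j - keep j) + ∑ k, coly k = Ztot := by
      rw [hYdef, ← Finset.sum_add_distrib]
      have : ∑ j, (r j - keep j + keep j) = ∑ j, r j :=
        Finset.sum_congr rfl (fun j _ => tsub_add_cancel_of_le (hkr j))
      rw [this, hsumr]
    have h3 : ∑ k, (colz k - coly k) + ∑ k, coly k ≤
        (μ₁ Set.univ - μ₁' Set.univ) + ∑ k, coly k := by
      rw [h1, ← h2]
      refine add_le_add ?_ le_rfl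
      calc ∑ j, (r j - keep j) ≤ ∑ j : Fin N, (μ₁ - μ₁') (P (j:ℕ)) :=
          Finset.sum_le_sum (fun j _ => hjk j)
        _ = (μ₁ - μ₁') (⋃ j ∈ (Finset.univ : Finset (Fin N)), P (j:ℕ)) := (hbiU _ _).symm
        _ ≤ (μ₁ - μ₁') Set.univ := measure_mono (Set.subset_univ _)
        _ = μ₁ Set.univ - μ₁' Set.univ := hσ _ MeasurableSet.univ
    exact (ENNReal.add_le_add_iff_right hYfin).1 h3
  have hσuniv : μ₁ Set.univ - μ₁' Set.univ ≤ ENNReal.ofReal ε := by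
    have h1 : max (μ₁ Set.univ - μ₁' Set.univ) (μ₁' Set.univ - μ₁ Set.univ) ≤
        varDist μ₁ μ₁' := by
      exact le_iSup₂ (f := fun (B : Set E) (_ : MeasurableSet B) =>
        max (μ₁ B - μ₁' B) (μ₁' B - μ₁ B)) Set.univ MeasurableSet.univ
    exact le_trans (le_trans (le_max_left _ _) h1) hvar
  have hvarfinal : varDist μ₂ μ₂' ≤ ENNReal.ofReal ε := by
    refine iSup_le fun B => iSup_le fun hB => max_le ?_ ?_
    · rw [tsub_le_iff_right]
      have hptw : ∀ k : Fin N, μ₂ (B ∩ P (k:ℕ)) ≤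
          (1 - d k) * μ₂ (B ∩ P (k:ℕ)) + (colz k - coly k) := by
        intro k
        by_cases hbk : bE k = 0
        · have : μ₂ (B ∩ P (k:ℕ)) = 0 := le_antisymm
            ((measure_mono Set.inter_subset_right).trans (le_of_eq hbk)) (zero_le)
          rw [this]
          exact zero_le
        · have h1 : (1:ℝ≥0∞) ≤ (1 - d k) + d k := le_tsub_add
          have h2 : μ₂ (B ∩ P (k:ℕ)) ≤ ((1 - d k) + d k) * μ₂ (B ∩ P (k:ℕ)) := by
            calc μ₂ (B ∩ P (k:ℕ)) = 1 * μ₂ (B ∩ P (k:ℕ)) := (one_mul _).symm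
              _ ≤ ((1 - d k) + d k) * μ₂ (B ∩ P (k:ℕ)) := mul_le_mul_left h1 _
          rw [add_mul] at h2
          refine h2.trans (add_le_add le_rfl ?_)
          calc d k * μ₂ (B ∩ P (k:ℕ)) ≤ d k * bE k :=
              mul_le_mul_right (measure_mono Set.inter_subset_right) _
            _ = colz k - coly k := by
                rw [hd]
                exact ENNReal.div_mul_cancel hbk (measure_ne_top μ₂ _)
      calc μ₂ B = ∑ k : Fin N, μ₂ (B ∩ P (k:ℕ)) + μ₂ (B ∩ W) := hdecomp μ₂ B hB
        _ ≤ ∑ k : Fin N, ((1 - d k) * μ₂ (B ∩ P (k:ℕ)) + (colz k - coly k)) + μ₂ (B ∩ W) :=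
            add_le_add (Finset.sum_le_sum (fun k _ => hptw k)) le_rfl
        _ = (∑ k : Fin N, (1 - d k) * μ₂ (B ∩ P (k:ℕ)) + μ₂ (B ∩ W))
            + ∑ k, (colz k - coly k) := by
            rw [Finset.sum_add_distrib]; ring
        _ ≤ μ₂' B + ENNReal.ofReal ε := by
            rw [← happly B hB]
            exact add_le_add le_rfl (hremtot.trans hσuniv)
        _ = ENNReal.ofReal ε + μ₂' B := add_comm _ _
    · have : μ₂' B ≤ μ₂ B := Measure.le_iff.1 hμ₂'le B hB
      rw [tsub_eq_zero_of_le this]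
      exact zero_le
  -- geometric lemmas
  have hgeo1 : ∀ (A : Set E) (j k : Fin N), Rel j k → (P (j:ℕ) ∩ A).Nonempty →
      P (k:ℕ) ⊆ Metric.thickening β A := by
    rintro A j k ⟨p, hp, q0, hq0, hpq⟩ ⟨w, hwP, hwA⟩ q hq
    refine Metric.mem_thickening_iff.2 ⟨w, hwA, ?_⟩
    have h1 : dist q q0 < 2*s := hPdiam _ q hq q0 hq0
    have h2 : dist p w < 2*s := hPdiam _ p hp w hwP
    calc dist q w ≤ dist q q0 + dist q0 p + dist p w := dist_triangle4 _ _ _ _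
      _ = dist q q0 + dist p q0 + dist p w := by rw [dist_comm q0 p]
      _ < 2*s + (η + 2*s) + 2*s := by linarith
      _ = β := by rw [hβ]; ring
  have hgeo2 : ∀ (A : Set E) (j k : Fin N), Rel j k → (P (k:ℕ) ∩ A).Nonempty →
      P (j:ℕ) ⊆ Metric.thickening β A := by
    rintro A j k ⟨p, hp, q0, hq0, hpq⟩ ⟨w, hwP, hwA⟩ q hq
    refine Metric.mem_thickening_iff.2 ⟨w, hwA, ?_⟩
    have h1 : dist q p < 2*s := hPdiam _ q hq p hp
    have h2 : dist q0 w < 2*s := hPdiam _ q0 hq0 w hwP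
    calc dist q w ≤ dist q p + dist p q0 + dist q0 w := dist_triangle4 _ _ _ _
      _ < 2*s + (η + 2*s) + 2*s := by linarith
      _ = β := by rw [hβ]; ring
  have hβadd : ENNReal.ofReal (η + 3*s) + ENNReal.ofReal s ≤ ENNReal.ofReal β := by
    rw [← ENNReal.ofReal_add (by positivity) hs0.le]
    refine ENNReal.ofReal_le_ofReal ?_
    rw [hβ]
    linarith
  -- direction 1
  have hdir1 : ∀ A : Set E, MeasurableSet A →
      μ₁' A ≤ μ₂' (Metric.thickening β A) + ENNReal.ofReal β := by
    intro A hA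
    set JA := Finset.univ.filter (fun j : Fin N => (P (j:ℕ) ∩ A).Nonempty) with hJA
    set KS := Finset.univ.filter (fun k : Fin N => P (k:ℕ) ⊆ Metric.thickening β A) with hKS
    have step1 : μ₁' A ≤ ∑ j ∈ JA, μ₁' (P (j:ℕ)) + ENNReal.ofReal s := by
      rw [hdecomp μ₁' A hA]
      refine add_le_add ?_ (le_trans (measure_mono Set.inter_subset_right) hW1')
      have hvanish : ∀ j ∈ Finset.univ, j ∉ JA → μ₁' (A ∩ P (j:ℕ)) = 0 := by
        intro j _ hj
        have : ¬ (P (j:ℕ) ∩ A).Nonempty := by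
          intro hne
          exact hj (Finset.mem_filter.2 ⟨Finset.mem_univ _, hne⟩)
        have hempty : A ∩ P (j:ℕ) = ∅ := by
          rw [Set.inter_comm]
          exact Set.not_nonempty_iff_eq_empty.1 this
        rw [hempty, measure_empty]
      calc ∑ j : Fin N, μ₁' (A ∩ P (j:ℕ)) = ∑ j ∈ JA, μ₁' (A ∩ P (j:ℕ)) :=
          (Finset.sum_subset (Finset.subset_univ JA) hvanish).symm
        _ ≤ ∑ j ∈ JA, μ₁' (P (j:ℕ)) :=
          Finset.sum_le_sum (fun j _ => measure_mono Set.inter_subset_right)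
    have step2 : ∑ j ∈ JA, μ₁' (P (j:ℕ)) ≤ ∑ j ∈ JA, keep j + ENNReal.ofReal (η + 3*s) := by
      have hptw : ∀ j : Fin N, μ₁' (P (j:ℕ)) ≤ keep j + (aE j - r j) := by
        intro j
        rcases le_total (r j) (μ₁' (P (j:ℕ))) with hc | hc
        · have hkeq : keep j = r j := min_eq_left hc
          rw [hkeq]
          calc μ₁' (P (j:ℕ)) ≤ aE j := Measure.le_iff.1 hle _ (hPmeas j)
            _ = r j + (aE j - r j) := by rw [add_comm, tsub_add_cancel_of_le (hrle j)]
        · have hkeq : keep j = μ₁' (P (j:ℕ)) := min_eq_right hc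
          rw [hkeq]
          exact le_add_right le_rfl
      calc ∑ j ∈ JA, μ₁' (P (j:ℕ)) ≤ ∑ j ∈ JA, (keep j + (aE j - r j)) :=
          Finset.sum_le_sum (fun j _ => hptw j)
        _ = ∑ j ∈ JA, keep j + ∑ j ∈ JA, (aE j - r j) := Finset.sum_add_distrib
        _ ≤ ∑ j ∈ JA, keep j + ENNReal.ofReal (η + 3*s) := add_le_add le_rfl (hdef1 JA)
    have step3 : ∑ j ∈ JA, keep j ≤ ∑ k ∈ KS, coly k := by
      have h1 : ∀ j ∈ JA, keep j = ∑ k ∈ KS, y j k := by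
        intro j hj
        rw [← hsumy j]
        refine (Finset.sum_subset (Finset.subset_univ KS) ?_).symm
        intro k _ hk
        by_contra hyne
        have hz0 : z j k ≠ 0 := by
          intro h0
          exact hyne (by rw [hy]; simp [h0])
        have hrel : Rel j k := hzsupp j k hz0
        have hmem : (P (j:ℕ) ∩ A).Nonempty := (Finset.mem_filter.1 hj).2
        exact hk (Finset.mem_filter.2 ⟨Finset.mem_univ _, hgeo1 A j k hrel hmem⟩)
      calc ∑ j ∈ JA, keep j = ∑ j ∈ JA, ∑ k ∈ KS, y j k := Finset.sum_congr rfl h1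
        _ ≤ ∑ j : Fin N, ∑ k ∈ KS, y j k :=
          Finset.sum_le_sum_of_subset (Finset.subset_univ JA)
        _ = ∑ k ∈ KS, ∑ j : Fin N, y j k := Finset.sum_comm
        _ = ∑ k ∈ KS, coly k := rfl
    have step4 : ∑ k ∈ KS, coly k ≤ μ₂' (Metric.thickening β A) := by
      have h1 : ∀ k : Fin N, coly k ≤ μ₂' (P (k:ℕ)) := by
        intro k
        rw [hcell k]
        have hfin2 : colz k - coly k ≠ ⊤ :=
          ((tsub_le_self.trans (hcolzb k)).trans_lt (measure_lt_top μ₂ _)).ne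
        refine ENNReal.le_sub_of_add_le_right hfin2 ?_
        rw [add_tsub_cancel_of_le (hcolyz k)]
        exact hcolzb k
      calc ∑ k ∈ KS, coly k ≤ ∑ k ∈ KS, μ₂' (P (k:ℕ)) := Finset.sum_le_sum (fun k _ => h1 k)
        _ = μ₂' (⋃ k ∈ KS, P (k:ℕ)) := (hbiU μ₂' KS).symm
        _ ≤ μ₂' (Metric.thickening β A) := by
            refine measure_mono (Set.iUnion₂_subset ?_)
            intro k hk
            exact (Finset.mem_filter.1 hk).2
    calc μ₁' A ≤ ∑ j ∈ JA, μ₁' (P (j:ℕ)) + ENNReal.ofReal s := step1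
      _ ≤ (∑ j ∈ JA, keep j + ENNReal.ofReal (η + 3*s)) + ENNReal.ofReal s :=
          add_le_add step2 le_rfl
      _ ≤ (μ₂' (Metric.thickening β A) + ENNReal.ofReal (η + 3*s)) + ENNReal.ofReal s :=
          add_le_add (add_le_add (step3.trans step4) le_rfl) le_rfl
      _ = μ₂' (Metric.thickening β A) + (ENNReal.ofReal (η + 3*s) + ENNReal.ofReal s) := by ring
      _ ≤ μ₂' (Metric.thickening β A) + ENNReal.ofReal β := add_le_add le_rfl hβadd
  -- direction 2
  have hdir2 : ∀ A : Set E, MeasurableSet A →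
      μ₂' A ≤ μ₁' (Metric.thickening β A) + ENNReal.ofReal β := by
    intro A hA
    set KA := Finset.univ.filter (fun k : Fin N => (P (k:ℕ) ∩ A).Nonempty) with hKA
    set JS := Finset.univ.filter (fun j : Fin N => P (j:ℕ) ⊆ Metric.thickening β A) with hJS
    have step1 : μ₂' A ≤ ∑ k ∈ KA, μ₂' (P (k:ℕ)) + ENNReal.ofReal s := by
      rw [happly A hA]
      refine add_le_add ?_ (le_trans (measure_mono Set.inter_subset_right) hW2)
      have hvanish : ∀ k ∈ Finset.univ, k ∉ KA → (1 - d k) * μ₂ (A ∩ P (k:ℕ)) = 0 := by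
        intro k _ hk
        have : ¬ (P (k:ℕ) ∩ A).Nonempty := by
          intro hne
          exact hk (Finset.mem_filter.2 ⟨Finset.mem_univ _, hne⟩)
        have hempty : A ∩ P (k:ℕ) = ∅ := by
          rw [Set.inter_comm]
          exact Set.not_nonempty_iff_eq_empty.1 this
        rw [hempty, measure_empty, mul_zero]
      calc ∑ k : Fin N, (1 - d k) * μ₂ (A ∩ P (k:ℕ))
          = ∑ k ∈ KA, (1 - d k) * μ₂ (A ∩ P (k:ℕ)) :=
          (Finset.sum_subset (Finset.subset_univ KA) hvanish).symm
        _ ≤ ∑ k ∈ KA, μ₂' (P (k:ℕ)) := by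
          refine Finset.sum_le_sum (fun k _ => ?_)
          rw [hcellmul k]
          exact mul_le_mul_right (measure_mono Set.inter_subset_right) _
    have step2 : ∀ k : Fin N, μ₂' (P (k:ℕ)) ≤ coly k + (bE k - colz k) := by
      intro k
      rw [hcell k]
      rw [tsub_le_iff_right]
      have heq : coly k + (bE k - colz k) + (colz k - coly k) = bE k := by
        rw [add_right_comm, add_tsub_cancel_of_le (hcolyz k), add_comm,
          tsub_add_cancel_of_le (hcolzb k)]
      exact le_of_eq heq.symm
    have step3 : ∑ k ∈ KA, coly k ≤ ∑ j ∈ JS, keep j := by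
      have h1 : ∀ k ∈ KA, coly k = ∑ j ∈ JS, y j k := by
        intro k hk
        rw [hcolydef]
        refine (Finset.sum_subset (Finset.subset_univ JS) ?_).symm
        intro j _ hj
        by_contra hyne
        have hz0 : z j k ≠ 0 := by
          intro h0
          exact hyne (by rw [hy]; simp [h0])
        have hrel : Rel j k := hzsupp j k hz0
        have hmem : (P (k:ℕ) ∩ A).Nonempty := (Finset.mem_filter.1 hk).2
        exact hj (Finset.mem_filter.2 ⟨Finset.mem_univ _, hgeo2 A j k hrel hmem⟩)
      calc ∑ k ∈ KA, coly k = ∑ k ∈ KA, ∑ j ∈ JS, y j k := Finset.sum_congr rfl h1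
        _ ≤ ∑ k : Fin N, ∑ j ∈ JS, y j k :=
          Finset.sum_le_sum_of_subset (Finset.subset_univ KA)
        _ = ∑ j ∈ JS, ∑ k : Fin N, y j k := Finset.sum_comm
        _ = ∑ j ∈ JS, keep j := Finset.sum_congr rfl (fun j _ => hsumy j)
    have step4 : ∑ j ∈ JS, keep j ≤ μ₁' (Metric.thickening β A) := by
      calc ∑ j ∈ JS, keep j ≤ ∑ j ∈ JS, μ₁' (P (j:ℕ)) := Finset.sum_le_sum (fun j _ => hkμ j)
        _ = μ₁' (⋃ j ∈ JS, P (j:ℕ)) := (hbiU μ₁' JS).symm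
        _ ≤ μ₁' (Metric.thickening β A) := by
            refine measure_mono (Set.iUnion₂_subset ?_)
            intro j hj
            exact (Finset.mem_filter.1 hj).2
    calc μ₂' A ≤ ∑ k ∈ KA, μ₂' (P (k:ℕ)) + ENNReal.ofReal s := step1
      _ ≤ ∑ k ∈ KA, (coly k + (bE k - colz k)) + ENNReal.ofReal s :=
          add_le_add (Finset.sum_le_sum (fun k _ => step2 k)) le_rfl
      _ = (∑ k ∈ KA, coly k + ∑ k ∈ KA, (bE k - colz k)) + ENNReal.ofReal s := by
          rw [Finset.sum_add_distrib]
      _ ≤ (μ₁' (Metric.thickening β A) + ENNReal.ofReal (η + 3*s)) + ENNReal.ofReal s :=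
          add_le_add (add_le_add (step3.trans step4) (hdef2 KA)) le_rfl
      _ = μ₁' (Metric.thickening β A) + (ENNReal.ofReal (η + 3*s) + ENNReal.ofReal s) := by ring
      _ ≤ μ₁' (Metric.thickening β A) + ENNReal.ofReal β := add_le_add le_rfl hβadd
  -- conclusion
  refine ⟨μ₂', hfin, hμ₂'le, ?_, hvarfinal⟩
  have hmem : β ∈ {e : ℝ | 0 < e ∧ ∀ A : Set E, MeasurableSet A →
      μ₁' A ≤ μ₂' (Metric.thickening e A) + ENNReal.ofReal e ∧
      μ₂' A ≤ μ₁' (Metric.thickening e A) + ENNReal.ofReal e} :=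
    ⟨hβ0, fun A hA => ⟨hdir1 A hA, hdir2 A hA⟩⟩
  calc dPr μ₁' μ₂' ≤ β := csInf_le (hdbdd μ₁' μ₂') hmem
    _ < δ := hβδ
end

section
/- Let (X,r) and (I,d) be complete separable metric spaces and μ a finite Borel measure on X×I with first marginal ν and disintegration kernel K. Then the following are equivalent: (a) β(μ) = 0; (b) K_x is a Dirac measure for ν-almost every x ∈ X; (c) μ admits a mark function. -/
open MeasureTheory Filter Topology ENNReal

/-- `β(μ) = ∫_X ∫_I ∫_I (1 ∧ d(u,v)) K_x(du) K_x(dv) ν(dx)` where `ν` is the first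
marginal of `μ` and `K` its disintegration (conditional) kernel. -/
noncomputable def beta {X I : Type*} [MeasurableSpace X]
    [MetricSpace I] [MeasurableSpace I] [StandardBorelSpace I] [Nonempty I]
    (μ : Measure (X × I)) [IsFiniteMeasure μ] : ℝ≥0∞ :=
  ∫⁻ x, ∫⁻ u, ∫⁻ v, ENNReal.ofReal (min 1 (dist u v)) ∂(μ.condKernel x) ∂(μ.condKernel x) ∂μ.fst

/-- `κ` is a mark function for `μ`: it is measurable and `μ(dx,du) = ν(dx) δ_{κ(x)}(du)`,
i.e. `μ` is the pushforward of its first marginal under `x ↦ (x, κ x)`. -/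
def IsMarkFunction {X I : Type*} [MeasurableSpace X] [MeasurableSpace I]
    (μ : Measure (X × I)) (κ : X → I) : Prop :=
  Measurable κ ∧ μ = μ.fst.map (fun x => (x, κ x))

open ProbabilityTheory

section Aux
variable {I : Type*} [MetricSpace I] [SecondCountableTopology I]
    [MeasurableSpace I] [BorelSpace I] [Nonempty I]

omit [Nonempty I] in
lemma measurable_f : Measurable (fun p : I × I => ENNReal.ofReal (min 1 (dist p.1 p.2))) :=
  (measurable_const.min measurable_dist).ennreal_ofReal

omit [SecondCountableTopology I] [Nonempty I] in
lemma eq_dirac_of_compl_singleton {P : Measure I} [IsProbabilityMeasure P] {u : I}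
    (h : P {u}ᶜ = 0) : P = Measure.dirac u := by
  ext s hs
  rw [Measure.dirac_apply' u hs]
  by_cases hu : u ∈ s
  · rw [Set.indicator_of_mem hu, Pi.one_apply, ← prob_compl_eq_zero_iff hs]
    refine measure_mono_null ?_ h
    intro v hv hv2
    rw [Set.mem_singleton_iff] at hv2
    exact hv (hv2 ▸ hu)
  · rw [Set.indicator_of_notMem hu]
    refine measure_mono_null ?_ h
    intro v hv hv2
    rw [Set.mem_singleton_iff] at hv2
    exact hu (hv2 ▸ hv)

omit [Nonempty I] in
lemma inner_zero_iff_dirac (P : Measure I) [IsProbabilityMeasure P] :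
    (∫⁻ u, ∫⁻ v, ENNReal.ofReal (min 1 (dist u v)) ∂P ∂P = 0) ↔
      ∃ u, P = Measure.dirac u := by
  have hf : ∀ u : I, Measurable fun v => ENNReal.ofReal (min 1 (dist u v)) := fun u =>
    measurable_f.comp measurable_prodMk_left
  constructor
  · intro h
    have hm : Measurable fun u => ∫⁻ v, ENNReal.ofReal (min 1 (dist u v)) ∂P :=
      measurable_f.lintegral_prod_right'
    rw [lintegral_eq_zero_iff hm] at h
    have h2 : ∀ᵐ u ∂P, P {u}ᶜ = 0 := by
      filter_upwards [h] with u hu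
      rw [Pi.zero_apply, lintegral_eq_zero_iff (hf u)] at hu
      have hsub : {u}ᶜ ⊆ {v | ¬ (ENNReal.ofReal (min 1 (dist u v)) = 0)} := by
        intro v hv
        simp only [Set.mem_setOf_eq, ENNReal.ofReal_eq_zero, not_le, lt_min_iff]
        refine ⟨one_pos, dist_pos.2 ?_⟩
        simpa [eq_comm, Set.mem_compl_iff, Set.mem_singleton_iff] using hv
      exact measure_mono_null hsub hu
    have hne : P ≠ 0 := IsProbabilityMeasure.ne_zero P
    have : (ae P).NeBot := ae_neBot.2 hne
    obtain ⟨u, hu⟩ := h2.exists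
    exact ⟨u, eq_dirac_of_compl_singleton hu⟩
  · rintro ⟨u, rfl⟩
    have h1 : ∀ w : I, ∫⁻ v, ENNReal.ofReal (min 1 (dist w v)) ∂(Measure.dirac u)
        = ENNReal.ofReal (min 1 (dist w u)) := fun w => lintegral_dirac' _ (hf w)
    simp_rw [h1]
    have h2 : Measurable fun w : I => ENNReal.ofReal (min 1 (dist w u)) :=
      measurable_f.comp (measurable_id.prodMk measurable_const)
    rw [lintegral_dirac' _ h2]
    simp

/-- composing a finite measure with a deterministic kernel is the map by the graph. -/
lemma compProd_deterministic_eq_map {X : Type*} [MeasurableSpace X]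
    (ν : Measure X) [SFinite ν] {κ : X → I} (hκ : Measurable κ) :
    ν ⊗ₘ ProbabilityTheory.Kernel.deterministic κ hκ = ν.map (fun x => (x, κ x)) := by
  have hg : Measurable fun x : X => (x, κ x) := measurable_id.prodMk hκ
  ext s hs
  rw [Measure.compProd_apply hs, Measure.map_apply hg hs]
  have : ∀ x, (Kernel.deterministic κ hκ) x (Prod.mk x ⁻¹' s)
      = Set.indicator ((fun x => (x, κ x)) ⁻¹' s) 1 x := by
    intro x
    rw [Kernel.deterministic_apply,
      Measure.dirac_apply' _ (measurable_prodMk_left hs)]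
    rfl
  simp_rw [this]
  rw [lintegral_indicator (hg hs)]
  simp

end Aux

theorem beta_zero_iff_markFunction' {X I : Type*}
    [MetricSpace X] [CompleteSpace X] [SecondCountableTopology X]
    [MeasurableSpace X] [BorelSpace X]
    [MetricSpace I] [CompleteSpace I] [SecondCountableTopology I]
    [MeasurableSpace I] [BorelSpace I] [Nonempty I]
    (μ : Measure (X × I)) [IsFiniteMeasure μ] :
    (∫⁻ x, ∫⁻ u, ∫⁻ v, ENNReal.ofReal (min 1 (dist u v)) ∂(μ.condKernel x) ∂(μ.condKernel x) ∂μ.fst = 0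
      ↔ ∀ᵐ x ∂μ.fst, ∃ u : I, μ.condKernel x = Measure.dirac u) ∧
    (∫⁻ x, ∫⁻ u, ∫⁻ v, ENNReal.ofReal (min 1 (dist u v)) ∂(μ.condKernel x) ∂(μ.condKernel x) ∂μ.fst = 0
      ↔ ∃ κ : X → I, Measurable κ ∧ μ = μ.fst.map (fun x => (x, κ x))) := by
  -- measurability of the double integral
  have hG : Measurable fun x => ∫⁻ u, ∫⁻ v, ENNReal.ofReal (min 1 (dist u v))
      ∂(μ.condKernel x) ∂(μ.condKernel x) := by
    have h1 : Measurable fun p : X × I =>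
        ∫⁻ v, ENNReal.ofReal (min 1 (dist p.2 v)) ∂(μ.condKernel p.1) := by
      have := Measurable.lintegral_kernel_prod_right'
        (κ := (μ.condKernel).comap Prod.fst measurable_fst)
        (f := fun q : (X × I) × I => ENNReal.ofReal (min 1 (dist q.1.2 q.2)))
        (measurable_f.comp ((measurable_snd.comp measurable_fst).prodMk measurable_snd))
      simpa [Kernel.comap_apply] using this
    exact Measurable.lintegral_kernel_prod_right' (κ := μ.condKernel) h1
  have hab : (∫⁻ x, ∫⁻ u, ∫⁻ v, ENNReal.ofReal (min 1 (dist u v))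
      ∂(μ.condKernel x) ∂(μ.condKernel x) ∂μ.fst = 0)
      ↔ ∀ᵐ x ∂μ.fst, ∃ u : I, μ.condKernel x = Measure.dirac u := by
    rw [lintegral_eq_zero_iff hG]
    refine eventually_congr (Eventually.of_forall fun x => ?_)
    rw [Pi.zero_apply]
    exact inner_zero_iff_dirac (μ.condKernel x)
  refine ⟨hab, hab.trans ⟨fun hb => ?_, fun hc => ?_⟩⟩
  · -- (b) → (c)
    obtain ⟨e, he⟩ := MeasureTheory.exists_measurableEmbedding_real (α := I)
    obtain ⟨r, hr, hre⟩ := he.exists_measurable_extend measurable_id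
      (fun _ => ⟨Classical.arbitrary I⟩)
    set g : X → ℝ := fun x => ∫ t, e t ∂(μ.condKernel x) with hg
    have hgm : Measurable g := by
      have : StronglyMeasurable fun q : X × I => e q.2 :=
        (he.measurable.comp measurable_snd).stronglyMeasurable
      exact this.integral_kernel_prod_right'.measurable
    set κ : X → I := fun x => r (g x) with hκ
    have hκm : Measurable κ := hr.comp hgm
    have hae : ∀ᵐ x ∂μ.fst, μ.condKernel x = (Kernel.deterministic κ hκm) x := by
      filter_upwards [hb] with x hx
      obtain ⟨u, hu⟩ := hx
      have hgx : g x = e u := by rw [hg]; simp only; rw [hu, integral_dirac]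
      have hκx : κ x = u := by
        rw [hκ]; simp only; rw [hgx]
        have := congrFun hre u
        simpa using this
      rw [Kernel.deterministic_apply, hκx, hu]
    refine ⟨κ, hκm, ?_⟩
    calc μ = μ.fst ⊗ₘ μ.condKernel := (μ.disintegrate μ.condKernel).symm
    _ = μ.fst ⊗ₘ Kernel.deterministic κ hκm := Measure.compProd_congr hae
    _ = μ.fst.map (fun x => (x, κ x)) := compProd_deterministic_eq_map _ hκm
  · -- (c) → (b)
    obtain ⟨κ, hκm, hκeq⟩ := hc
    have h : μ = μ.fst ⊗ₘ Kernel.deterministic κ hκm := by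
      rw [compProd_deterministic_eq_map _ hκm]; exact hκeq
    filter_upwards [eq_condKernel_of_measure_eq_compProd _ h] with x hx
    exact ⟨κ x, by rw [← hx, Kernel.deterministic_apply]⟩

/-- For a finite Borel measure `μ` on `X × I` with first marginal `ν` and disintegration
kernel `K`, the following are equivalent: (a) `β(μ) = 0`; (b) `K_x` is a Dirac measure for
`ν`-a.e. `x`; (c) `μ` admits a mark function. -/
theorem beta_zero_iff_markFunction {X I : Type*}
    [MetricSpace X] [CompleteSpace X] [SecondCountableTopology X]
    [MeasurableSpace X] [BorelSpace X]
    [MetricSpace I] [CompleteSpace I] [SecondCountableTopology I]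
    [MeasurableSpace I] [BorelSpace I] [Nonempty I]
    (μ : Measure (X × I)) [IsFiniteMeasure μ] :
    (beta μ = 0 ↔ ∀ᵐ x ∂μ.fst, ∃ u : I, μ.condKernel x = Measure.dirac u) ∧
    (beta μ = 0 ↔ ∃ κ : X → I, IsMarkFunction μ κ) := by
  unfold _root_.beta IsMarkFunction
  exact beta_zero_iff_markFunction' μ
end

section
/- Let (X,r) and (I,d) be complete separable metric spaces and μ, μ' finite Borel measures on X×I. Then β(μ) ≤ β(μ') + 2‖μ − μ'‖. -/
open MeasureTheory Filter Topology ENNReal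

section Aux

open Set ProbabilityTheory

/-- The truncated distance `1 ∧ d(u,v)` as an `ℝ≥0∞`-valued function. -/
noncomputable def fE {I : Type*} [MetricSpace I] (u v : I) : ℝ≥0∞ :=
  ENNReal.ofReal (min 1 (dist u v))

lemma fE_le_one {I : Type*} [MetricSpace I] (u v : I) : fE u v ≤ 1 := by
  have : ENNReal.ofReal (min 1 (dist u v)) ≤ ENNReal.ofReal 1 :=
    ENNReal.ofReal_le_ofReal (min_le_left _ _)
  simpa [fE] using this

lemma fE_comm {I : Type*} [MetricSpace I] (u v : I) : fE u v = fE v u := by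
  simp [fE, dist_comm]

lemma fE_triangle {I : Type*} [MetricSpace I] (u w v : I) : fE u v ≤ fE u w + fE w v := by
  have hnn : ∀ a b : I, (0:ℝ) ≤ min 1 (dist a b) := fun a b =>
    le_min zero_le_one dist_nonneg
  rw [fE, fE, fE, ← ENNReal.ofReal_add (hnn u w) (hnn w v)]
  refine ENNReal.ofReal_le_ofReal ?_
  rcases le_or_gt 1 (dist u w) with h1 | h1
  · calc min 1 (dist u v) ≤ 1 := min_le_left _ _
      _ = min 1 (dist u w) + 0 := by rw [min_eq_left h1, add_zero]
      _ ≤ min 1 (dist u w) + min 1 (dist w v) := by gcongr; exact hnn w v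
  · rcases le_or_gt 1 (dist w v) with h2 | h2
    · calc min 1 (dist u v) ≤ 1 := min_le_left _ _
        _ = 0 + min 1 (dist w v) := by rw [min_eq_left h2, zero_add]
        _ ≤ min 1 (dist u w) + min 1 (dist w v) := by gcongr; exact hnn u w
    · calc min 1 (dist u v) ≤ dist u v := min_le_right _ _
        _ ≤ dist u w + dist w v := dist_triangle u w v
        _ = min 1 (dist u w) + min 1 (dist w v) := by
            rw [min_eq_right h1.le, min_eq_right h2.le]

lemma measurable_fE {I : Type*} [MetricSpace I] [SecondCountableTopology I]
    [MeasurableSpace I] [BorelSpace I] :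
    Measurable (fun p : I × I => fE p.1 p.2) :=
  ENNReal.measurable_ofReal.comp (measurable_const.min measurable_dist)

/-- A measurable set bound via `varDist`. -/
lemma meas_le_add_varDist {E : Type*} [MeasurableSpace E] (μ ν : Measure E)
    {B : Set E} (hB : MeasurableSet B) : μ B ≤ ν B + varDist μ ν := by
  have h : μ B - ν B ≤ varDist μ ν := le_iSup₂_of_le B hB (le_max_left _ _)
  rcases le_total (μ B) (ν B) with hle | hle
  · exact hle.trans le_self_add
  · calc μ B = ν B + (μ B - ν B) := by rw [add_tsub_cancel_of_le hle]
      _ ≤ ν B + varDist μ ν := by gcongr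

/-- Layer cake comparison: for a measurable `g` with `g ≤ 2`,
`∫ g dμ ≤ ∫ g dν + 2·varDist μ ν`. -/
lemma lintegral_le_lintegral_add_varDist {E : Type*} [MeasurableSpace E]
    (μ ν : Measure E) (g : E → ℝ≥0∞) (hg : Measurable g) (hg2 : ∀ p, g p ≤ 2) :
    ∫⁻ p, g p ∂μ ≤ ∫⁻ p, g p ∂ν + 2 * varDist μ ν := by
  set f : E → ℝ := fun p => (g p).toReal with hf
  have hfm : Measurable f := hg.ennreal_toReal
  have hfle : ∀ p, f p ≤ 2 := by
    intro p
    have h2 : ((2:ℝ≥0∞)).toReal = 2 := by simp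
    calc f p ≤ ((2:ℝ≥0∞)).toReal := ENNReal.toReal_mono (by simp) (hg2 p)
      _ = 2 := h2
  have hof : ∀ p, ENNReal.ofReal (f p) = g p := fun p =>
    ENNReal.ofReal_toReal (lt_of_le_of_lt (hg2 p) (by norm_num)).ne
  have hsetm : ∀ t : ℝ, MeasurableSet {a : E | t < f a} :=
    fun t => measurableSet_lt measurable_const hfm
  have key : ∀ ρ : Measure E, ∫⁻ p, g p ∂ρ = ∫⁻ t in Ioi (0:ℝ), ρ {a : E | t < f a} := by
    intro ρ
    rw [← lintegral_eq_lintegral_meas_lt ρ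
      (Eventually.of_forall fun p => ENNReal.toReal_nonneg) hfm.aemeasurable]
    exact lintegral_congr fun p => (hof p).symm
  have hempty : ∀ t : ℝ, 2 ≤ t → {a : E | t < f a} = (∅ : Set E) := by
    intro t ht
    ext a
    simp only [mem_setOf_eq, mem_empty_iff_false, iff_false, not_lt]
    exact (hfle a).trans ht
  have split : ∀ ρ : Measure E,
      ∫⁻ t in Ioi (0:ℝ), ρ {a : E | t < f a} = ∫⁻ t in Ioc (0:ℝ) 2, ρ {a : E | t < f a} := by
    intro ρ
    rw [← Ioc_union_Ioi_eq_Ioi (by norm_num : (0:ℝ) ≤ 2),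
      lintegral_union measurableSet_Ioi Ioc_disjoint_Ioi_same]
    have h0 : ∫⁻ t in Ioi (2:ℝ), ρ {a : E | t < f a} = 0 := by
      have : ∀ t ∈ Ioi (2:ℝ), ρ {a : E | t < f a} = 0 := by
        intro t ht
        rw [hempty t (le_of_lt ht), measure_empty]
      calc ∫⁻ t in Ioi (2:ℝ), ρ {a : E | t < f a}
          = ∫⁻ _ in Ioi (2:ℝ), (0:ℝ≥0∞) := setLIntegral_congr_fun measurableSet_Ioi
            this
        _ = 0 := lintegral_zero
    rw [h0, add_zero]
  rw [key μ, key ν, split μ]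
  calc ∫⁻ t in Ioc (0:ℝ) 2, μ {a : E | t < f a}
      ≤ ∫⁻ t in Ioc (0:ℝ) 2, (ν {a : E | t < f a} + varDist μ ν) :=
        lintegral_mono fun t => meas_le_add_varDist μ ν (hsetm t)
    _ = (∫⁻ t in Ioc (0:ℝ) 2, ν {a : E | t < f a}) + varDist μ ν * volume (Ioc (0:ℝ) 2) := by
        rw [lintegral_add_right _ measurable_const, setLIntegral_const]
    _ ≤ (∫⁻ t in Ioi (0:ℝ), ν {a : E | t < f a}) + 2 * varDist μ ν := by
        have hvol : volume (Ioc (0:ℝ) 2) = 2 := by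
          rw [Real.volume_Ioc]
          norm_num
        rw [hvol, mul_comm (varDist μ ν) 2]
        gcongr
        exact Ioc_subset_Ioi_self

variable {X I : Type*} [MeasurableSpace X] [MetricSpace I] [SecondCountableTopology I]
  [MeasurableSpace I] [BorelSpace I]

/-- `h κ (x,u) = ∫ (1 ∧ d(u,v)) κ_x(dv)`. -/
noncomputable def hfun (κ : Kernel X I) : X × I → ℝ≥0∞ :=
  fun p => ∫⁻ v, fE p.2 v ∂κ p.1

/-- `c κ κ' (x,u) = ∫∫ (1 ∧ d(w,v)) κ'_x(dv) κ_x(dw)` (independent of `u`). -/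
noncomputable def cfun (κ κ' : Kernel X I) : X × I → ℝ≥0∞ :=
  fun p => ∫⁻ w, ∫⁻ v, fE w v ∂κ' p.1 ∂κ p.1

lemma hfun_meas (κ : Kernel X I) [IsSFiniteKernel κ] : Measurable (hfun κ) := by
  have hm : Measurable fun q : (X × I) × I => fE q.1.2 q.2 :=
    measurable_fE.comp (measurable_fst.snd.prodMk measurable_snd)
  have := Measurable.lintegral_kernel_prod_right'
    (κ := κ.comap Prod.fst measurable_fst) hm
  simp only [Kernel.comap_apply] at this
  exact this

lemma cfun_meas (κ κ' : Kernel X I) [IsSFiniteKernel κ] [IsSFiniteKernel κ'] :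
    Measurable (cfun κ κ') := by
  have h2 : Measurable fun q : X × I => ∫⁻ v, fE q.2 v ∂κ' q.1 := hfun_meas κ'
  have h3 : Measurable fun x : X => ∫⁻ w, (fun q : X × I => ∫⁻ v, fE q.2 v ∂κ' q.1) (x, w) ∂κ x :=
    Measurable.lintegral_kernel_prod_right' (κ := κ) h2
  exact h3.comp measurable_fst

lemma hfun_le_one (κ : Kernel X I) [IsMarkovKernel κ] (p : X × I) : hfun κ p ≤ 1 := by
  calc hfun κ p ≤ ∫⁻ _, 1 ∂κ p.1 := lintegral_mono fun v => fE_le_one _ _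
    _ = 1 := by simp

lemma cfun_le_one (κ κ' : Kernel X I) [IsMarkovKernel κ] [IsMarkovKernel κ'] (p : X × I) :
    cfun κ κ' p ≤ 1 := by
  calc cfun κ κ' p ≤ ∫⁻ _, ∫⁻ _, 1 ∂κ' p.1 ∂κ p.1 :=
        lintegral_mono fun w => lintegral_mono fun v => fE_le_one _ _
    _ = 1 := by simp

/-- Triangle inequality: `c κ κ' ≤ h κ + h κ'` pointwise. -/
lemma cfun_le (κ κ' : Kernel X I) [IsMarkovKernel κ] [IsMarkovKernel κ'] (p : X × I) :
    cfun κ κ' p ≤ hfun κ p + hfun κ' p := by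
  calc cfun κ κ' p
      ≤ ∫⁻ w, ∫⁻ v, (fE w p.2 + fE p.2 v) ∂κ' p.1 ∂κ p.1 :=
        lintegral_mono fun w => lintegral_mono fun v => fE_triangle w p.2 v
    _ = ∫⁻ w, (fE w p.2 + hfun κ' p) ∂κ p.1 := by
        refine lintegral_congr fun w => ?_
        rw [lintegral_add_left measurable_const, lintegral_const]
        simp [hfun]
    _ = (∫⁻ w, fE w p.2 ∂κ p.1) + hfun κ' p := by
        rw [lintegral_add_right _ measurable_const, lintegral_const]
        simp
    _ = hfun κ p + hfun κ' p := by
        have : (∫⁻ w, fE w p.2 ∂κ p.1) = ∫⁻ w, fE p.2 w ∂κ p.1 :=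
          lintegral_congr fun w => fE_comm w p.2
        rw [this]
        rfl

/-- Fubini/symmetry: swapping the two kernels in the double integral. -/
lemma double_swap (P Q : Measure I) [SFinite P] [SFinite Q] :
    ∫⁻ u, ∫⁻ v, fE u v ∂Q ∂P = ∫⁻ w, ∫⁻ v, fE w v ∂P ∂Q := by
  rw [lintegral_lintegral_swap]
  · exact lintegral_congr fun y => lintegral_congr fun x => fE_comm x y
  · exact (measurable_fE.comp (measurable_fst.prodMk measurable_snd)).aemeasurable

end Aux

section Main

open ProbabilityTheory Set

/-- `β(μ) ≤ β(μ') + 2‖μ − μ'‖` for finite Borel measures `μ, μ'` on `X × I`. -/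
theorem beta_le_beta_add_varDist {X I : Type*}
    [MetricSpace X] [CompleteSpace X] [SecondCountableTopology X]
    [MeasurableSpace X] [BorelSpace X]
    [MetricSpace I] [CompleteSpace I] [SecondCountableTopology I]
    [MeasurableSpace I] [BorelSpace I] [Nonempty I]
    (μ μ' : Measure (X × I)) [IsFiniteMeasure μ] [IsFiniteMeasure μ'] :
    beta μ ≤ beta μ' + 2 * varDist μ μ' := by
  set κ : Kernel X I := μ.condKernel with hκ
  set κ' : Kernel X I := μ'.condKernel with hκ'
  set g : X × I → ℝ≥0∞ := fun p => hfun κ p + hfun κ' p - cfun κ κ' p with hg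
  have hgm : Measurable g := ((hfun_meas κ).add (hfun_meas κ')).sub (cfun_meas κ κ')
  have hg2 : ∀ p, g p ≤ 2 := by
    intro p
    calc g p ≤ hfun κ p + hfun κ' p := tsub_le_self
      _ ≤ 1 + 1 := add_le_add (hfun_le_one κ p) (hfun_le_one κ' p)
      _ = 2 := one_add_one_eq_two
  -- the fundamental disintegration identity for `hfun`
  have hbeta : ∀ (ρ : Measure (X × I)) [IsFiniteMeasure ρ],
      ∫⁻ p, hfun ρ.condKernel p ∂ρ = beta ρ := by
    intro ρ _
    rw [← Measure.lintegral_condKernel (ρ := ρ) (hfun_meas ρ.condKernel)]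
    rfl
  -- `∫ hfun κ' dμ = ∫ cfun κ κ' dμ`
  have hI3 : ∫⁻ p, hfun κ' p ∂μ = ∫⁻ p, cfun κ κ' p ∂μ := by
    rw [← Measure.lintegral_condKernel (ρ := μ) (hfun_meas κ'),
      ← Measure.lintegral_condKernel (ρ := μ) (cfun_meas κ κ')]
    refine lintegral_congr fun x => ?_
    have hc : ∀ u : I, cfun κ κ' (x, u) = ∫⁻ w, ∫⁻ v, fE w v ∂κ' x ∂κ x := fun u => rfl
    simp only [hc]
    rw [lintegral_const]
    have : (μ.condKernel x) Set.univ = 1 := measure_univ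
    rw [← hκ, this, mul_one]
    rfl
  -- `∫ hfun κ dμ' = ∫ cfun κ κ' dμ'` (uses Fubini and symmetry of `fE`)
  have hI4 : ∫⁻ p, hfun κ p ∂μ' = ∫⁻ p, cfun κ κ' p ∂μ' := by
    rw [← Measure.lintegral_condKernel (ρ := μ') (hfun_meas κ),
      ← Measure.lintegral_condKernel (ρ := μ') (cfun_meas κ κ')]
    refine lintegral_congr fun x => ?_
    have hc : ∀ u : I, cfun κ κ' (x, u) = ∫⁻ w, ∫⁻ v, fE w v ∂κ' x ∂κ x := fun u => rfl
    simp only [hc]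
    rw [lintegral_const]
    have huniv : (μ'.condKernel x) Set.univ = 1 := measure_univ
    rw [← hκ', huniv, mul_one]
    calc ∫⁻ u, hfun κ (x, u) ∂κ' x = ∫⁻ u, ∫⁻ v, fE u v ∂κ x ∂κ' x := rfl
      _ = ∫⁻ w, ∫⁻ v, fE w v ∂κ' x ∂κ x := double_swap (κ' x) (κ x)
  -- finiteness of the correction term
  have hcfin : ∀ (ρ : Measure (X × I)) [IsFiniteMeasure ρ],
      ∫⁻ p, cfun κ κ' p ∂ρ ≠ ∞ := by
    intro ρ _
    have : ∫⁻ p, cfun κ κ' p ∂ρ ≤ ∫⁻ _, 1 ∂ρ :=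
      lintegral_mono fun p => cfun_le_one κ κ' p
    rw [lintegral_one] at this
    exact (lt_of_le_of_lt this (measure_lt_top ρ _)).ne
  -- `∫ g dμ = β(μ)`
  have hEμ : ∫⁻ p, g p ∂μ = beta μ := by
    rw [hg]
    rw [lintegral_sub (cfun_meas κ κ') (hcfin μ)
      (Eventually.of_forall fun p => cfun_le κ κ' p)]
    rw [lintegral_add_left (hfun_meas κ), hI3, ENNReal.add_sub_cancel_right (hcfin μ),
      hκ, hbeta μ]
  -- `∫ g dμ' = β(μ')`
  have hEμ' : ∫⁻ p, g p ∂μ' = beta μ' := by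
    rw [hg]
    rw [lintegral_sub (cfun_meas κ κ') (hcfin μ')
      (Eventually.of_forall fun p => cfun_le κ κ' p)]
    rw [lintegral_add_left (hfun_meas κ), hI4, add_comm,
      ENNReal.add_sub_cancel_right (hcfin μ'), hκ', hbeta μ']
  calc beta μ = ∫⁻ p, g p ∂μ := hEμ.symm
    _ ≤ ∫⁻ p, g p ∂μ' + 2 * varDist μ μ' :=
      lintegral_le_lintegral_add_varDist μ μ' g hgm hg2
    _ = beta μ' + 2 * varDist μ μ' := by rw [hEμ']

end Main
end

section
/- Let (X,r) and (I,d) be complete separable metric spaces, δ, ε > 0, and μ a finite Borel measure on X×I such that (μ⊗μ)((X×I)² ∖ A^X_{2δ,ε}) = 0. Then β(μ) ≤ ε · μ(X×I). -/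
open MeasureTheory Filter Topology ENNReal

/-- The set `A^X_{δ,ε} = {((x₁,u₁),(x₂,u₂)) | r(x₁,x₂) ≥ δ or d(u₁,u₂) ≤ ε}`. -/
def Aset {X I : Type*} [PseudoMetricSpace X] [PseudoMetricSpace I] (δ : ℝ) (ε : ℝ≥0∞) :
    Set ((X × I) × (X × I)) :=
  {p | δ ≤ dist p.1.1 p.2.1 ∨ ENNReal.ofReal (dist p.1.2 p.2.2) ≤ ε}

/-- If `μ(B ×ˢ S) = 0` then a.e. `x ∈ B` has `K_x S = 0`. -/
lemma condKernel_null_of_null {X I : Type*}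
    [MeasurableSpace X] [StandardBorelSpace X]
    [MetricSpace I] [MeasurableSpace I] [StandardBorelSpace I] [Nonempty I]
    (μ : Measure (X × I)) [IsFiniteMeasure μ] {B : Set X} {S : Set I}
    (hB : MeasurableSet B) (hS : MeasurableSet S) (h : μ (B ×ˢ S) = 0) :
    ∀ᵐ x ∂μ.fst, x ∈ B → μ.condKernel x S = 0 := by
  rw [← μ.disintegrate μ.condKernel, Measure.compProd_apply_prod hB hS] at h
  exact (setLIntegral_eq_zero_iff hB (ProbabilityTheory.Kernel.measurable_coe _ hS)).mp h

/-- If `μ ⊗ μ` is supported on `A^X_{2δ,ε}`, then `β(μ) ≤ ε · μ(X×I)`. -/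
theorem beta_le_of_prod_supported {X I : Type*}
    [MetricSpace X] [CompleteSpace X] [SecondCountableTopology X]
    [MeasurableSpace X] [BorelSpace X]
    [MetricSpace I] [CompleteSpace I] [SecondCountableTopology I]
    [MeasurableSpace I] [BorelSpace I] [Nonempty I]
    (δ ε : ℝ) (hδ : 0 < δ) (hε : 0 < ε)
    (μ : Measure (X × I)) [IsFiniteMeasure μ]
    (hsupp : (μ.prod μ) (Aset (2 * δ) (ENNReal.ofReal ε))ᶜ = 0) :
    beta μ ≤ ENNReal.ofReal ε * μ Set.univ := by
  rcases isEmpty_or_nonempty X with hX | hX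
  · have : μ.fst = 0 := by
      haveI : IsEmpty (X × I) := by infer_instance
      have : μ = 0 := Subsingleton.elim _ _
      simp [Measure.fst, this]
    simp [beta, this]
  -- dense sequences
  set xs : ℕ → X := TopologicalSpace.denseSeq X with hxs
  have hxsd : DenseRange xs := TopologicalSpace.denseRange_denseSeq X
  set us : ℕ → I := TopologicalSpace.denseSeq I with hus
  have husd : DenseRange us := TopologicalSpace.denseRange_denseSeq I
  -- radii
  set ρ : ℕ → ℝ := fun j => 1 / (j + 1) with hρ
  have hρpos : ∀ j, 0 < ρ j := fun j => by positivity
  -- the sets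
  set B : ℕ → Set X := fun n => Metric.ball (xs n) δ with hB
  set C : ℕ → ℕ → Set I := fun j k => Metric.ball (us k) (ρ j) with hC
  set H : ℕ → ℕ → Set I := fun j k => {v | ε + ρ j < dist (us k) v} with hH
  have hBm : ∀ n, MeasurableSet (B n) := fun n => Metric.isOpen_ball.measurableSet
  have hCm : ∀ j k, MeasurableSet (C j k) := fun j k => Metric.isOpen_ball.measurableSet
  have hHm : ∀ j k, MeasurableSet (H j k) := by
    intro j k
    have : IsOpen (H j k) := by
      have : H j k = (fun v => dist (us k) v) ⁻¹' (Set.Ioi (ε + ρ j)) := rfl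
      rw [this]
      exact isOpen_Ioi.preimage (Continuous.dist continuous_const continuous_id)
    exact this.measurableSet
  -- key rectangle estimate
  have key : ∀ n j k, μ (B n ×ˢ C j k) = 0 ∨ μ (B n ×ˢ H j k) = 0 := by
    intro n j k
    have hsub : ((B n ×ˢ C j k) ×ˢ (B n ×ˢ H j k)) ⊆ (Aset (2 * δ) (ENNReal.ofReal ε))ᶜ := by
      rintro ⟨⟨x₁, u₁⟩, ⟨x₂, u₂⟩⟩ ⟨⟨hx₁, hu₁⟩, hx₂, hu₂⟩
      simp only [Aset, Set.mem_compl_iff, Set.mem_setOf_eq, not_or, not_le]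
      constructor
      · simp only [hB, Metric.mem_ball] at hx₁ hx₂
        have t := dist_triangle x₁ (xs n) x₂
        rw [dist_comm (xs n) x₂] at t
        linarith
      · have hd : ε < dist u₁ u₂ := by
          have h1 : dist (us k) u₂ ≤ dist (us k) u₁ + dist u₁ u₂ := dist_triangle _ _ _
          have h2 : dist (us k) u₁ < ρ j := Metric.mem_ball'.mp hu₁
          have h3 : ε + ρ j < dist (us k) u₂ := hu₂
          linarith
        rw [ENNReal.ofReal_lt_ofReal_iff (lt_trans hε hd)]
        exact hd
    have := measure_mono_null hsub hsupp
    rw [Measure.prod_prod] at this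
    rcases mul_eq_zero.mp this with h | h
    · exact Or.inl h
    · exact Or.inr h
  -- a.e. statement about the kernel
  have hae : ∀ᵐ x ∂μ.fst, ∀ n j k, x ∈ B n →
      (μ.condKernel x (C j k) = 0 ∨ μ.condKernel x (H j k) = 0) := by
    rw [ae_all_iff]
    intro n
    rw [ae_all_iff]
    intro j
    rw [ae_all_iff]
    intro k
    rcases key n j k with h | h
    · filter_upwards [condKernel_null_of_null μ (hBm n) (hCm j k) h] with x hx hxB
      exact Or.inl (hx hxB)
    · filter_upwards [condKernel_null_of_null μ (hBm n) (hHm j k) h] with x hx hxB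
      exact Or.inr (hx hxB)
  -- for a.e. x, the product kernel gives no mass to {ε < dist}
  have hprod : ∀ᵐ x ∂μ.fst,
      ((μ.condKernel x).prod (μ.condKernel x)) {p : I × I | ε < dist p.1 p.2} = 0 := by
    filter_upwards [hae] with x hx
    -- find n with x ∈ B n
    obtain ⟨n, hn⟩ := Metric.denseRange_iff.mp hxsd x δ hδ
    have hxBn : x ∈ B n := by
      rw [hB]; simpa [Metric.mem_ball] using hn
    have hcover : {p : I × I | ε < dist p.1 p.2} ⊆ ⋃ j, ⋃ k, (C j k ×ˢ H j k) := by
      rintro ⟨u, v⟩ huv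
      simp only [Set.mem_setOf_eq] at huv
      -- choose j with 2 ρ j < dist u v - ε
      obtain ⟨j, hj⟩ := exists_nat_gt (2 / (dist u v - ε))
      have hsub : 0 < dist u v - ε := by linarith
      have hρj : 2 * ρ j < dist u v - ε := by
        have hpos : (0 : ℝ) < (j : ℝ) + 1 := by positivity
        have hρval : ρ j = 1 / ((j : ℝ) + 1) := rfl
        rw [div_lt_iff₀ hsub] at hj
        rw [hρval]
        rw [show 2 * (1 / ((j : ℝ) + 1)) = 2 / ((j : ℝ) + 1) by ring, div_lt_iff₀ hpos]
        nlinarith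
      obtain ⟨k, hk⟩ := Metric.denseRange_iff.mp husd u (ρ j) (hρpos j)
      refine Set.mem_iUnion.mpr ⟨j, Set.mem_iUnion.mpr ⟨k, ?_, ?_⟩⟩
      · rw [hC]; simpa [Metric.mem_ball, dist_comm] using hk
      · rw [hH]
        simp only [Set.mem_setOf_eq]
        have : dist u v ≤ dist u (us k) + dist (us k) v := dist_triangle _ _ _
        have hk' : dist u (us k) < ρ j := hk
        linarith
    refine measure_mono_null hcover ?_
    refine measure_iUnion_null fun j => measure_iUnion_null fun k => ?_
    rw [Measure.prod_prod]
    rcases hx n j k hxBn with h | h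
    · rw [h, zero_mul]
    · rw [h, mul_zero]
  -- conclude the inner double integral bound a.e.
  have hinner : ∀ᵐ x ∂μ.fst,
      (∫⁻ u, ∫⁻ v, ENNReal.ofReal (min 1 (dist u v)) ∂(μ.condKernel x) ∂(μ.condKernel x))
        ≤ ENNReal.ofReal ε := by
    filter_upwards [hprod] with x hx
    have hfm : Measurable fun p : I × I => ENNReal.ofReal (min 1 (dist p.1 p.2)) :=
      (measurable_const.min measurable_dist).ennreal_ofReal
    have heq : (∫⁻ u, ∫⁻ v, ENNReal.ofReal (min 1 (dist u v))
          ∂(μ.condKernel x) ∂(μ.condKernel x))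
        = ∫⁻ p, ENNReal.ofReal (min 1 (dist p.1 p.2))
          ∂((μ.condKernel x).prod (μ.condKernel x)) :=
      (lintegral_prod _ hfm.aemeasurable).symm
    rw [heq]
    have hble : ∀ᵐ p ∂((μ.condKernel x).prod (μ.condKernel x)),
        ENNReal.ofReal (min 1 (dist p.1 p.2)) ≤ ENNReal.ofReal ε := by
      rw [ae_iff]
      refine measure_mono_null ?_ hx
      intro p hp
      simp only [Set.mem_setOf_eq, not_le] at hp
      simp only [Set.mem_setOf_eq]
      by_contra hle
      push_neg at hle
      have : min 1 (dist p.1 p.2) ≤ ε := le_trans (min_le_right _ _) hle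
      exact absurd (ENNReal.ofReal_le_ofReal this) (not_le.mpr hp)
    calc ∫⁻ p, ENNReal.ofReal (min 1 (dist p.1 p.2)) ∂((μ.condKernel x).prod (μ.condKernel x))
        ≤ ∫⁻ _, ENNReal.ofReal ε ∂((μ.condKernel x).prod (μ.condKernel x)) :=
          lintegral_mono_ae hble
      _ = ENNReal.ofReal ε := by
          rw [lintegral_const]
          simp
  -- final computation
  calc beta μ ≤ ∫⁻ _, ENNReal.ofReal ε ∂μ.fst := lintegral_mono_ae hinner
    _ = ENNReal.ofReal ε * μ.fst Set.univ := lintegral_const _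
    _ = ENNReal.ofReal ε * μ Set.univ := by rw [Measure.fst_univ]
end

section
/- Let (X,r) and (I,d) be complete separable metric spaces, δ, ε > 0, and μ a finite Borel measure on X×I with μ ∈ M^X_{2δ,ε}. Then β(μ) ≤ ε·(μ(X×I) + 2). -/
open MeasureTheory Filter Topology ENNReal

/-- `μ ∈ M^X_{δ,ε}`: there is a finite measure `μ' ≤ μ` with `‖μ − μ'‖ ≤ ε` such that
`μ' ⊗ μ'` is supported on `A^X_{δ,ε}`. -/
def memM {X I : Type*} [PseudoMetricSpace X] [PseudoMetricSpace I]
    [MeasurableSpace X] [MeasurableSpace I]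
    (μ : Measure (X × I)) (δ : ℝ) (ε : ℝ≥0∞) : Prop :=
  ∃ μ' : Measure (X × I), IsFiniteMeasure μ' ∧ μ' ≤ μ ∧ varDist μ μ' ≤ ε ∧
    (μ'.prod μ') (Aset δ ε)ᶜ = 0

/-- Bound a finite measure by a submeasure plus the total-mass defect. -/
lemma meas_le_sub_bound {α : Type*} [MeasurableSpace α] (m m' : Measure α)
    [IsFiniteMeasure m] [IsFiniteMeasure m'] (h : m' ≤ m) (s : Set α) :
    m s ≤ m' s + (m - m') Set.univ := by
  conv_lhs => rw [← Measure.sub_add_cancel_of_le h]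
  rw [Measure.add_apply]
  exact add_le_add_left (measure_mono (Set.subset_univ s)) _ |>.trans_eq (add_comm _ _)

/-- If `μ ∈ M^X_{2δ,ε}`, then `β(μ) ≤ ε · (μ(X×I) + 2)`. -/
theorem beta_le_of_memM {X I : Type*}
    [MetricSpace X] [CompleteSpace X] [SecondCountableTopology X]
    [MeasurableSpace X] [BorelSpace X]
    [MetricSpace I] [CompleteSpace I] [SecondCountableTopology I]
    [MeasurableSpace I] [BorelSpace I] [Nonempty I]
    (δ ε : ℝ) (hδ : 0 < δ) (hε : 0 < ε)
    (μ : Measure (X × I)) [IsFiniteMeasure μ]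
    (hM : memM μ (2 * δ) (ENNReal.ofReal ε)) :
    beta μ ≤ ENNReal.ofReal ε * (μ Set.univ + 2) := by
  classical
  obtain ⟨μ', hμ'fin, hle, hvar, hnull⟩ := hM
  haveI := hμ'fin
  rcases isEmpty_or_nonempty X with hX | hX
  · have h0 : μ.fst = 0 := by
      ext s hs
      simp [Set.eq_empty_of_isEmpty s]
    rw [beta, h0, lintegral_zero_measure]
    exact bot_le
  set ν := μ.fst with hν
  set K := μ.condKernel with hK
  set ρ : X × I → ℝ≥0∞ := fun p => min (μ'.rnDeriv μ p) 1 with hρ_def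
  have hρ_meas : Measurable ρ := (Measure.measurable_rnDeriv _ _).min measurable_const
  have hρ_le1 : ∀ p, ρ p ≤ 1 := fun p => min_le_right _ _
  set L : X → Measure I := fun x => (K x).withDensity (fun u => ρ (x, u)) with hL_def
  have hLapply : ∀ x (C : Set I), MeasurableSet C → L x C = ∫⁻ u in C, ρ (x, u) ∂(K x) :=
    fun x C hC => withDensity_apply _ hC
  have hLK : ∀ x, L x ≤ K x := by
    intro x
    refine Measure.le_iff.2 fun s hs => ?_
    rw [hLapply x s hs]
    calc ∫⁻ u in s, ρ (x, u) ∂(K x) ≤ ∫⁻ u in s, 1 ∂(K x) :=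
          lintegral_mono fun u => hρ_le1 _
      _ = K x s := setLIntegral_one s
  have hKuniv : ∀ x, K x Set.univ = 1 := fun x => measure_univ
  have hLuniv_le : ∀ x, L x Set.univ ≤ 1 := fun x => by
    rw [← hKuniv x]; exact Measure.le_iff'.1 (hLK x) _
  -- μ.withDensity ρ = μ'
  have habs : μ' ≪ μ := hle.absolutelyContinuous
  have hwd : μ.withDensity ρ = μ' := by
    have h2 : (fun p => μ'.rnDeriv μ p) =ᵐ[μ] ρ :=
      (Measure.rnDeriv_le_one_of_le hle).mono fun p hp => by
        have hp' : μ'.rnDeriv μ p ≤ 1 := by simpa using hp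
        simp only [hρ_def]
        exact (min_eq_left hp').symm
    rw [← withDensity_congr_ae h2, Measure.withDensity_rnDeriv_eq _ _ habs]
  -- the disintegration identity for L
  have hC : ∀ (B : Set X) (C : Set I), MeasurableSet B → MeasurableSet C →
      ∫⁻ x in B, L x C ∂ν = μ' (B ×ˢ C) := by
    intro B C hB hCm
    have hmg : Measurable ((B ×ˢ C).indicator ρ) := hρ_meas.indicator (hB.prod hCm)
    have key : ∫⁻ x, ∫⁻ u, (B ×ˢ C).indicator ρ (x, u) ∂(K x) ∂ν
        = ∫⁻ p, (B ×ˢ C).indicator ρ p ∂μ := Measure.lintegral_condKernel hmg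
    calc ∫⁻ x in B, L x C ∂ν
        = ∫⁻ x, B.indicator (fun x => L x C) x ∂ν := (lintegral_indicator hB _).symm
      _ = ∫⁻ x, ∫⁻ u, (B ×ˢ C).indicator ρ (x, u) ∂(K x) ∂ν := by
          refine lintegral_congr fun x => ?_
          by_cases hx : x ∈ B
          · rw [Set.indicator_of_mem hx, hLapply x C hCm, ← lintegral_indicator hCm]
            refine lintegral_congr fun u => ?_
            by_cases hu : u ∈ C
            · rw [Set.indicator_of_mem hu, Set.indicator_of_mem (Set.mk_mem_prod hx hu)]
            · rw [Set.indicator_of_notMem hu,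
                Set.indicator_of_notMem (fun h => hu h.2)]
          · have hz : ∀ u : I, (B ×ˢ C).indicator ρ (x, u) = 0 := fun u =>
              Set.indicator_of_notMem (fun h => hx h.1) _
            rw [Set.indicator_of_notMem hx]
            symm
            calc ∫⁻ u, (B ×ˢ C).indicator ρ (x, u) ∂(K x)
                = ∫⁻ _, 0 ∂(K x) := lintegral_congr hz
              _ = 0 := lintegral_zero
      _ = ∫⁻ p, (B ×ˢ C).indicator ρ p ∂μ := key
      _ = ∫⁻ p in B ×ˢ C, ρ p ∂μ := lintegral_indicator (hB.prod hCm) _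
      _ = μ' (B ×ˢ C) := by rw [← hwd, withDensity_apply _ (hB.prod hCm)]
  -- the set D
  set D : Set (I × I) := {p | ε < dist p.1 p.2} with hD
  have hDopen : IsOpen D := isOpen_lt continuous_const (continuous_fst.dist continuous_snd)
  have hDmeas : MeasurableSet D := hDopen.measurableSet
  have hDu_meas : ∀ u : I, MeasurableSet {v : I | ε < dist u v} := fun u =>
    (isOpen_lt continuous_const (continuous_const.dist continuous_id)).measurableSet
  set Φ : X → ℝ≥0∞ := fun x => ∫⁻ u, L x {v | ε < dist u v} ∂(L x) with hΦ_def
  -- partition of X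
  obtain ⟨cs, hcs⟩ := TopologicalSpace.exists_dense_seq X
  set E : ℕ → Set X := fun n => Metric.ball (cs n) δ \ ⋃ m < n, Metric.ball (cs m) δ with hE
  have hEmeas : ∀ n, MeasurableSet (E n) :=
    fun n => Metric.isOpen_ball.measurableSet.diff
      (MeasurableSet.biUnion (Set.to_countable _) fun m _ => Metric.isOpen_ball.measurableSet)
  have hEball : ∀ n, E n ⊆ Metric.ball (cs n) δ := fun n => Set.diff_subset
  have hEcover : ∀ x : X, ∃ n, x ∈ E n := by
    intro x
    have hball : ∃ n, x ∈ Metric.ball (cs n) δ := by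
      obtain ⟨n, hn⟩ := Metric.denseRange_iff.1 hcs x δ hδ
      exact ⟨n, by simpa [Metric.mem_ball, dist_comm] using hn⟩
    refine ⟨Nat.find hball, Nat.find_spec hball, ?_⟩
    simp only [Set.mem_iUnion, not_exists]
    intro m hm
    exact Nat.find_min hball hm
  -- per piece: Φ vanishes a.e.
  have key : ∀ n, ∀ᵐ x ∂ν, x ∈ E n → Φ x = 0 := by
    intro n
    set s : Set (X × I) := (E n) ×ˢ (Set.univ : Set I) with hs_def
    have hs_meas : MeasurableSet s := (hEmeas n).prod MeasurableSet.univ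
    set lam : Measure I := (μ'.restrict s).map Prod.snd with hlam
    have hlam_apply : ∀ C : Set I, MeasurableSet C → lam C = μ' (E n ×ˢ C) := by
      intro C hCm
      rw [hlam, Measure.map_apply measurable_snd hCm,
        Measure.restrict_apply (measurable_snd hCm)]
      congr 1
      ext p
      simp [hs_def, Set.mem_prod, and_comm]
    have hprod0 : (lam.prod lam) D = 0 := by
      have hmaps : lam.prod lam
          = ((μ'.prod μ').restrict (s ×ˢ s)).map (Prod.map Prod.snd Prod.snd) := by
        rw [hlam, Measure.map_prod_map _ _ measurable_snd measurable_snd,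
          Measure.prod_restrict]
      rw [hmaps, Measure.map_apply (measurable_snd.prodMap measurable_snd) hDmeas,
        Measure.restrict_apply ((measurable_snd.prodMap measurable_snd) hDmeas)]
      refine measure_mono_null ?_ hnull
      rintro ⟨⟨x, u⟩, ⟨y, v⟩⟩ ⟨hpre, hmem⟩
      have hx : x ∈ E n := hmem.1.1
      have hy : y ∈ E n := hmem.2.1
      have hduv : ε < dist u v := hpre
      intro hA
      rcases hA with h1 | h2
      · have h1' : dist x y < 2 * δ := by
          calc dist x y ≤ dist x (cs n) + dist (cs n) y := dist_triangle _ _ _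
            _ < δ + δ := add_lt_add (hEball n hx) (by
                rw [dist_comm]; exact hEball n hy)
            _ = 2 * δ := by ring
        exact absurd h1 (not_le.2 h1')
      · exact absurd h2 (not_le.2 (ENNReal.ofReal_lt_ofReal_iff (hε.trans hduv)
          |>.2 hduv))
    -- the "support" of lam
    set Bas := TopologicalSpace.countableBasis I with hBas
    set S : Set I := {v | ∀ t ∈ Bas, v ∈ t → lam t ≠ 0} with hS
    have hScompl : Sᶜ = ⋃ t ∈ {t | t ∈ Bas ∧ lam t = 0}, t := by
      ext v
      simp only [hS, Set.mem_compl_iff, Set.mem_setOf_eq, not_forall, Set.mem_iUnion]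
      constructor
      · rintro ⟨t, ht, hv, h0⟩
        exact ⟨t, ⟨ht, not_not.1 h0⟩, hv⟩
      · rintro ⟨t, ⟨ht, h0⟩, hv⟩
        exact ⟨t, ht, hv, not_not.2 h0⟩
    have hScompl_open : IsOpen Sᶜ := by
      rw [hScompl]
      exact isOpen_biUnion fun t ht => TopologicalSpace.isOpen_of_mem_countableBasis ht.1
    have hSmeas : MeasurableSet S := hScompl_open.measurableSet.of_compl
    have hlamS : lam Sᶜ = 0 := by
      rw [hScompl]
      refine measure_biUnion_null_iff
        ((TopologicalSpace.countable_countableBasis I).mono fun t ht => ht.1) |>.2 ?_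
      exact fun t ht => ht.2
    have hSdist : ∀ u ∈ S, ∀ v ∈ S, dist u v ≤ ε := by
      intro u hu v hv
      by_contra h
      push_neg at h
      have hmem : (u, v) ∈ D := h
      obtain ⟨t0, ht0, hmemt0, hsub⟩ :=
        ((TopologicalSpace.isBasis_countableBasis I).prod
          (TopologicalSpace.isBasis_countableBasis I)).exists_subset_of_mem_open hmem hDopen
      obtain ⟨t1, ht1, t2, ht2, rfl⟩ := ht0
      have hz : lam t1 * lam t2 = 0 := by
        have := measure_mono_null hsub hprod0
        rwa [Measure.prod_prod] at this
      rcases mul_eq_zero.1 hz with h1 | h2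
      · exact hu t1 ht1 hmemt0.1 h1
      · exact hv t2 ht2 hmemt0.2 h2
    -- a.e. on E n, L x is carried by S
    have hint : ∫⁻ x in E n, L x Sᶜ ∂ν = 0 := by
      rw [hC _ _ (hEmeas n) hSmeas.compl, ← hlam_apply _ hSmeas.compl, hlamS]
    have hmeasLS : Measurable fun x => L x Sᶜ := by
      have heq : (fun x => L x Sᶜ)
          = fun x => ∫⁻ u, (Set.univ ×ˢ Sᶜ).indicator ρ (x, u) ∂(K x) := by
        funext x
        rw [hLapply x Sᶜ hSmeas.compl, ← lintegral_indicator hSmeas.compl]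
        refine lintegral_congr fun u => ?_
        by_cases hu : u ∈ Sᶜ
        · rw [Set.indicator_of_mem hu,
            Set.indicator_of_mem (Set.mk_mem_prod (Set.mem_univ x) hu)]
        · rw [Set.indicator_of_notMem hu, Set.indicator_of_notMem (fun hp => hu hp.2)]
      rw [heq]
      exact Measurable.lintegral_kernel_prod_right
        (hρ_meas.indicator (MeasurableSet.univ.prod hSmeas.compl))
    have hae : ∀ᵐ x ∂ν.restrict (E n), L x Sᶜ = 0 := by
      have h0 := (lintegral_eq_zero_iff hmeasLS).1 hint
      filter_upwards [h0] with x hx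
      simpa using hx
    rw [ae_restrict_iff' (hEmeas n)] at hae
    filter_upwards [hae] with x hx hxE
    have hLS : L x Sᶜ = 0 := hx hxE
    have haeS : ∀ᵐ u ∂(L x), u ∈ S := by
      rw [ae_iff]
      exact hLS
    show ∫⁻ u, L x {v | ε < dist u v} ∂(L x) = 0
    have heq : ∫⁻ u, L x {v | ε < dist u v} ∂(L x) = ∫⁻ _, 0 ∂(L x) := by
      refine lintegral_congr_ae (haeS.mono fun u hu => ?_)
      refine measure_mono_null (fun v hv => ?_) hLS
      intro hvS
      exact absurd (hSdist u hu v hvS) (not_le.2 hv)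
    rw [heq, lintegral_zero]
  have hΦ0 : ∀ᵐ x ∂ν, Φ x = 0 := by
    have hall := (ae_all_iff).2 key
    filter_upwards [hall] with x hx
    obtain ⟨n, hn⟩ := hEcover x
    exact hx n hn
  -- main chain
  set a := ENNReal.ofReal ε with ha
  -- inner bound with K
  have hinner : ∀ x, ∫⁻ u, ∫⁻ v, ENNReal.ofReal (min 1 (dist u v)) ∂(K x) ∂(K x)
      ≤ a + ∫⁻ u, K x {v | ε < dist u v} ∂(K x) := by
    intro x
    have hpt : ∀ u v : I, ENNReal.ofReal (min 1 (dist u v))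
        ≤ a + ({v | ε < dist u v} : Set I).indicator (1 : I → ℝ≥0∞) v := by
      intro u v
      by_cases h : ε < dist u v
      · simp only [Set.indicator_apply, Set.mem_setOf_eq, if_pos h, Pi.one_apply]
        calc ENNReal.ofReal (min 1 (dist u v)) ≤ 1 :=
              ENNReal.ofReal_le_one.2 (min_le_left _ _)
          _ ≤ a + 1 := le_add_self
      · simp only [Set.indicator_apply, Set.mem_setOf_eq, if_neg h, add_zero]
        exact ENNReal.ofReal_le_ofReal ((min_le_right _ _).trans (not_lt.1 h))
    calc ∫⁻ u, ∫⁻ v, ENNReal.ofReal (min 1 (dist u v)) ∂(K x) ∂(K x)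
        ≤ ∫⁻ u, ∫⁻ v, (a + ({v | ε < dist u v} : Set I).indicator
            (1 : I → ℝ≥0∞) v) ∂(K x) ∂(K x) :=
          lintegral_mono fun u => lintegral_mono fun v => hpt u v
      _ = ∫⁻ u, (a + K x {v | ε < dist u v}) ∂(K x) := by
          refine lintegral_congr fun u => ?_
          rw [lintegral_add_left measurable_const, lintegral_const, hKuniv, mul_one,
            lintegral_indicator_one (hDu_meas u)]
      _ = a + ∫⁻ u, K x {v | ε < dist u v} ∂(K x) := by
          rw [lintegral_add_left measurable_const, lintegral_const, hKuniv, mul_one]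
  -- compare K with L
  have hcmp : ∀ x, ∫⁻ u, K x {v | ε < dist u v} ∂(K x)
      ≤ Φ x + 2 * (1 - L x Set.univ) := by
    intro x
    haveI : IsFiniteMeasure (L x) := isFiniteMeasure_of_le (K x) (hLK x)
    have hdec : (K x - L x) + L x = K x := Measure.sub_add_cancel_of_le (hLK x)
    set c := (K x - L x) Set.univ with hc_def
    have hcuniv : c = 1 - L x Set.univ := by
      rw [hc_def, Measure.sub_apply MeasurableSet.univ (hLK x), hKuniv]
    have step1 : ∀ u : I, K x {v | ε < dist u v} ≤ L x {v | ε < dist u v} + c := by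
      intro u
      conv_lhs => rw [← hdec]
      rw [Measure.add_apply]
      rw [add_comm]
      exact add_le_add_right (measure_mono (Set.subset_univ _)) _
    have step2 : ∫⁻ u, L x {v | ε < dist u v} ∂(K x) ≤ Φ x + c := by
      conv_lhs => rw [← hdec]
      rw [lintegral_add_measure]
      rw [add_comm (Φ x) c]
      refine add_le_add ?_ le_rfl
      calc ∫⁻ u, L x {v | ε < dist u v} ∂(K x - L x)
          ≤ ∫⁻ _, 1 ∂(K x - L x) := lintegral_mono fun u =>
            (measure_mono (Set.subset_univ _)).trans (hLuniv_le x)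
        _ = c := lintegral_one
    calc ∫⁻ u, K x {v | ε < dist u v} ∂(K x)
        ≤ ∫⁻ u, (L x {v | ε < dist u v} + c) ∂(K x) := lintegral_mono step1
      _ = ∫⁻ u, L x {v | ε < dist u v} ∂(K x) + c := by
          rw [lintegral_add_right _ measurable_const, lintegral_const, hKuniv, mul_one]
      _ ≤ (Φ x + c) + c := add_le_add_left step2 _
      _ = Φ x + 2 * c := by ring
      _ = Φ x + 2 * (1 - L x Set.univ) := by rw [hcuniv]
  -- measurability of the defect
  have hmeasLuniv : Measurable fun x => L x Set.univ := by
    have heq : (fun x => L x Set.univ) = fun x => ∫⁻ u, ρ (x, u) ∂(K x) := by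
      funext x
      rw [hLapply x Set.univ MeasurableSet.univ, Measure.restrict_univ]
    rw [heq]
    exact Measurable.lintegral_kernel_prod_right hρ_meas
  -- the total-mass defect is at most ε
  have hdefect : ∫⁻ x, (1 - L x Set.univ) ∂ν ≤ a := by
    have hLint : ∫⁻ x, L x Set.univ ∂ν = μ' Set.univ := by
      have := hC Set.univ Set.univ MeasurableSet.univ MeasurableSet.univ
      rwa [Measure.restrict_univ, Set.univ_prod_univ] at this
    have hfin : ∫⁻ x, L x Set.univ ∂ν ≠ ∞ := by
      rw [hLint]; exact measure_ne_top _ _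
    have hsub : ∫⁻ x, ((1 : ℝ≥0∞) - L x Set.univ) ∂ν
        = ∫⁻ _, (1 : ℝ≥0∞) ∂ν - ∫⁻ x, L x Set.univ ∂ν :=
      lintegral_sub hmeasLuniv hfin (Eventually.of_forall fun x => hLuniv_le x)
    rw [hsub, lintegral_one, hLint]
    have hνuniv : ν Set.univ = μ Set.univ := by
      rw [hν, Measure.fst_apply MeasurableSet.univ, Set.preimage_univ]
    rw [hνuniv]
    calc μ Set.univ - μ' Set.univ
        ≤ max (μ Set.univ - μ' Set.univ) (μ' Set.univ - μ Set.univ) := le_max_left _ _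
      _ ≤ varDist μ μ' := by
          refine le_iSup_of_le Set.univ ?_
          exact le_iSup_of_le MeasurableSet.univ le_rfl
      _ ≤ a := hvar
  have hνuniv : ν Set.univ = μ Set.univ := by
    rw [hν, Measure.fst_apply MeasurableSet.univ, Set.preimage_univ]
  -- put everything together
  calc beta μ = ∫⁻ x, ∫⁻ u, ∫⁻ v, ENNReal.ofReal (min 1 (dist u v)) ∂(K x) ∂(K x) ∂ν := rfl
    _ ≤ ∫⁻ x, (a + 2 * (1 - L x Set.univ)) ∂ν := by
        refine lintegral_mono_ae ?_
        filter_upwards [hΦ0] with x hx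
        calc ∫⁻ u, ∫⁻ v, ENNReal.ofReal (min 1 (dist u v)) ∂(K x) ∂(K x)
            ≤ a + ∫⁻ u, K x {v | ε < dist u v} ∂(K x) := hinner x
          _ ≤ a + (Φ x + 2 * (1 - L x Set.univ)) := add_le_add_right (hcmp x) _
          _ = a + 2 * (1 - L x Set.univ) := by rw [hx, zero_add]
    _ = a * ν Set.univ + 2 * ∫⁻ x, (1 - L x Set.univ) ∂ν := by
        rw [lintegral_add_left measurable_const, lintegral_const,
          lintegral_const_mul 2 (f := fun x => 1 - L x Set.univ) (measurable_const.sub hmeasLuniv)]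
    _ ≤ a * μ Set.univ + 2 * a := by
        rw [hνuniv]
        exact add_le_add_right (mul_le_mul_right hdefect 2) _
    _ = ENNReal.ofReal ε * (μ Set.univ + 2) := by rw [ha]; ring
end

section
/- Let (E,ρ) and (I,d) be complete separable metric spaces and equip E×I with the metric ρ+d. Let δ, ε > 0 and let μ, μ̂ be finite Borel measures on E×I with μ ∈ M^E_{δ,ε}. If δ' satisfies dPr(μ,μ̂) < δ' < δ/2, then μ̂ ∈ M^E_{δ−2δ', ε+2δ'}. -/
open MeasureTheory Filter Topology ENNReal

/-- The open `ε`-neighbourhood of `A ⊆ E × I` with respect to the sum metric `ρ + d`. -/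
def sumThick {E I : Type*} [PseudoMetricSpace E] [PseudoMetricSpace I] (ε : ℝ)
    (A : Set (E × I)) : Set (E × I) :=
  {p | ∃ q ∈ A, dist p.1 q.1 + dist p.2 q.2 < ε}

/-- The Prohorov metric between finite Borel measures on `E × I`, where `E × I` carries
the sum metric `ρ + d`. -/
noncomputable def dPrSum {E I : Type*} [PseudoMetricSpace E] [PseudoMetricSpace I]
    [MeasurableSpace E] [MeasurableSpace I] (μ ν : Measure (E × I)) : ℝ :=
  sInf {ε : ℝ | 0 < ε ∧ ∀ A : Set (E × I), MeasurableSet A →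
    μ A ≤ ν (sumThick ε A) + ENNReal.ofReal ε ∧ ν A ≤ μ (sumThick ε A) + ENNReal.ofReal ε}

/-- The complement of the "support set" of a measure is open. -/
lemma suppSet_compl_isOpen {α : Type*} [TopologicalSpace α] [MeasurableSpace α]
    (ν : MeasureTheory.Measure α) :
    IsOpen {x : α | ∀ U : Set α, IsOpen U → x ∈ U → ν U ≠ 0}ᶜ := by
  rw [isOpen_iff_forall_mem_open]
  intro x hx
  simp only [Set.mem_compl_iff, Set.mem_setOf_eq, not_forall] at hx
  obtain ⟨U, hU, hxU, hνU⟩ := hx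
  refine ⟨U, fun y hy => ?_, hU, hxU⟩
  simp only [Set.mem_compl_iff, Set.mem_setOf_eq, not_forall]
  exact ⟨U, hU, hy, hνU⟩

/-- The complement of the "support set" of a measure is null (second countable space). -/
lemma suppSet_compl_null {α : Type*} [TopologicalSpace α] [SecondCountableTopology α]
    [MeasurableSpace α] (ν : MeasureTheory.Measure α) :
    ν {x : α | ∀ U : Set α, IsOpen U → x ∈ U → ν U ≠ 0}ᶜ = 0 := by
  apply measure_null_of_locally_null
  intro x hx
  simp only [Set.mem_compl_iff, Set.mem_setOf_eq, not_forall, not_ne_iff] at hx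
  obtain ⟨U, hU, hxU, hνU⟩ := hx
  exact ⟨U, nhdsWithin_le_nhds (hU.mem_nhds hxU), hνU⟩

/-- The complement of `Aset δ ε` is open. -/
lemma aset_compl_isOpen {X I : Type*} [PseudoMetricSpace X] [PseudoMetricSpace I]
    (δ : ℝ) (ε : ℝ≥0∞) : IsOpen (Aset (X := X) (I := I) δ ε)ᶜ := by
  have h : (Aset (X := X) (I := I) δ ε)ᶜ =
      {p : (X × I) × (X × I) | dist p.1.1 p.2.1 < δ} ∩
      {p : (X × I) × (X × I) | ε < ENNReal.ofReal (dist p.1.2 p.2.2)} := by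
    ext p
    simp [Aset, not_or, not_le]
  rw [h]
  refine (isOpen_lt (by fun_prop) continuous_const).inter ?_
  exact isOpen_lt continuous_const (ENNReal.continuous_ofReal.comp (by fun_prop))

/-- A sum-metric thickening of any set is open. -/
lemma sumThick_isOpen {E I : Type*} [PseudoMetricSpace E] [PseudoMetricSpace I] (r : ℝ)
    (A : Set (E × I)) : IsOpen (sumThick r A) := by
  have h : sumThick r A = ⋃ q ∈ A, {p : E × I | dist p.1 q.1 + dist p.2 q.2 < r} := by
    ext p; simp [sumThick]
  rw [h]
  exact isOpen_biUnion fun q _ => isOpen_lt (by fun_prop) continuous_const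

/-- Perturbation of `M^E_{δ,ε}`: if `μ ∈ M^E_{δ,ε}` and `dPr(μ,μ̂) < δ' < δ/2`
(Prohorov metric w.r.t. the sum metric on `E × I`), then `μ̂ ∈ M^E_{δ−2δ', ε+2δ'}`. -/
theorem memM_perturbation {E I : Type*}
    [MetricSpace E] [CompleteSpace E] [SecondCountableTopology E]
    [MeasurableSpace E] [BorelSpace E]
    [MetricSpace I] [CompleteSpace I] [SecondCountableTopology I]
    [MeasurableSpace I] [BorelSpace I]
    (δ ε δ' : ℝ) (hδ : 0 < δ) (hε : 0 < ε)
    (μ μhat : Measure (E × I)) [IsFiniteMeasure μ] [IsFiniteMeasure μhat]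
    (hM : memM μ δ (ENNReal.ofReal ε))
    (hPr : dPrSum μ μhat < δ') (hδ' : δ' < δ / 2) :
    memM μhat (δ - 2 * δ') (ENNReal.ofReal (ε + 2 * δ')) := by
  classical
  obtain ⟨μ', hfin, hle, hvar, hnull⟩ := hM
  haveI := hfin
  -- the defining set of the Prohorov distance is nonempty
  set P : Set ℝ := {r : ℝ | 0 < r ∧ ∀ A : Set (E × I), MeasurableSet A →
      μ A ≤ μhat (sumThick r A) + ENNReal.ofReal r ∧
      μhat A ≤ μ (sumThick r A) + ENNReal.ofReal r} with hP
  have hPne : P.Nonempty := by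
    refine ⟨(μ Set.univ).toReal + (μhat Set.univ).toReal + 1, by positivity, fun A _ => ?_⟩
    have h1 : (0:ℝ) ≤ (μ Set.univ).toReal := ENNReal.toReal_nonneg
    have h2 : (0:ℝ) ≤ (μhat Set.univ).toReal := ENNReal.toReal_nonneg
    constructor
    · calc μ A ≤ μ Set.univ := measure_mono (Set.subset_univ _)
        _ = ENNReal.ofReal (μ Set.univ).toReal := (ENNReal.ofReal_toReal (measure_ne_top _ _)).symm
        _ ≤ ENNReal.ofReal ((μ Set.univ).toReal + (μhat Set.univ).toReal + 1) :=
            ENNReal.ofReal_le_ofReal (by linarith)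
        _ ≤ _ := le_add_self
    · calc μhat A ≤ μhat Set.univ := measure_mono (Set.subset_univ _)
        _ = ENNReal.ofReal (μhat Set.univ).toReal :=
            (ENNReal.ofReal_toReal (measure_ne_top _ _)).symm
        _ ≤ ENNReal.ofReal ((μ Set.univ).toReal + (μhat Set.univ).toReal + 1) :=
            ENNReal.ofReal_le_ofReal (by linarith)
        _ ≤ _ := le_add_self
  have hPr' : sInf P < δ' := by simpa [dPrSum, hP] using hPr
  obtain ⟨r, ⟨hr0, hr⟩, hrδ'⟩ := exists_lt_of_csInf_lt hPne hPr'
  have hδ'0 : 0 < δ' := hr0.trans hrδ'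
  -- the support set of μ'
  set S : Set (E × I) := {x | ∀ U : Set (E × I), IsOpen U → x ∈ U → μ' U ≠ 0} with hSdef
  have hSc_open : IsOpen Sᶜ := suppSet_compl_isOpen μ'
  have hSnull : μ' Sᶜ = 0 := suppSet_compl_null μ'
  -- points of the support pair into Aset δ ε
  have hsupp : ∀ p ∈ S, ∀ q ∈ S, (p, q) ∈ Aset δ (ENNReal.ofReal ε) := by
    intro p hp q hq
    by_contra hpq
    obtain ⟨U, V, hU, hV, hpU, hqV, hUV⟩ :=
      isOpen_prod_iff.mp (aset_compl_isOpen (X := E) (I := I) δ (ENNReal.ofReal ε)) p q hpq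
    have hzero : (μ'.prod μ') (U ×ˢ V) = 0 := measure_mono_null hUV hnull
    rw [Measure.prod_prod] at hzero
    exact absurd hzero (mul_ne_zero (hp U hU hpU) (hq V hV hqV))
  -- the thickened support
  set T : Set (E × I) := sumThick r S with hTdef
  have hT_open : IsOpen T := sumThick_isOpen r S
  have hTc_meas : MeasurableSet Tᶜ := hT_open.measurableSet.compl
  -- bound μhat Tᶜ
  have hthick : sumThick r Tᶜ ⊆ Sᶜ := by
    rintro y ⟨z, hz, hdist⟩
    intro hyS
    refine hz ⟨y, hyS, ?_⟩
    rw [dist_comm z.1 y.1, dist_comm z.2 y.2]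
    exact hdist
  have hμSc : μ Sᶜ ≤ ENNReal.ofReal ε := by
    have hkey : μ Sᶜ - μ' Sᶜ ≤ varDist μ μ' :=
      le_trans (le_max_left _ _) (le_iSup₂_of_le Sᶜ hSc_open.measurableSet le_rfl)
    rw [hSnull, tsub_zero] at hkey
    exact hkey.trans hvar
  have hμhatTc : μhat Tᶜ ≤ ENNReal.ofReal (ε + 2 * δ') := by
    calc μhat Tᶜ ≤ μ (sumThick r Tᶜ) + ENNReal.ofReal r := (hr Tᶜ hTc_meas).2
      _ ≤ μ Sᶜ + ENNReal.ofReal r := by gcongr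
      _ ≤ ENNReal.ofReal ε + ENNReal.ofReal r := by gcongr
      _ = ENNReal.ofReal (ε + r) := (ENNReal.ofReal_add hε.le hr0.le).symm
      _ ≤ ENNReal.ofReal (ε + 2 * δ') := ENNReal.ofReal_le_ofReal (by linarith)
  -- pairs of points of T are in the bigger Aset
  have hTT : ∀ p ∈ T, ∀ q ∈ T,
      (p, q) ∈ Aset (δ - 2 * δ') (ENNReal.ofReal (ε + 2 * δ')) := by
    intro p hp q hq
    obtain ⟨p₀, hp₀S, hp₀⟩ := hp
    obtain ⟨q₀, hq₀S, hq₀⟩ := hq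
    by_cases hd : δ - 2 * δ' ≤ dist p.1 q.1
    · exact Or.inl hd
    push_neg at hd
    right
    have hdp1 : dist p.1 p₀.1 ≤ dist p.1 p₀.1 + dist p.2 p₀.2 := le_add_of_nonneg_right dist_nonneg
    have hdq1 : dist q.1 q₀.1 ≤ dist q.1 q₀.1 + dist q.2 q₀.2 := le_add_of_nonneg_right dist_nonneg
    have hE : dist p₀.1 q₀.1 < δ := by
      calc dist p₀.1 q₀.1 ≤ dist p₀.1 p.1 + dist p.1 q.1 + dist q.1 q₀.1 :=
            dist_triangle4 _ _ _ _
        _ = dist p.1 p₀.1 + dist p.1 q.1 + dist q.1 q₀.1 := by rw [dist_comm p₀.1 p.1]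
        _ < r + (δ - 2 * δ') + r := by
            linarith [hp₀, hq₀, dist_nonneg (x := p.2) (y := p₀.2),
              dist_nonneg (x := q.2) (y := q₀.2)]
        _ < δ := by linarith
    have hmark : dist p₀.2 q₀.2 ≤ ε := by
      rcases hsupp p₀ hp₀S q₀ hq₀S with h | h
      · exact absurd h (not_le.mpr hE)
      · exact (ENNReal.ofReal_le_ofReal_iff hε.le).mp h
    have hI : dist p.2 q.2 ≤ ε + 2 * δ' := by
      calc dist p.2 q.2 ≤ dist p.2 p₀.2 + dist p₀.2 q₀.2 + dist q₀.2 q.2 :=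
            dist_triangle4 _ _ _ _
        _ = dist p.2 p₀.2 + dist p₀.2 q₀.2 + dist q.2 q₀.2 := by rw [dist_comm q₀.2 q.2]
        _ ≤ r + ε + r := by
            have h1 : dist p.2 p₀.2 ≤ r :=
              le_of_lt (lt_of_le_of_lt (le_add_of_nonneg_left dist_nonneg) hp₀)
            have h2 : dist q.2 q₀.2 ≤ r :=
              le_of_lt (lt_of_le_of_lt (le_add_of_nonneg_left dist_nonneg) hq₀)
            linarith
        _ ≤ ε + 2 * δ' := by linarith
    exact ENNReal.ofReal_le_ofReal hI
  -- the witness measure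
  refine ⟨μhat.restrict T, inferInstance, Measure.restrict_le_self, ?_, ?_⟩
  · -- variational distance bound
    refine iSup₂_le fun B hB => max_le ?_ ?_
    · rw [Measure.restrict_apply hB]
      refine tsub_le_iff_right.mpr ?_
      calc μhat B ≤ μhat (B ∩ T) + μhat (B \ T) := measure_le_inter_add_diff _ _ _
        _ ≤ μhat (B ∩ T) + μhat Tᶜ := by
            gcongr
            exact Set.diff_subset_compl B T
        _ ≤ μhat (B ∩ T) + ENNReal.ofReal (ε + 2 * δ') := by gcongr
        _ = ENNReal.ofReal (ε + 2 * δ') + μhat (B ∩ T) := add_comm _ _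
    · have h1 : μhat.restrict T B ≤ μhat B := Measure.le_iff'.mp Measure.restrict_le_self B
      rw [tsub_eq_zero_of_le h1]
      exact zero_le
  · -- product support condition
    have h0 : (μhat.restrict T) Tᶜ = 0 := by
      rw [Measure.restrict_apply hTc_meas, Set.compl_inter_self]
      exact measure_empty
    have hsub : (Aset (δ - 2 * δ') (ENNReal.ofReal (ε + 2 * δ')))ᶜ ⊆ (T ×ˢ T)ᶜ := by
      intro pq hpq hpqT
      exact hpq (hTT pq.1 hpqT.1 pq.2 hpqT.2)
    refine measure_mono_null hsub ?_
    have hsub2 : (T ×ˢ T)ᶜ ⊆ (Tᶜ ×ˢ (Set.univ : Set (E × I))) ∪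
        ((Set.univ : Set (E × I)) ×ˢ Tᶜ) := by
      intro x hx
      simp only [Set.mem_compl_iff, Set.mem_prod, not_and_or] at hx
      rcases hx with h | h
      · exact Or.inl ⟨h, Set.mem_univ _⟩
      · exact Or.inr ⟨Set.mem_univ _, h⟩
    refine measure_mono_null hsub2 (measure_union_null ?_ ?_) <;>
      rw [Measure.prod_prod] <;> simp [h0]
end

section
/- Let (E,ρ) and (I,d) be complete separable metric spaces and equip E×I with the metric ρ+d. Let δ, ε > 0 and let μ, μ̂ be finite Borel measures on E×I with μ ∈ M^E_{2δ,ε} and dPr(μ,μ̂) < δ. Then β(μ̂) ≤ (ε+2δ)·(2 + μ(E×I) + δ). -/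
open MeasureTheory Filter Topology ENNReal

lemma exists_measure_support {X : Type*} [TopologicalSpace X] [SecondCountableTopology X]
    [MeasurableSpace X] [OpensMeasurableSpace X] (μ : Measure X) :
    ∃ S : Set X, IsClosed S ∧ μ Sᶜ = 0 ∧ ∀ p ∈ S, ∀ U : Set X, IsOpen U → p ∈ U → 0 < μ U := by
  obtain ⟨b, hbc, -, hb⟩ := TopologicalSpace.exists_countable_basis X
  refine ⟨(⋃₀ {s | s ∈ b ∧ μ s = 0})ᶜ, ?_, ?_, ?_⟩
  · exact (isOpen_sUnion fun s hs => hb.isOpen hs.1).isClosed_compl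
  · rw [compl_compl]
    exact (measure_sUnion_null_iff (hbc.mono fun s hs => hs.1)).2 fun s hs => hs.2
  · intro p hp U hU hpU
    obtain ⟨t, htb, hpt, htU⟩ : ∃ t ∈ b, p ∈ t ∧ t ⊆ U := hb.isOpen_iff.mp hU p hpU
    rcases eq_or_ne (μ U) 0 with h0 | h0
    · exact absurd (show p ∈ ⋃₀ {s | s ∈ b ∧ μ s = 0} from
        ⟨t, ⟨htb, measure_mono_null htU h0⟩, hpt⟩) hp
    · exact pos_iff_ne_zero.2 h0

/-- If `μ ∈ M^E_{2δ,ε}` and `dPr(μ,μ̂) < δ` (Prohorov metric w.r.t. the sum metric on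
`E × I`), then `β(μ̂) ≤ (ε+2δ)·(2 + μ(E×I) + δ)`. -/
theorem beta_ball_estimate {E I : Type*}
    [MetricSpace E] [CompleteSpace E] [SecondCountableTopology E]
    [MeasurableSpace E] [BorelSpace E]
    [MetricSpace I] [CompleteSpace I] [SecondCountableTopology I]
    [MeasurableSpace I] [BorelSpace I] [Nonempty I]
    (δ ε : ℝ) (hδ : 0 < δ) (hε : 0 < ε)
    (μ μhat : Measure (E × I)) [IsFiniteMeasure μ] [IsFiniteMeasure μhat]
    (hM : memM μ (2 * δ) (ENNReal.ofReal ε))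
    (hPr : dPrSum μ μhat < δ) :
    beta μhat ≤ ENNReal.ofReal (ε + 2 * δ) * (2 + μ Set.univ + ENNReal.ofReal δ) := by
  classical
  obtain ⟨μ', hfin', hle', hvar', hprod'⟩ := hM
  haveI := hfin'
  set c : ℝ≥0∞ := ENNReal.ofReal (ε + 2 * δ) with hc
  -- support of μ'
  obtain ⟨S, hScl, hSnull, hSpos⟩ := exists_measure_support μ'
  have hSmeas : MeasurableSet S := hScl.measurableSet
  -- pairwise property on S
  have hSpair : ∀ p ∈ S, ∀ q ∈ S, dist (Prod.fst p) (Prod.fst q) < 2 * δ →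
      dist (Prod.snd p) (Prod.snd q) ≤ ε := by
    intro p hp q hq hρ
    by_contra hd
    push_neg at hd
    have hWopen : IsOpen {pq : (E × I) × (E × I) |
        dist pq.1.1 pq.2.1 < 2 * δ ∧ ε < dist pq.1.2 pq.2.2} := by
      apply IsOpen.inter
      · exact isOpen_lt (Continuous.dist (continuous_fst.fst) (continuous_snd.fst))
          continuous_const
      · exact isOpen_lt continuous_const
          (Continuous.dist (continuous_fst.snd) (continuous_snd.snd))
    obtain ⟨U, V, hU, hV, hpU, hqV, hUV⟩ := isOpen_prod_iff.1 hWopen p q ⟨hρ, hd⟩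
    have hpos : 0 < (μ'.prod μ') (U ×ˢ V) := by
      rw [Measure.prod_prod]
      exact ENNReal.mul_pos (hSpos p hp U hU hpU).ne' (hSpos q hq V hV hqV).ne'
    have hsub : U ×ˢ V ⊆ (Aset (2 * δ) (ENNReal.ofReal ε))ᶜ := by
      intro pq hpq
      have hw := hUV hpq
      simp only [Set.mem_setOf_eq] at hw
      simp only [Aset, Set.mem_compl_iff, Set.mem_setOf_eq]
      push_neg
      refine ⟨hw.1, ?_⟩
      exact (ENNReal.ofReal_lt_ofReal_iff (lt_trans hε hw.2)).2 hw.2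
    exact hpos.ne' (le_antisymm ((measure_mono hsub).trans hprod'.le) zero_le)
  -- extract a Prohorov radius η < δ
  have hPS : {ε0 : ℝ | 0 < ε0 ∧ ∀ A : Set (E × I), MeasurableSet A →
      μ A ≤ μhat (sumThick ε0 A) + ENNReal.ofReal ε0 ∧
      μhat A ≤ μ (sumThick ε0 A) + ENNReal.ofReal ε0}.Nonempty := by
    refine ⟨(μ Set.univ).toReal + (μhat Set.univ).toReal + 1, by positivity, fun A hA => ?_⟩
    constructor
    · refine le_add_left ?_
      calc μ A ≤ μ Set.univ := measure_mono (Set.subset_univ A)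
        _ = ENNReal.ofReal (μ Set.univ).toReal := (ENNReal.ofReal_toReal (measure_ne_top μ _)).symm
        _ ≤ _ := ENNReal.ofReal_le_ofReal (by
            have := ENNReal.toReal_nonneg (a := μhat Set.univ); linarith)
    · refine le_add_left ?_
      calc μhat A ≤ μhat Set.univ := measure_mono (Set.subset_univ A)
        _ = ENNReal.ofReal (μhat Set.univ).toReal :=
          (ENNReal.ofReal_toReal (measure_ne_top μhat _)).symm
        _ ≤ _ := ENNReal.ofReal_le_ofReal (by
            have := ENNReal.toReal_nonneg (a := μ Set.univ); linarith)
  obtain ⟨η, ⟨hη0, hηP⟩, hηδ⟩ := exists_lt_of_csInf_lt hPS hPr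
  -- the thickened support
  set T : Set (E × I) := sumThick η S with hT
  have hTopen : IsOpen T := by
    have : T = ⋃ q ∈ S, {p : E × I | dist p.1 q.1 + dist p.2 q.2 < η} := by
      ext p; simp [hT, sumThick]
    rw [this]
    exact isOpen_biUnion fun q _ => isOpen_lt
      ((continuous_fst.dist continuous_const).add (continuous_snd.dist continuous_const))
      continuous_const
  have hTmeas : MeasurableSet T := hTopen.measurableSet
  -- marks over a common base point in T are (ε+2δ)-close
  have hTx : ∀ (x : E) (u v : I), (x, u) ∈ T → (x, v) ∈ T → dist u v ≤ ε + 2 * δ := by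
    intro x u v hu hv
    obtain ⟨q1, hq1S, hq1⟩ := hu
    obtain ⟨q2, hq2S, hq2⟩ := hv
    have h1x : dist x q1.1 < η := by
      have := dist_nonneg (x := u) (y := q1.2); simp only at hq1; linarith
    have h1u : dist u q1.2 < η := by
      have := dist_nonneg (x := x) (y := q1.1); linarith
    have h2x : dist x q2.1 < η := by
      have := dist_nonneg (x := v) (y := q2.2); linarith
    have h2v : dist v q2.2 < η := by
      have := dist_nonneg (x := x) (y := q2.1); linarith
    have hρ : dist q1.1 q2.1 < 2 * δ := by
      calc dist q1.1 q2.1 ≤ dist q1.1 x + dist x q2.1 := dist_triangle _ _ _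
        _ = dist x q1.1 + dist x q2.1 := by rw [dist_comm]
        _ < η + η := by linarith
        _ ≤ 2 * δ := by linarith
    have hmark : dist q1.2 q2.2 ≤ ε := hSpair q1 hq1S q2 hq2S hρ
    calc dist u v ≤ dist u q1.2 + dist q1.2 q2.2 + dist q2.2 v := dist_triangle4 _ _ _ _
      _ = dist u q1.2 + dist q1.2 q2.2 + dist v q2.2 := by rw [dist_comm q2.2 v]
      _ ≤ ε + 2 * δ := by linarith
  -- measure estimates
  have hμSc : μ Sᶜ ≤ ENNReal.ofReal ε := by
    have h1 : max (μ Sᶜ - μ' Sᶜ) (μ' Sᶜ - μ Sᶜ) ≤ varDist μ μ' :=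
      le_iSup_of_le Sᶜ (le_iSup_of_le hSmeas.compl le_rfl)
    have h2 : μ Sᶜ - μ' Sᶜ ≤ ENNReal.ofReal ε := ((le_max_left _ _).trans h1).trans hvar'
    rwa [hSnull, tsub_zero] at h2
  have hμuniv : μ Set.univ ≤ μ S + ENNReal.ofReal ε := by
    calc μ Set.univ = μ S + μ Sᶜ := (measure_add_measure_compl hSmeas).symm
      _ ≤ μ S + ENNReal.ofReal ε := by gcongr
  have hμS : μ S ≤ μhat T + ENNReal.ofReal η := (hηP S hSmeas).1
  have hthickuniv : sumThick η (Set.univ : Set (E × I)) = Set.univ := by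
    ext p
    simp only [sumThick, Set.mem_setOf_eq, Set.mem_univ, iff_true]
    exact ⟨p, trivial, by simp [hη0]⟩
  have hμhatuniv : μhat Set.univ ≤ μ Set.univ + ENNReal.ofReal η := by
    have h := (hηP Set.univ MeasurableSet.univ).2
    rwa [hthickuniv] at h
  have hμhatuniv' : μhat Set.univ ≤ μ Set.univ + ENNReal.ofReal δ :=
    hμhatuniv.trans (by gcongr)
  have hTc : μhat Tᶜ ≤ c := by
    have hchain : μhat Tᶜ + μhat T ≤
        (ENNReal.ofReal ε + ENNReal.ofReal η + ENNReal.ofReal η) + μhat T := by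
      calc μhat Tᶜ + μhat T = μhat Set.univ := by
            rw [add_comm]; exact measure_add_measure_compl hTmeas
        _ ≤ μ Set.univ + ENNReal.ofReal η := hμhatuniv
        _ ≤ (μ S + ENNReal.ofReal ε) + ENNReal.ofReal η := by gcongr
        _ ≤ ((μhat T + ENNReal.ofReal η) + ENNReal.ofReal ε) + ENNReal.ofReal η :=
            by gcongr
        _ = (ENNReal.ofReal ε + ENNReal.ofReal η + ENNReal.ofReal η) + μhat T := by ring
    have h2 : μhat Tᶜ ≤ ENNReal.ofReal ε + ENNReal.ofReal η + ENNReal.ofReal η :=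
      (ENNReal.add_le_add_iff_right (measure_ne_top μhat T)).1 hchain
    refine h2.trans ?_
    rw [← ENNReal.ofReal_add hε.le hη0.le, ← ENNReal.ofReal_add (by positivity) hη0.le]
    exact ENNReal.ofReal_le_ofReal (by linarith)
  -- pointwise bound
  have hpt : ∀ (x : E) (u v : I), ENNReal.ofReal (min 1 (dist u v)) ≤
      c + (Tᶜ.indicator (1 : E × I → ℝ≥0∞) (x, u)) + (Tᶜ.indicator (1 : E × I → ℝ≥0∞) (x, v)) := by
    intro x u v
    by_cases hu : (x, u) ∈ T
    · by_cases hv : (x, v) ∈ T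
      · have hd := hTx x u v hu hv
        have h1 : ENNReal.ofReal (min 1 (dist u v)) ≤ c :=
          ENNReal.ofReal_le_ofReal ((min_le_right _ _).trans hd)
        exact h1.trans (le_add_right (le_add_right le_rfl))
      · have h1 : ENNReal.ofReal (min 1 (dist u v)) ≤ 1 :=
          ENNReal.ofReal_le_one.2 (min_le_left _ _)
        have h2 : Tᶜ.indicator (1 : E × I → ℝ≥0∞) (x, v) = 1 :=
          Set.indicator_of_mem (show (x, v) ∈ Tᶜ from hv) (1 : E × I → ℝ≥0∞)
        calc ENNReal.ofReal (min 1 (dist u v)) ≤ 1 := h1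
          _ = Tᶜ.indicator (1 : E × I → ℝ≥0∞) (x, v) := h2.symm
          _ ≤ _ := le_add_self
    · have h1 : ENNReal.ofReal (min 1 (dist u v)) ≤ 1 :=
        ENNReal.ofReal_le_one.2 (min_le_left _ _)
      have h2 : Tᶜ.indicator (1 : E × I → ℝ≥0∞) (x, u) = 1 :=
        Set.indicator_of_mem (show (x, u) ∈ Tᶜ from hu) (1 : E × I → ℝ≥0∞)
      calc ENNReal.ofReal (min 1 (dist u v)) ≤ 1 := h1
        _ = Tᶜ.indicator (1 : E × I → ℝ≥0∞) (x, u) := h2.symm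
        _ ≤ c + Tᶜ.indicator (1 : E × I → ℝ≥0∞) (x, u) := le_add_self
        _ ≤ _ := le_add_right le_rfl
  -- inner double-integral bound
  have hInner : ∀ x : E,
      (∫⁻ u, ∫⁻ v, ENNReal.ofReal (min 1 (dist u v))
        ∂(μhat.condKernel x) ∂(μhat.condKernel x)) ≤
      c + 2 * μhat.condKernel x (Prod.mk x ⁻¹' Tᶜ) := by
    intro x
    set κ := μhat.condKernel x with hκ
    set Ux : Set I := Prod.mk x ⁻¹' Tᶜ with hUx
    have hUmeas : MeasurableSet Ux := hTmeas.compl.preimage measurable_prodMk_left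
    have hindeq : ∀ w : I, Tᶜ.indicator (1 : E × I → ℝ≥0∞) (x, w) =
        Ux.indicator (1 : I → ℝ≥0∞) w := by
      intro w
      by_cases h : (x, w) ∈ Tᶜ
      · rw [Set.indicator_of_mem h (1 : E × I → ℝ≥0∞),
          Set.indicator_of_mem (show w ∈ Ux from h) (1 : I → ℝ≥0∞)]
        rfl
      · rw [Set.indicator_of_notMem h (1 : E × I → ℝ≥0∞),
          Set.indicator_of_notMem (show w ∉ Ux from h) (1 : I → ℝ≥0∞)]
    calc (∫⁻ u, ∫⁻ v, ENNReal.ofReal (min 1 (dist u v)) ∂κ ∂κ)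
        ≤ ∫⁻ u, ∫⁻ v, (c + Ux.indicator 1 u + Ux.indicator 1 v) ∂κ ∂κ := by
          refine lintegral_mono fun u => lintegral_mono fun v => ?_
          have := hpt x u v
          rwa [hindeq u, hindeq v] at this
      _ = ∫⁻ u, (c + Ux.indicator 1 u + κ Ux) ∂κ := by
          refine lintegral_congr fun u => ?_
          rw [lintegral_add_left measurable_const, lintegral_indicator_one hUmeas,
            lintegral_const, measure_univ, mul_one]
      _ = ∫⁻ u, ((c + κ Ux) + Ux.indicator 1 u) ∂κ := by
          refine lintegral_congr fun u => ?_; ring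
      _ = (c + κ Ux) + κ Ux := by
          rw [lintegral_add_left measurable_const, lintegral_indicator_one hUmeas,
            lintegral_const, measure_univ, mul_one]
      _ = c + 2 * κ Ux := by ring
  have hmeasκ : Measurable fun x : E => μhat.condKernel x (Prod.mk x ⁻¹' Tᶜ) :=
    ProbabilityTheory.Kernel.measurable_kernel_prodMk_left hTmeas.compl
  have hbeta : beta μhat ≤ c * μhat Set.univ + 2 * μhat Tᶜ := by
    rw [beta]
    calc (∫⁻ x, ∫⁻ u, ∫⁻ v, ENNReal.ofReal (min 1 (dist u v))
          ∂(μhat.condKernel x) ∂(μhat.condKernel x) ∂μhat.fst)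
        ≤ ∫⁻ x, (c + 2 * μhat.condKernel x (Prod.mk x ⁻¹' Tᶜ)) ∂μhat.fst :=
          lintegral_mono hInner
      _ = c * μhat.fst Set.univ + 2 * ∫⁻ x, μhat.condKernel x (Prod.mk x ⁻¹' Tᶜ) ∂μhat.fst := by
          rw [lintegral_add_left measurable_const, lintegral_const,
            lintegral_const_mul 2 hmeasκ]
      _ = c * μhat Set.univ + 2 * μhat Tᶜ := by
          have hlint : (∫⁻ x, μhat.condKernel x (Prod.mk x ⁻¹' Tᶜ) ∂μhat.fst) = μhat Tᶜ :=
            Measure.lintegral_condKernel_mem hTmeas.compl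
          rw [Measure.fst_univ, hlint]
  calc beta μhat ≤ c * μhat Set.univ + 2 * μhat Tᶜ := hbeta
    _ ≤ c * (μ Set.univ + ENNReal.ofReal δ) + 2 * c :=
        add_le_add (mul_le_mul_right hμhatuniv' c) (mul_le_mul_right hTc 2)
    _ = c * (2 + μ Set.univ + ENNReal.ofReal δ) := by ring
end

section
/- Let (E,ρ) and (I,d) be complete separable metric spaces and h ∈ H. Let μ_n (n ∈ ℕ) and μ be finite Borel measures on E×I such that μ_n → μ weakly. If (μ_n⊗μ_n)((E×I)² ∖ A^E_h) = 0 for every n, then (μ⊗μ)((E×I)² ∖ A^E_h) = 0. -/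
open MeasureTheory Filter Topology ENNReal

-- bump function
noncomputable def bumpB {X : Type*} [PseudoMetricSpace X] (p : X) (ε : ℝ) :
    BoundedContinuousFunction X ℝ :=
  BoundedContinuousFunction.ofNormedAddCommGroup (fun x => max (ε - dist x p) 0)
    (by fun_prop) |ε| (fun x => by
      rw [Real.norm_eq_abs, abs_of_nonneg (le_max_right _ _)]
      rcases le_abs_self ε with hε
      have := dist_nonneg (x := x) (y := p)
      rw [max_le_iff]
      constructor
      · linarith
      · exact abs_nonneg ε)

lemma bumpB_apply {X : Type*} [PseudoMetricSpace X] (p : X) (ε : ℝ) (x : X) :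
    bumpB p ε x = max (ε - dist x p) 0 := rfl

lemma eventually_ball_pos {X : Type*} [MetricSpace X] [MeasurableSpace X]
    [OpensMeasurableSpace X]
    (μ : ℕ → Measure X) [∀ n, IsFiniteMeasure (μ n)]
    (ν : Measure X) [IsFiniteMeasure ν]
    (hconv : ∀ f : BoundedContinuousFunction X ℝ,
      Tendsto (fun n => ∫ x, f x ∂(μ n)) atTop (𝓝 (∫ x, f x ∂ν)))
    (p : X) (hp : ∀ U ∈ 𝓝 p, ν U ≠ 0) {ε : ℝ} (hε : 0 < ε) :
    ∀ᶠ n in atTop, μ n (Metric.ball p ε) ≠ 0 := by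
  set f := bumpB p ε with hf
  have hpos : 0 < ∫ x, f x ∂ν := by
    have hb : ν (Metric.ball p (ε / 2)) ≠ 0 :=
      hp _ (Metric.ball_mem_nhds p (by linarith))
    have hint : Integrable f ν := f.integrable ν
    have h1 : (ε / 2) * (ν (Metric.ball p (ε / 2))).toReal
        ≤ ∫ x in Metric.ball p (ε / 2), f x ∂ν := by
      apply setIntegral_ge_of_const_le_real measurableSet_ball
        (measure_ne_top ν _)
      · intro x hx
        rw [bumpB_apply]
        have : dist x p < ε / 2 := Metric.mem_ball.mp hx
        have : ε / 2 ≤ ε - dist x p := by linarith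
        exact this.trans (le_max_left _ _)
      · exact hint.integrableOn
    have h2 : ∫ x in Metric.ball p (ε / 2), f x ∂ν ≤ ∫ x, f x ∂ν := by
      apply setIntegral_le_integral hint
      filter_upwards with x
      exact le_max_right _ _
    have h3 : 0 < (ε / 2) * (ν (Metric.ball p (ε / 2))).toReal := by
      apply _root_.mul_pos (by linarith)
      exact ENNReal.toReal_pos hb (measure_ne_top ν _)
    linarith
  have := (hconv f).eventually (eventually_gt_nhds hpos)
  filter_upwards [this] with n hn hzero
  have hae : f =ᵐ[μ n] 0 := by
    have hsub : Function.support f ⊆ Metric.ball p ε := by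
      intro x hx
      rw [Function.mem_support, bumpB_apply] at hx
      have : 0 < ε - dist x p := by
        by_contra hc
        push_neg at hc
        simp [max_eq_right hc] at hx
      exact Metric.mem_ball.mpr (by linarith)
    exact (ae_iff.mpr (measure_mono_null (by
      intro x hx
      simp only [Set.mem_setOf_eq] at hx
      exact hsub hx) hzero))
  rw [integral_congr_ae hae] at hn
  simp at hn

/-- The set `A^X_h = {((x₁,u₁),(x₂,u₂)) | d(u₁,u₂) ≤ h(r(x₁,x₂))}` for a modulus of
continuity `h`. -/
def AsetH {X I : Type*} [PseudoMetricSpace X] [PseudoMetricSpace I] (h : ℝ → ℝ≥0∞) :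
    Set ((X × I) × (X × I)) :=
  {p | ENNReal.ofReal (dist p.1.2 p.2.2) ≤ h (dist p.1.1 p.2.1)}

/-- Weak convergence of finite Borel measures: convergence of integrals of all bounded
continuous functions. -/
def WeakConv {E : Type*} [TopologicalSpace E] [MeasurableSpace E]
    (μ : ℕ → Measure E) (ν : Measure E) : Prop :=
  ∀ f : BoundedContinuousFunction E ℝ,
    Tendsto (fun n => ∫ x, f x ∂(μ n)) atTop (𝓝 (∫ x, f x ∂ν))

/-- Closedness under weak limits: if each `μ_n ⊗ μ_n` is supported on `A^E_h` and
`μ_n → μ` weakly, then `μ ⊗ μ` is supported on `A^E_h`. -/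
theorem prod_supported_AsetH_of_weak_limit {E I : Type*}
    [MetricSpace E] [CompleteSpace E] [SecondCountableTopology E]
    [MeasurableSpace E] [BorelSpace E]
    [MetricSpace I] [CompleteSpace I] [SecondCountableTopology I]
    [MeasurableSpace I] [BorelSpace I]
    (h : ℝ → ℝ≥0∞) (h0 : h 0 = 0) (hmono : Monotone h) (hcont : Continuous h)
    (μ : ℕ → Measure (E × I)) [∀ n, IsFiniteMeasure (μ n)]
    (ν : Measure (E × I)) [IsFiniteMeasure ν]
    (hconv : WeakConv μ ν)
    (hn : ∀ n, ((μ n).prod (μ n)) (AsetH (X := E) (I := I) h)ᶜ = 0) :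
    (ν.prod ν) (AsetH (X := E) (I := I) h)ᶜ = 0 := by

  set A : Set ((E × I) × (E × I)) := AsetH (X := E) (I := I) h with hA
  have hAclosed : IsClosed A := by
    rw [hA]
    unfold AsetH
    apply isClosed_le
    · exact ENNReal.continuous_ofReal.comp (by fun_prop)
    · exact hcont.comp (by fun_prop)
  set S : Set (E × I) := {x | ∀ U ∈ 𝓝 x, ν U ≠ 0} with hS
  -- ν Sᶜ = 0
  have hSnull : ν Sᶜ = 0 := by
    set B := TopologicalSpace.countableBasis (E × I) with hB
    have hbasis := TopologicalSpace.isBasis_countableBasis (E × I)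
    have hsub : Sᶜ ⊆ ⋃₀ {U ∈ B | ν U = 0} := by
      intro x hx
      simp only [hS, Set.mem_compl_iff, Set.mem_setOf_eq, not_forall] at hx
      obtain ⟨V, hV, hVnull⟩ := hx
      push_neg at hVnull
      obtain ⟨U, hUB, hxU, hUV⟩ := hbasis.mem_nhds_iff.mp hV
      exact ⟨U, ⟨hUB, measure_mono_null hUV hVnull⟩, hxU⟩
    apply measure_mono_null hsub
    rw [measure_sUnion_null_iff
      ((TopologicalSpace.countable_countableBasis (E × I)).mono (Set.sep_subset _ _))]
    exact fun U hU => hU.2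
  -- S ×ˢ S ⊆ A
  have hkey : S ×ˢ S ⊆ A := by
    rintro ⟨p, q⟩ ⟨hpS, hqS⟩
    rw [← hAclosed.closure_eq]
    rw [Metric.mem_closure_iff]
    intro ε hε
    have h1 := eventually_ball_pos μ ν hconv p hpS hε
    have h2 := eventually_ball_pos μ ν hconv q hqS hε
    obtain ⟨n, hn1, hn2⟩ := ((h1.and h2).exists)
    have hprod : ((μ n).prod (μ n)) (Metric.ball p ε ×ˢ Metric.ball q ε) ≠ 0 := by
      rw [Measure.prod_prod]
      exact mul_ne_zero hn1 hn2
    have hne : (Metric.ball p ε ×ˢ Metric.ball q ε ∩ A).Nonempty := by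
      by_contra hc
      rw [Set.not_nonempty_iff_eq_empty] at hc
      have : Metric.ball p ε ×ˢ Metric.ball q ε ⊆ Aᶜ := by
        intro z hz
        intro hzA
        exact Set.eq_empty_iff_forall_notMem.mp hc z ⟨hz, hzA⟩
      exact hprod (measure_mono_null this (hn n))
    obtain ⟨z, ⟨hz1, hz2⟩, hzA⟩ := hne
    refine ⟨z, hzA, ?_⟩
    rw [Prod.dist_eq]
    exact max_lt (by simpa [dist_comm] using Metric.mem_ball.mp hz1)
      (by simpa [dist_comm] using Metric.mem_ball.mp hz2)
  have : Aᶜ ⊆ (Sᶜ ×ˢ (Set.univ : Set (E × I))) ∪ ((Set.univ : Set (E × I)) ×ˢ Sᶜ) := by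
    intro z hz
    by_contra hc
    simp only [Set.mem_union, Set.mem_prod, Set.mem_compl_iff, Set.mem_univ, and_true,
      true_and, not_or, not_not] at hc
    exact hz (hkey ⟨hc.1, hc.2⟩)
  apply measure_mono_null this
  apply le_antisymm _ zero_le
  apply (measure_union_le _ _).trans
  rw [Measure.prod_prod, Measure.prod_prod, hSnull, zero_mul, mul_zero, add_zero]
end

section
/- Let (E,ρ) and (I,d) be complete separable metric spaces and δ, ε > 0. Let μ_n (n ∈ ℕ) and μ be finite Borel measures on E×I such that μ_n → μ weakly and μ_n ∈ M^E_{δ,ε} for every n. Then μ ∈ M^E_{δ,ε}. -/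
open MeasureTheory Filter Topology ENNReal

section Approx

variable {X : Type*} [MetricSpace X]

/-- `min 1 (k * dist(x, Uᶜ))`, an increasing approximation of the indicator of the open set `U`
from inside. -/
noncomputable def openApprox (U : Set X) (k : ℕ) : BoundedContinuousFunction X ℝ :=
  ⟨⟨fun x => min 1 ((k : ℝ) * Metric.infDist x Uᶜ), by
      exact continuous_const.min (continuous_const.mul (Metric.continuous_infDist_pt _))⟩,
   1, by
      intro x y
      have h1 : ∀ z : X, 0 ≤ min 1 ((k : ℝ) * Metric.infDist z Uᶜ) := fun z =>
        le_min zero_le_one (mul_nonneg (Nat.cast_nonneg k) Metric.infDist_nonneg)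
      have h2 : ∀ z : X, min 1 ((k : ℝ) * Metric.infDist z Uᶜ) ≤ 1 := fun z => min_le_left _ _
      rw [Real.dist_eq, abs_sub_le_iff]
      constructor <;> nlinarith [h1 x, h1 y, h2 x, h2 y]⟩

lemma openApprox_apply (U : Set X) (k : ℕ) (x : X) :
    openApprox U k x = min 1 ((k : ℝ) * Metric.infDist x Uᶜ) := rfl

lemma openApprox_nonneg (U : Set X) (k : ℕ) (x : X) : 0 ≤ openApprox U k x :=
  le_min zero_le_one (mul_nonneg (Nat.cast_nonneg k) Metric.infDist_nonneg)

lemma openApprox_le_one (U : Set X) (k : ℕ) (x : X) : openApprox U k x ≤ 1 :=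
  min_le_left _ _

lemma openApprox_eq_zero (U : Set X) (k : ℕ) {x : X} (hx : x ∉ U) : openApprox U k x = 0 := by
  rw [openApprox_apply, Metric.infDist_zero_of_mem (show x ∈ Uᶜ from hx), mul_zero]
  simp

lemma openApprox_mem_ne_zero_imp (U : Set X) (k : ℕ) {x : X} (hx : openApprox U k x ≠ 0) :
    x ∈ U := by
  by_contra h
  exact hx (openApprox_eq_zero U k h)

lemma openApprox_tendsto {U : Set X} (hU : IsOpen U) (hne : Uᶜ.Nonempty) (x : X) :
    Tendsto (fun k => openApprox U k x) atTop (𝓝 (U.indicator (fun _ => (1 : ℝ)) x)) := by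
  by_cases hx : x ∈ U
  · have hpos : 0 < Metric.infDist x Uᶜ :=
      (hU.isClosed_compl.notMem_iff_infDist_pos hne).mp (by simpa using hx)
    rw [Set.indicator_of_mem hx]
    have hev : ∀ᶠ k : ℕ in atTop, openApprox U k x = 1 := by
      obtain ⟨K, hK⟩ := exists_nat_ge (1 / Metric.infDist x Uᶜ)
      filter_upwards [eventually_ge_atTop K] with k hk
      rw [openApprox_apply, min_eq_left]
      have h1 : (1 / Metric.infDist x Uᶜ) ≤ (k : ℝ) := le_trans hK (by exact_mod_cast hk)
      rw [div_le_iff₀ hpos] at h1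
      nlinarith
    exact Tendsto.congr' (by filter_upwards [hev] with k hk using hk.symm) tendsto_const_nhds
  · rw [Set.indicator_of_notMem hx]
    have : ∀ k : ℕ, openApprox U k x = 0 := fun k => openApprox_eq_zero U k hx
    simpa [this] using tendsto_const_nhds (α := ℝ) (f := atTop (α := ℕ))

/-- `max 0 (1 - k * dist(x, F))`, a decreasing approximation of the indicator of the closed set
`F` from outside. -/
noncomputable def closApprox (F : Set X) (k : ℕ) : BoundedContinuousFunction X ℝ :=
  ⟨⟨fun x => max 0 (1 - (k : ℝ) * Metric.infDist x F), by
      exact continuous_const.max (continuous_const.sub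
        (continuous_const.mul (Metric.continuous_infDist_pt _)))⟩,
   1, by
      intro x y
      have h1 : ∀ z : X, 0 ≤ max 0 (1 - (k : ℝ) * Metric.infDist z F) := fun z => le_max_left _ _
      have h2 : ∀ z : X, max 0 (1 - (k : ℝ) * Metric.infDist z F) ≤ 1 := fun z =>
        max_le zero_le_one (by nlinarith [Metric.infDist_nonneg (x := z) (s := F),
          show (0:ℝ) ≤ (k:ℝ) from Nat.cast_nonneg k])
      rw [Real.dist_eq, abs_sub_le_iff]
      constructor <;> nlinarith [h1 x, h1 y, h2 x, h2 y]⟩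

lemma closApprox_apply (F : Set X) (k : ℕ) (x : X) :
    closApprox F k x = max 0 (1 - (k : ℝ) * Metric.infDist x F) := rfl

lemma closApprox_nonneg (F : Set X) (k : ℕ) (x : X) : 0 ≤ closApprox F k x :=
  le_max_left _ _

lemma closApprox_le_one (F : Set X) (k : ℕ) (x : X) : closApprox F k x ≤ 1 := by
  rw [closApprox_apply]
  exact max_le zero_le_one (by nlinarith [Metric.infDist_nonneg (x := x) (s := F),
    show (0:ℝ) ≤ (k:ℝ) from Nat.cast_nonneg k])

lemma closApprox_tendsto {F : Set X} (hF : IsClosed F) (hne : F.Nonempty) (x : X) :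
    Tendsto (fun k => closApprox F k x) atTop (𝓝 (F.indicator (fun _ => (1 : ℝ)) x)) := by
  by_cases hx : x ∈ F
  · rw [Set.indicator_of_mem hx]
    have : ∀ k : ℕ, closApprox F k x = 1 := fun k => by
      rw [closApprox_apply, Metric.infDist_zero_of_mem hx, mul_zero, sub_zero, max_eq_right zero_le_one]
    simpa [this] using tendsto_const_nhds (α := ℝ) (f := atTop (α := ℕ))
  · have hpos : 0 < Metric.infDist x F := (hF.notMem_iff_infDist_pos hne).mp hx
    rw [Set.indicator_of_notMem hx]
    have hev : ∀ᶠ k : ℕ in atTop, closApprox F k x = 0 := by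
      obtain ⟨K, hK⟩ := exists_nat_ge (1 / Metric.infDist x F)
      filter_upwards [eventually_ge_atTop K] with k hk
      rw [closApprox_apply, max_eq_left]
      have h1 : (1 / Metric.infDist x F) ≤ (k : ℝ) := le_trans hK (by exact_mod_cast hk)
      rw [div_le_iff₀ hpos] at h1
      nlinarith
    exact Tendsto.congr' (by filter_upwards [hev] with k hk using hk.symm) tendsto_const_nhds

end Approx

section AETest

variable {X : Type*} [MetricSpace X] [MeasurableSpace X] [BorelSpace X]

/-- If a finite Borel measure `ν` on a metric space and an integrable function `h` satisfy
`∫ f h dν ≥ 0` for all nonnegative bounded continuous `f`, then `h ≥ 0` a.e. -/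
lemma ae_nonneg_of_forall_bcf (ν : Measure X) [IsFiniteMeasure ν] {h : X → ℝ}
    (hint : Integrable h ν)
    (H : ∀ f : BoundedContinuousFunction X ℝ, (∀ x, 0 ≤ f x) → 0 ≤ ∫ x, f x * h x ∂ν) :
    0 ≤ᵐ[ν] h := by
  have hsm := hint.aestronglyMeasurable
  set h' := hsm.mk h with hh'
  have hae : h =ᵐ[ν] h' := hsm.ae_eq_mk
  have hint' : Integrable h' ν := hint.congr hae
  have hsm' : StronglyMeasurable h' := hsm.stronglyMeasurable_mk
  suffices hs : 0 ≤ᵐ[ν] h' by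
    filter_upwards [hs, hae] with x h1 h2
    rw [h2]; exact h1
  have H' : ∀ f : BoundedContinuousFunction X ℝ, (∀ x, 0 ≤ f x) → 0 ≤ ∫ x, f x * h' x ∂ν := by
    intro f hf
    have : ∫ x, f x * h x ∂ν = ∫ x, f x * h' x ∂ν := by
      apply integral_congr_ae
      filter_upwards [hae] with x hx
      rw [hx]
    rw [← this]; exact H f hf
  -- nonnegativity of integrals over closed sets
  have hF : ∀ F : Set X, IsClosed F → 0 ≤ ∫ x in F, h' x ∂ν := by
    intro F hFc
    rcases F.eq_empty_or_nonempty with rfl | hne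
    · simp
    · have key : Tendsto (fun k => ∫ x, closApprox F k x * h' x ∂ν) atTop
          (𝓝 (∫ x, F.indicator (fun _ => (1 : ℝ)) x * h' x ∂ν)) := by
        apply tendsto_integral_of_dominated_convergence (fun x => |h' x|)
        · intro k
          exact ((closApprox F k).continuous.aestronglyMeasurable).mul hint'.aestronglyMeasurable
        · exact hint'.abs
        · intro k
          filter_upwards with x
          rw [Real.norm_eq_abs, abs_mul]
          calc |closApprox F k x| * |h' x| ≤ 1 * |h' x| := by
                apply mul_le_mul_of_nonneg_right _ (abs_nonneg _)
                rw [abs_of_nonneg (closApprox_nonneg F k x)]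
                exact closApprox_le_one F k x
            _ = |h' x| := one_mul _
        · filter_upwards with x
          exact (closApprox_tendsto hFc hne x).mul_const _
      have heq : ∫ x, F.indicator (fun _ => (1 : ℝ)) x * h' x ∂ν = ∫ x in F, h' x ∂ν := by
        rw [← integral_indicator hFc.measurableSet]
        apply integral_congr_ae
        filter_upwards with x
        by_cases hx : x ∈ F <;> simp [hx]
      rw [← heq]
      exact ge_of_tendsto key (Eventually.of_forall fun k => H' _ (closApprox_nonneg F k))
  -- conclude
  have hms : MeasurableSet {x | h' x < 0} := by
    exact measurableSet_lt hsm'.measurable measurable_const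
  have hzero : ν {x | h' x < 0} = 0 := by
    by_contra hpos
    obtain ⟨F, hFs, hFc, hFm⟩ := hms.exists_isClosed_lt_add (measure_ne_top ν _) hpos
    -- ν {h' < 0} < ν F + ν {h' < 0}, hence 0 < ν F
    have hFpos : 0 < ν F := by
      by_contra hF0
      push_neg at hF0
      have : ν F = 0 := le_antisymm hF0 zero_le
      rw [this, zero_add] at hFm
      exact lt_irrefl _ hFm
    -- but h' < 0 on F and ∫_F h' ≥ 0 forces ν F = 0
    have hFneg : ∀ᵐ x ∂ν.restrict F, h' x < 0 := by
      filter_upwards [ae_restrict_mem hFc.measurableSet] with x hx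
      exact hFs hx
    have hnn : 0 ≤ᵐ[ν.restrict F] fun x => -h' x := by
      filter_upwards [hFneg] with x hx
      simp only [Pi.zero_apply]
      linarith
    have h5 : ∫ x in F, -h' x ∂ν ≤ 0 := by
      rw [integral_neg]
      linarith [hF F hFc]
    have h7 : ∫ x in F, -h' x ∂ν = 0 := le_antisymm h5 (integral_nonneg_of_ae hnn)
    rw [integral_eq_zero_iff_of_nonneg_ae hnn (hint'.neg.restrict (s := F))] at h7
    have hfalse : ∀ᵐ _ ∂ν.restrict F, False := by
      filter_upwards [h7, hFneg] with x hx1 hx2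
      simp only [Pi.zero_apply] at hx1
      linarith
    have : ν.restrict F Set.univ = 0 := by
      simpa using hfalse
    rw [Measure.restrict_apply_univ] at this
    exact absurd this hFpos.ne'
  rw [EventuallyLE, ae_iff]
  convert hzero using 2
  ext x
  simp [not_le]

end AETest

section Abstract

open TopologicalSpace

variable {X : Type*} [MetricSpace X] [SecondCountableTopology X]
  [MeasurableSpace X] [BorelSpace X]

/-- The abstract closedness result: if finite measures `μ n` converge weakly to `ν` and each
`μ n` has a sub-measure `μ' n` losing at most `ε` mass and with `(μ' n) ⊗ (μ' n)` supported on a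
closed set `A` containing the diagonal, then `ν` has such a sub-measure too. -/
theorem exists_sub_of_weak_limit
    {A : Set (X × X)} (hA : IsClosed A) (hdiag : ∀ x : X, (x, x) ∈ A)
    {ε : ℝ} (hε : 0 < ε)
    (μ : ℕ → Measure X) [∀ n, IsFiniteMeasure (μ n)]
    (ν : Measure X) [IsFiniteMeasure ν]
    (hconv : ∀ f : BoundedContinuousFunction X ℝ,
      Tendsto (fun n => ∫ x, f x ∂(μ n)) atTop (𝓝 (∫ x, f x ∂ν)))
    (μ' : ℕ → Measure X) (hfin : ∀ n, IsFiniteMeasure (μ' n))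
    (hle : ∀ n, μ' n ≤ μ n)
    (hvar : ∀ n, varDist (μ n) (μ' n) ≤ ENNReal.ofReal ε)
    (hsupp : ∀ n, ((μ' n).prod (μ' n)) Aᶜ = 0) :
    ∃ m : Measure X, IsFiniteMeasure m ∧ m ≤ ν ∧ varDist ν m ≤ ENNReal.ofReal ε ∧
      (m.prod m) Aᶜ = 0 := by
  haveI : ∀ n, IsFiniteMeasure (μ' n) := hfin
  classical
  -- the ultrafilter along which we take limits
  set U : Ultrafilter ℕ := Ultrafilter.of atTop with hUdef
  have hU : (U : Filter ℕ) ≤ atTop := Ultrafilter.of_le _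
  -- basic integral bound
  have hIb : ∀ (f : BoundedContinuousFunction X ℝ) (n : ℕ),
      |∫ x, f x ∂(μ' n)| ≤ ∫ x, |f| x ∂(μ n) := by
    intro f n
    have h1 : |∫ x, f x ∂(μ' n)| ≤ ∫ x, |f x| ∂(μ' n) := by
      simpa [Real.norm_eq_abs] using norm_integral_le_integral_norm (μ := μ' n) (f := fun x => f x)
    have h2 : ∫ x, |f x| ∂(μ' n) ≤ ∫ x, |f x| ∂(μ n) := by
      apply integral_mono_measure (hle n) (Eventually.of_forall fun x => abs_nonneg _)
      simpa [Real.norm_eq_abs] using (f.integrable (μ n)).norm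
    have h3 : ∫ x, |f x| ∂(μ n) = ∫ x, |f| x ∂(μ n) := by
      apply integral_congr_ae
      filter_upwards with x
      simp
    linarith
  -- existence of ultrafilter limits
  have hex : ∀ f : BoundedContinuousFunction X ℝ,
      ∃ L : ℝ, Tendsto (fun n => ∫ x, f x ∂(μ' n)) (U : Filter ℕ) (𝓝 L) := by
    intro f
    obtain ⟨C, hC⟩ := (hconv |f|).bddAbove_range
    rw [mem_upperBounds] at hC
    have hmem : ∀ n, (∫ x, f x ∂(μ' n)) ∈ Set.Icc (-C) C := by
      intro n
      have h1 := hIb f n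
      have h2 : ∫ x, |f| x ∂(μ n) ≤ C := hC _ ⟨n, rfl⟩
      rw [Set.mem_Icc]
      constructor <;> [linarith [abs_le.mp (le_trans h1 h2) |>.1]; skip]
      exact (abs_le.mp (le_trans h1 h2)).2
    obtain ⟨L, _, hL⟩ := (isCompact_Icc (a := -C) (b := C)).ultrafilter_le_nhds
      (U.map fun n => ∫ x, f x ∂(μ' n))
      (by
        simp only [le_principal_iff, Ultrafilter.coe_map, Filter.mem_map, Ultrafilter.mem_coe]
        exact Filter.univ_mem' hmem)
    refine ⟨L, ?_⟩
    rwa [Ultrafilter.coe_map] at hL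
  choose Λ hΛ using hex
  -- properties of Λ
  have hΛnn : ∀ f : BoundedContinuousFunction X ℝ, (∀ x, 0 ≤ f x) → 0 ≤ Λ f := fun f hf =>
    ge_of_tendsto (hΛ f) (Eventually.of_forall fun n => integral_nonneg fun x => hf x)
  have hΛle : ∀ f : BoundedContinuousFunction X ℝ, (∀ x, 0 ≤ f x) → Λ f ≤ ∫ x, f x ∂ν := by
    intro f hf
    apply le_of_tendsto_of_tendsto' (hΛ f) ((hconv f).mono_left hU)
    intro n
    exact integral_mono_measure (hle n) (Eventually.of_forall hf) (f.integrable (μ n))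
  have hΛabs : ∀ f : BoundedContinuousFunction X ℝ, |Λ f| ≤ ∫ x, |f| x ∂ν := by
    intro f
    exact le_of_tendsto_of_tendsto' (hΛ f).abs ((hconv |f|).mono_left hU) (hIb f)
  have hΛadd : ∀ f g : BoundedContinuousFunction X ℝ, Λ (f + g) = Λ f + Λ g := by
    intro f g
    refine tendsto_nhds_unique (hΛ (f + g)) (((hΛ f).add (hΛ g)).congr fun n => ?_)
    rw [← integral_add (f.integrable _) (g.integrable _)]
    apply integral_congr_ae
    filter_upwards with x
    simp
  have hΛsub : ∀ f g : BoundedContinuousFunction X ℝ, Λ (f - g) = Λ f - Λ g := by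
    intro f g
    refine tendsto_nhds_unique (hΛ (f - g)) (((hΛ f).sub (hΛ g)).congr fun n => ?_)
    rw [← integral_sub (f.integrable _) (g.integrable _)]
    apply integral_congr_ae
    filter_upwards with x
    simp
  have hΛsmul : ∀ (c : ℝ) (f : BoundedContinuousFunction X ℝ), Λ (c • f) = c * Λ f := by
    intro c f
    refine tendsto_nhds_unique (hΛ (c • f)) (((hΛ f).const_mul c).congr fun n => ?_)
    rw [← smul_eq_mul, ← integral_smul]
    apply integral_congr_ae
    filter_upwards with x
    simp
  -- the L² space
  haveI : Fact ((1 : ℝ≥0∞) ≤ 2) := ⟨one_le_two⟩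
  set J : BoundedContinuousFunction X ℝ →L[ℝ] Lp ℝ 2 ν :=
    BoundedContinuousFunction.toLp 2 ν ℝ with hJdef
  have hJcoe : ∀ f : BoundedContinuousFunction X ℝ, (J f : X → ℝ) =ᵐ[ν] f := fun f =>
    BoundedContinuousFunction.coeFn_toLp 2 ν ℝ f
  have hJdense : DenseRange J :=
    BoundedContinuousFunction.toLp_denseRange (𝕜 := ℝ) (E := ℝ) (μ := ν) (p := 2) (by norm_num)
  have hΛwd : ∀ f g : BoundedContinuousFunction X ℝ, J f = J g → Λ f = Λ g := by
    intro f g hfg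
    have h0 : (⇑(f - g) : X → ℝ) =ᵐ[ν] 0 := by
      have h1 := hJcoe (f - g)
      have h2 : J (f - g) = 0 := by rw [map_sub, hfg, sub_self]
      rw [h2] at h1
      exact h1.symm.trans (Lp.coeFn_zero ℝ 2 ν)
    have h2 : ∫ x, |f - g| x ∂ν = 0 := by
      apply integral_eq_zero_of_ae
      filter_upwards [h0] with x hx
      simp only [BoundedContinuousFunction.coe_abs, Pi.abs_apply]
      rw [hx]
      simp
    have h3 := hΛabs (f - g)
    rw [h2] at h3
    have h4 : Λ (f - g) = 0 := abs_nonpos_iff.mp h3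
    rw [hΛsub] at h4
    linarith
  -- norms in L²
  have hJnorm : ∀ f : BoundedContinuousFunction X ℝ, ‖J f‖ = (eLpNorm (⇑f) 2 ν).toReal := by
    intro f
    rw [Lp.norm_def, eLpNorm_congr_ae (hJcoe f)]
  set K : ℝ := ‖J 1‖ with hKdef
  have hΛK : ∀ f : BoundedContinuousFunction X ℝ, |Λ f| ≤ K * ‖J f‖ := by
    intro f
    have habs : ∫ x, |f| x ∂ν = (inner ℝ (J 1) (J |f|) : ℝ) := by
      rw [L2.inner_def]
      apply integral_congr_ae
      filter_upwards [hJcoe 1, hJcoe |f|] with x h1 h2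
      rw [h1, h2]
      simp [RCLike.inner_apply]
    have hJabs : ‖J |f|‖ = ‖J f‖ := by
      rw [hJnorm, hJnorm]
      congr 1
      have hco : (⇑|f| : X → ℝ) = fun x => ‖f x‖ := by
        ext x; simp [Real.norm_eq_abs]
      rw [hco, eLpNorm_norm]
    calc |Λ f| ≤ ∫ x, |f| x ∂ν := hΛabs f
      _ = (inner ℝ (J 1) (J |f|) : ℝ) := habs
      _ ≤ ‖J (1 : BoundedContinuousFunction X ℝ)‖ * ‖J |f|‖ := real_inner_le_norm _ _
      _ = K * ‖J f‖ := by rw [hJabs, hKdef]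
  -- the range submodule and the extension of Λ
  set M : Submodule ℝ (Lp ℝ 2 ν) := LinearMap.range (J : BoundedContinuousFunction X ℝ →ₗ[ℝ] Lp ℝ 2 ν) with hMdef
  have hmemM : ∀ f : BoundedContinuousFunction X ℝ, J f ∈ M := fun f => ⟨f, rfl⟩
  choose pre hpre0 using fun y : M => LinearMap.mem_range.mp y.2
  have hpre : ∀ y : M, J (pre y) = (y : Lp ℝ 2 ν) := fun y => hpre0 y
  let ψf : M → ℝ := fun y => Λ (pre y)
  have hψeq : ∀ (y : M) (f : BoundedContinuousFunction X ℝ), (y : Lp ℝ 2 ν) = J f → ψf y = Λ f := by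
    intro y f hy
    apply hΛwd
    rw [hpre y, hy]
  have hψadd : ∀ y z : M, ψf (y + z) = ψf y + ψf z := by
    intro y z
    have hcoe : ((y + z : M) : Lp ℝ 2 ν) = J (pre y + pre z) := by
      rw [Submodule.coe_add, ← hpre y, ← hpre z, ← map_add]
    rw [hψeq (y + z) _ hcoe, hΛadd, hψeq y (pre y) (hpre y).symm, hψeq z (pre z) (hpre z).symm]
  have hψsmul : ∀ (c : ℝ) (y : M), ψf (c • y) = c * ψf y := by
    intro c y
    have hcoe : ((c • y : M) : Lp ℝ 2 ν) = J (c • pre y) := by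
      rw [Submodule.coe_smul, ← hpre y, ← _root_.map_smul]
    rw [hψeq (c • y) _ hcoe, hΛsmul, hψeq y (pre y) (hpre y).symm]
  let ψ₀ : M →ₗ[ℝ] ℝ :=
    { toFun := ψf
      map_add' := hψadd
      map_smul' := by
        intro c y
        simp only [RingHom.id_apply, smul_eq_mul]
        exact hψsmul c y }
  have hψb : ∀ y : M, ‖ψ₀ y‖ ≤ K * ‖y‖ := by
    intro y
    have h1 : ‖y‖ = ‖J (pre y)‖ := by
      rw [hpre y]; rfl
    rw [h1]
    calc ‖ψ₀ y‖ = |Λ (pre y)| := by rw [Real.norm_eq_abs]; rfl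
      _ ≤ K * ‖J (pre y)‖ := hΛK (pre y)
  let ψ : M →L[ℝ] ℝ := LinearMap.mkContinuous ψ₀ K hψb
  have hMsub : Set.range ⇑J ⊆ Set.range ((↑) : M → Lp ℝ 2 ν) := by
    rintro y ⟨f, rfl⟩
    exact ⟨⟨J f, hmemM f⟩, rfl⟩
  have hMdense2 : DenseRange ⇑(M.subtypeL) := by
    have hco : ⇑(M.subtypeL) = ((↑) : M → Lp ℝ 2 ν) := rfl
    rw [DenseRange, hco]
    exact hJdense.mono hMsub
  have hMui : IsUniformInducing ⇑(M.subtypeL) := by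
    have hco : ⇑(M.subtypeL) = ((↑) : M → Lp ℝ 2 ν) := rfl
    rw [hco]
    exact isometry_subtype_coe.isUniformInducing
  let T : Lp ℝ 2 ν →L[ℝ] ℝ := ψ.extend M.subtypeL
  have hT : ∀ f : BoundedContinuousFunction X ℝ, T (J f) = Λ f := by
    intro f
    have h1 : T (M.subtypeL ⟨J f, hmemM f⟩) = ψ ⟨J f, hmemM f⟩ :=
      ContinuousLinearMap.extend_eq ψ hMdense2 hMui _
    have h2 : M.subtypeL ⟨J f, hmemM f⟩ = J f := rfl
    rw [h2] at h1
    rw [h1]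
    exact hψeq ⟨J f, hmemM f⟩ f rfl
  -- the Riesz representative
  let g0 : Lp ℝ 2 ν := (InnerProductSpace.toDual ℝ (Lp ℝ 2 ν)).symm T
  have hg0 : ∀ y : Lp ℝ 2 ν, (inner ℝ g0 y : ℝ) = T y := fun y =>
    InnerProductSpace.toDual_symm_apply
  set g : X → ℝ := ⇑g0 with hgdef
  have hgint : Integrable g ν := (Lp.memLp g0).integrable one_le_two
  have hrep : ∀ f : BoundedContinuousFunction X ℝ, ∫ x, f x * g x ∂ν = Λ f := by
    intro f
    have h2 : (inner ℝ g0 (J f) : ℝ) = Λ f := by rw [hg0, hT]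
    rw [← h2, L2.inner_def]
    apply integral_congr_ae
    filter_upwards [hJcoe f] with x hx
    rw [hx, RCLike.inner_apply, starRingEnd_apply, star_trivial, mul_comm]
  have hfg_int : ∀ f : BoundedContinuousFunction X ℝ, Integrable (fun x => f x * g x) ν := by
    intro f
    exact hgint.bdd_mul f.continuous.aestronglyMeasurable (Eventually.of_forall fun x => f.norm_coe_le_norm x)
  -- 0 ≤ g ≤ 1 a.e.
  have hg_nn : 0 ≤ᵐ[ν] g := by
    apply ae_nonneg_of_forall_bcf ν hgint
    intro f hf
    rw [hrep f]
    exact hΛnn f hf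
  have hg_le1 : g ≤ᵐ[ν] fun _ => (1 : ℝ) := by
    have h1 : 0 ≤ᵐ[ν] fun x => 1 - g x := by
      apply ae_nonneg_of_forall_bcf ν ((integrable_const (1 : ℝ)).sub hgint)
      intro f hf
      show (0 : ℝ) ≤ ∫ x, f x * (1 - g x) ∂ν
      have h2 : ∫ x, f x * (1 - g x) ∂ν = ∫ x, f x ∂ν - ∫ x, f x * g x ∂ν := by
        rw [← integral_sub (f.integrable ν) (hfg_int f)]
        apply integral_congr_ae
        filter_upwards with x
        ring
      rw [h2, hrep f]
      have h3 := hΛle f hf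
      linarith
    filter_upwards [h1] with x hx
    simp only [Pi.zero_apply] at hx
    linarith
  -- the candidate measure
  set m : Measure X := ν.withDensity (fun x => ENNReal.ofReal (g x)) with hmdef
  have hm_apply : ∀ B : Set X, MeasurableSet B → m B = ENNReal.ofReal (∫ x in B, g x ∂ν) := by
    intro B hB
    rw [hmdef, withDensity_apply _ hB,
      ← ofReal_integral_eq_lintegral_ofReal hgint.integrableOn (ae_restrict_of_ae hg_nn)]
  have hmle : m ≤ ν := by
    rw [Measure.le_iff]
    intro B hB
    rw [hmdef, withDensity_apply _ hB]
    calc ∫⁻ x in B, ENNReal.ofReal (g x) ∂ν ≤ ∫⁻ _ in B, 1 ∂ν := by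
          apply lintegral_mono_ae
          filter_upwards [ae_restrict_of_ae hg_le1] with x hx
          exact ENNReal.ofReal_le_one.mpr hx
      _ = ν B := by rw [setLIntegral_one]
  haveI hmfin : IsFiniteMeasure m := isFiniteMeasure_of_le ν hmle
  -- total mass bound
  have hg_total : (ν Set.univ).toReal - ε ≤ ∫ x, g x ∂ν := by
    have h1 : ∫ x, g x ∂ν = Λ 1 := by
      rw [← hrep 1]
      apply integral_congr_ae
      filter_upwards with x
      simp
    have ha : ∀ n, (μ n Set.univ).toReal - ε ≤ ∫ x, (1 : BoundedContinuousFunction X ℝ) x ∂(μ' n) := by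
      intro n
      have h2 : μ n Set.univ - μ' n Set.univ ≤ ENNReal.ofReal ε := by
        refine le_trans ?_ (hvar n)
        have hstep : max (μ n Set.univ - μ' n Set.univ) (μ' n Set.univ - μ n Set.univ)
            ≤ varDist (μ n) (μ' n) := by
          simp only [varDist]
          exact le_iSup₂ (f := fun (B : Set X) (_ : MeasurableSet B) =>
            max (μ n B - μ' n B) (μ' n B - μ n B)) Set.univ MeasurableSet.univ
        exact le_trans (le_max_left _ _) hstep
      have h3 : μ n Set.univ ≤ ENNReal.ofReal ε + μ' n Set.univ :=
        le_trans (tsub_le_iff_right.mp h2) (by rw [add_comm])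
      have h4 := ENNReal.toReal_mono
        (ENNReal.add_ne_top.mpr ⟨ENNReal.ofReal_ne_top, measure_ne_top _ _⟩) h3
      rw [ENNReal.toReal_add ENNReal.ofReal_ne_top (measure_ne_top _ _),
        ENNReal.toReal_ofReal hε.le] at h4
      have h5 : ∫ x, (1 : BoundedContinuousFunction X ℝ) x ∂(μ' n) = (μ' n Set.univ).toReal := by
        simp [Measure.real]
      rw [h5]
      linarith
    have hb : Tendsto (fun n => (μ n Set.univ).toReal - ε) (U : Filter ℕ)
        (𝓝 ((ν Set.univ).toReal - ε)) := by
      have h6 := (hconv 1).mono_left hU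
      simp only [BoundedContinuousFunction.coe_one, Pi.one_apply, integral_const, smul_eq_mul,
        mul_one] at h6
      exact h6.sub_const ε
    rw [h1]
    exact le_of_tendsto_of_tendsto' hb (hΛ 1) ha
  -- variational distance bound
  have hvd : varDist ν m ≤ ENNReal.ofReal ε := by
    simp only [varDist]
    refine iSup₂_le fun B hB => max_le ?_ ?_
    · rw [tsub_le_iff_right]
      have e1 : ∫ x, g x ∂ν = ∫ x in B, g x ∂ν + ∫ x in Bᶜ, g x ∂ν :=
        (integral_add_compl hB hgint).symm
      have e2 : ∫ x in Bᶜ, g x ∂ν ≤ (ν Bᶜ).toReal := by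
        calc ∫ x in Bᶜ, g x ∂ν ≤ ∫ _ in Bᶜ, (1 : ℝ) ∂ν :=
              integral_mono_ae hgint.integrableOn (integrable_const 1) (ae_restrict_of_ae hg_le1)
          _ = (ν Bᶜ).toReal := by simp [Measure.restrict_apply_univ, Measure.real]
      have e3 : (ν Set.univ).toReal = (ν B).toReal + (ν Bᶜ).toReal := by
        rw [← ENNReal.toReal_add (measure_ne_top _ _) (measure_ne_top _ _),
          measure_add_measure_compl hB]
      have h7 : (ν B).toReal - ε ≤ ∫ x in B, g x ∂ν := by linarith [hg_total]
      calc ν B = ENNReal.ofReal ((ν B).toReal) := (ENNReal.ofReal_toReal (measure_ne_top _ _)).symm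
        _ ≤ ENNReal.ofReal (ε + ∫ x in B, g x ∂ν) := ENNReal.ofReal_le_ofReal (by linarith)
        _ = ENNReal.ofReal ε + ENNReal.ofReal (∫ x in B, g x ∂ν) :=
            ENNReal.ofReal_add hε.le (integral_nonneg_of_ae (ae_restrict_of_ae hg_nn))
        _ = ENNReal.ofReal ε + m B := by rw [hm_apply B hB]
    · have : m B ≤ ν B := Measure.le_iff'.mp hmle B
      simp [tsub_eq_zero_of_le this]
  -- support condition: rectangles inside Aᶜ are null
  have hrect : ∀ Uo Vo : Set X, IsOpen Uo → IsOpen Vo → Uo ×ˢ Vo ⊆ Aᶜ → m Uo * m Vo = 0 := by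
    intro Uo Vo hUo hVo hUV
    rcases Uo.eq_empty_or_nonempty with rfl | hUne
    · simp
    rcases Vo.eq_empty_or_nonempty with rfl | hVne
    · simp
    have hUc : Uoᶜ.Nonempty := by
      rw [Set.nonempty_iff_ne_empty]
      intro h0
      obtain ⟨v, hv⟩ := hVne
      have hvU : v ∈ Uo := by
        have hu : Uo = Set.univ := Set.compl_empty_iff.mp h0
        rw [hu]; trivial
      exact (hUV (Set.mk_mem_prod hvU hv)) (hdiag v)
    have hVc : Voᶜ.Nonempty := by
      rw [Set.nonempty_iff_ne_empty]
      intro h0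
      obtain ⟨u, hu⟩ := hUne
      have huV : u ∈ Vo := by
        have hv : Vo = Set.univ := Set.compl_empty_iff.mp h0
        rw [hv]; trivial
      exact (hUV (Set.mk_mem_prod hu huV)) (hdiag u)
    have hk0 : ∀ k : ℕ, Λ (openApprox Uo k) * Λ (openApprox Vo k) = 0 := by
      intro k
      have hn0 : ∀ n, (∫ x, openApprox Uo k x ∂(μ' n)) * (∫ x, openApprox Vo k x ∂(μ' n)) = 0 := by
        intro n
        rw [← integral_prod_mul]
        apply integral_eq_zero_of_ae
        rw [Filter.EventuallyEq, ae_iff]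
        refine measure_mono_null ?_ (hsupp n)
        intro z hz
        simp only [Set.mem_setOf_eq, Pi.zero_apply] at hz
        simp only [Set.mem_compl_iff]
        intro hzA
        apply hz
        have hznot : z ∉ Uo ×ˢ Vo := fun hmem => (hUV hmem) hzA
        rw [Set.mem_prod] at hznot
        rcases not_and_or.mp hznot with h | h
        · rw [openApprox_eq_zero Uo k h, zero_mul]
        · rw [openApprox_eq_zero Vo k h, mul_zero]
      have hc : (fun n => (∫ x, openApprox Uo k x ∂(μ' n)) * (∫ x, openApprox Vo k x ∂(μ' n)))
          = fun _ => (0 : ℝ) := funext hn0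
      have h11 := (hΛ (openApprox Uo k)).mul (hΛ (openApprox Vo k))
      rw [hc] at h11
      exact tendsto_nhds_unique h11 tendsto_const_nhds
    have hlim : ∀ W : Set X, IsOpen W → Wᶜ.Nonempty →
        Tendsto (fun k => Λ (openApprox W k)) atTop (𝓝 (∫ x in W, g x ∂ν)) := by
      intro W hW hWc
      have h8 : Tendsto (fun k => ∫ x, openApprox W k x * g x ∂ν) atTop
          (𝓝 (∫ x, W.indicator (fun _ => (1 : ℝ)) x * g x ∂ν)) := by
        apply tendsto_integral_of_dominated_convergence (fun x => |g x|)
        · intro k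
          exact ((openApprox W k).continuous.aestronglyMeasurable).mul hgint.aestronglyMeasurable
        · exact hgint.abs
        · intro k
          filter_upwards with x
          rw [Real.norm_eq_abs, abs_mul]
          calc |openApprox W k x| * |g x| ≤ 1 * |g x| := by
                apply mul_le_mul_of_nonneg_right _ (abs_nonneg _)
                rw [abs_of_nonneg (openApprox_nonneg W k x)]
                exact openApprox_le_one W k x
            _ = |g x| := one_mul _
        · filter_upwards with x
          exact (openApprox_tendsto hW hWc x).mul_const _
      have h9 : ∫ x, W.indicator (fun _ => (1 : ℝ)) x * g x ∂ν = ∫ x in W, g x ∂ν := by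
        rw [← integral_indicator hW.measurableSet]
        apply integral_congr_ae
        filter_upwards with x
        by_cases hx : x ∈ W <;> simp [hx]
      rw [h9] at h8
      exact h8.congr fun k => hrep (openApprox W k)
    have hint0 : (∫ x in Uo, g x ∂ν) * (∫ x in Vo, g x ∂ν) = 0 := by
      have hc : (fun k => Λ (openApprox Uo k) * Λ (openApprox Vo k)) = fun _ => (0 : ℝ) :=
        funext hk0
      have h11 := (hlim Uo hUo hUc).mul (hlim Vo hVo hVc)
      rw [hc] at h11
      exact tendsto_nhds_unique h11 tendsto_const_nhds
    rw [hm_apply _ hUo.measurableSet, hm_apply _ hVo.measurableSet,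
      ← ENNReal.ofReal_mul (integral_nonneg_of_ae (ae_restrict_of_ae hg_nn)), hint0,
      ENNReal.ofReal_zero]
  -- countable rectangle cover of the open set Aᶜ
  have hcover : (m.prod m) Aᶜ = 0 := by
    obtain ⟨S, hS1, hS2⟩ := (TopologicalSpace.IsTopologicalBasis.prod
      (TopologicalSpace.isBasis_countableBasis X)
      (TopologicalSpace.isBasis_countableBasis X)).open_eq_sUnion hA.isOpen_compl
    rw [hS2]
    rw [measure_sUnion_null_iff
      (((TopologicalSpace.countable_countableBasis X).image2
        (TopologicalSpace.countable_countableBasis X) _).mono hS1)]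
    intro s hs
    obtain ⟨Uo, hUo, Vo, hVo, rfl⟩ := Set.mem_image2.mp (hS1 hs)
    rw [Measure.prod_prod]
    refine hrect Uo Vo (TopologicalSpace.isOpen_of_mem_countableBasis hUo)
      (TopologicalSpace.isOpen_of_mem_countableBasis hVo) ?_
    rw [hS2]
    exact Set.subset_sUnion_of_mem hs
  exact ⟨m, hmfin, hmle, hvd, hcover⟩

end Abstract

/-- Closedness of `M^E_{δ,ε}` under weak limits. -/
theorem memM_of_weak_limit {E I : Type*}
    [MetricSpace E] [CompleteSpace E] [SecondCountableTopology E]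
    [MeasurableSpace E] [BorelSpace E]
    [MetricSpace I] [CompleteSpace I] [SecondCountableTopology I]
    [MeasurableSpace I] [BorelSpace I]
    (δ ε : ℝ) (hδ : 0 < δ) (hε : 0 < ε)
    (μ : ℕ → Measure (E × I)) [∀ n, IsFiniteMeasure (μ n)]
    (ν : Measure (E × I)) [IsFiniteMeasure ν]
    (hconv : WeakConv μ ν)
    (hn : ∀ n, memM (μ n) δ (ENNReal.ofReal ε)) :
    memM ν δ (ENNReal.ofReal ε) := by
  choose μ'' hfin hle hvar hsupp using hn
  have hA : IsClosed (Aset (X := E) (I := I) δ (ENNReal.ofReal ε)) := by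
    have heq : Aset (X := E) (I := I) δ (ENNReal.ofReal ε) =
        {p : (E × I) × (E × I) | δ ≤ dist p.1.1 p.2.1} ∪
        {p : (E × I) × (E × I) | dist p.1.2 p.2.2 ≤ ε} := by
      ext p
      simp [Aset, ENNReal.ofReal_le_ofReal_iff hε.le]
    rw [heq]
    exact (isClosed_le continuous_const (by fun_prop)).union
      (isClosed_le (by fun_prop) continuous_const)
  have hdiag : ∀ p : E × I, (p, p) ∈ Aset (X := E) (I := I) δ (ENNReal.ofReal ε) := fun p =>
    Or.inr (by simp)
  exact exists_sub_of_weak_limit hA hdiag hε μ ν hconv μ'' hfin hle hvar hsupp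
end
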